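/- arXiv:math/0205047 — 6 statements merged into one kernel-verified Lean document; each statement's English description precedes it below -/
import Mathlib

section
/- Let G be a loopless finite graph with n vertices. Then for every real t < 0, the chromatic polynomial P(G,t) is non-zero and has sign (−1)^n. -/
open Polynomial

/-- A finite multigraph (loops and multiple edges allowed), given with a fixed
orientation of its edges: each edge `e` has a source `src e` and target `tgt e`. -/
structure Multigraph where
  V : Type
  E : Type
  [fintypeV : Fintype V]
  [fintypeE : Fintype E]
  [decEqV : DecidableEq V]
  [decEqE : DecidableEq E]
  src : E → V
  tgt : E → V

attribute [instance] Multigraph.fintypeV Multigraph.fintypeE Multigraph.decEqV Multigraph.decEqE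

namespace Multigraph

/-- The number of proper `t`-colourings of `G`. -/
noncomputable def properColorings (G : Multigraph) (t : ℕ) : ℕ :=
  Nat.card {f : G.V → Fin t // ∀ e : G.E, f (G.src e) ≠ f (G.tgt e)}

/-- `P` is the chromatic polynomial of `G`: its value at each positive integer `t`
is the number of proper `t`-colourings of `G`. -/
def IsChromaticPoly (G : Multigraph) (P : Polynomial ℝ) : Prop :=
  ∀ t : ℕ, 0 < t → P.eval (t : ℝ) = G.properColorings t

/-- `G` has no loops. -/
def Loopless (G : Multigraph) : Prop := ∀ e : G.E, G.src e ≠ G.tgt e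

/-- Deletion of the edge `e₀`. -/
def deleteEdge (G : Multigraph) (e₀ : G.E) : Multigraph where
  V := G.V
  E := {e : G.E // e ≠ e₀}
  src e := G.src e.1
  tgt e := G.tgt e.1

/-- Contraction of the edge `e₀`: its two endpoints are identified (the vertex
`src e₀` is merged into `tgt e₀`), and `e₀` is removed. -/
def contractEdge (G : Multigraph) (e₀ : G.E) : Multigraph where
  V := {v : G.V // v = G.src e₀ → v = G.tgt e₀}
  E := {e : G.E // e ≠ e₀}
  src e := if h : G.src e.1 = G.src e₀ then ⟨G.tgt e₀, fun _ => rfl⟩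
    else ⟨G.src e.1, fun hv => absurd hv h⟩
  tgt e := if h : G.tgt e.1 = G.src e₀ then ⟨G.tgt e₀, fun _ => rfl⟩
    else ⟨G.tgt e.1, fun hv => absurd hv h⟩

/-- Two vertices are connected by a walk using only edges in `A`. -/
def ReachOn (G : Multigraph) (A : Finset G.E) (a b : G.V) : Prop :=
  Relation.EqvGen (fun x y => ∃ e ∈ A, G.src e = x ∧ G.tgt e = y) a b

/-- The number of connected components of the spanning subgraph of `G`
with edge set `A`. -/
noncomputable def numComponentsOn (G : Multigraph) (A : Finset G.E) : ℕ :=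
  Nat.card (Quotient (Relation.EqvGen.setoid (fun x y => ∃ e ∈ A, G.src e = x ∧ G.tgt e = y)))

/-- The number of connected components of `G`. -/
noncomputable def numComponents (G : Multigraph) : ℕ := G.numComponentsOn Finset.univ

/-- `G` is connected. -/
def Conn (G : Multigraph) : Prop :=
  Nonempty G.V ∧ ∀ a b : G.V, G.ReachOn Finset.univ a b

/-- `e` is a bridge of `G`. -/
def IsBridge (G : Multigraph) (e : G.E) : Prop :=
  G.numComponents < (G.deleteEdge e).numComponents

/-- A nowhere-zero `ZMod t`-flow on `G` (with respect to the fixed orientation). -/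
def IsNZFlow (G : Multigraph) {t : ℕ} (f : G.E → ZMod t) : Prop :=
  (∀ e : G.E, f e ≠ 0) ∧
    ∀ v : G.V, (∑ e : G.E, if G.src e = v then f e else 0) =
      ∑ e : G.E, if G.tgt e = v then f e else 0

/-- The number of nowhere-zero `ZMod t`-flows of `G`. -/
noncomputable def numFlows (G : Multigraph) (t : ℕ) : ℕ :=
  Nat.card {f : G.E → ZMod t // G.IsNZFlow f}

/-- `F` is the flow polynomial of `G`: its value at each positive integer `t`
is the number of nowhere-zero `ZMod t`-flows of `G`. -/
def IsFlowPoly (G : Multigraph) (F : Polynomial ℝ) : Prop :=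
  ∀ t : ℕ, 0 < t → F.eval (t : ℝ) = G.numFlows t

end Multigraph


open Polynomial Multigraph

namespace ChromAux

/-- map a vertex of `G` to a vertex of the contraction. -/
def toContract (G : Multigraph) (e₀ : G.E) (v : G.V) : (G.contractEdge e₀).V :=
  if h : v = G.src e₀ then ⟨G.tgt e₀, fun _ => rfl⟩ else ⟨v, fun hv => absurd hv h⟩

lemma toContract_val (G : Multigraph) (e₀ : G.E) (v : G.V) :
    (toContract G e₀ v).1 = if v = G.src e₀ then G.tgt e₀ else v := by
  unfold toContract; split_ifs with h <;> simp [h]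

lemma contract_src (G : Multigraph) (e₀ : G.E) (e : (G.contractEdge e₀).E) :
    (G.contractEdge e₀).src e = toContract G e₀ (G.src e.1) := rfl

lemma contract_tgt (G : Multigraph) (e₀ : G.E) (e : (G.contractEdge e₀).E) :
    (G.contractEdge e₀).tgt e = toContract G e₀ (G.tgt e.1) := rfl

lemma eval_toContract {G : Multigraph} {e₀ : G.E} {t : ℕ} {f : G.V → Fin t}
    (hf : f (G.src e₀) = f (G.tgt e₀)) (v : G.V) :
    f (toContract G e₀ v).1 = f v := by
  rw [toContract_val]; split_ifs with h
  · rw [h, hf]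
  · rfl

noncomputable def contractEquiv (G : Multigraph) (e₀ : G.E) (t : ℕ) :
    {f : G.V → Fin t // (∀ e : (G.deleteEdge e₀).E,
        f ((G.deleteEdge e₀).src e) ≠ f ((G.deleteEdge e₀).tgt e)) ∧
        f (G.src e₀) = f (G.tgt e₀)}
      ≃ {g : (G.contractEdge e₀).V → Fin t // ∀ e : (G.contractEdge e₀).E,
          g ((G.contractEdge e₀).src e) ≠ g ((G.contractEdge e₀).tgt e)} where
  toFun f := ⟨fun v => f.1 v.1, by
    intro e
    rw [contract_src, contract_tgt]
    show f.1 (toContract G e₀ (G.src e.1)).1 ≠ f.1 (toContract G e₀ (G.tgt e.1)).1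
    rw [eval_toContract f.2.2, eval_toContract f.2.2]
    exact f.2.1 e⟩
  invFun g := ⟨fun v => g.1 (toContract G e₀ v), by
    constructor
    · intro e
      exact g.2 e
    · have h1 : toContract G e₀ (G.src e₀) = toContract G e₀ (G.tgt e₀) := by
        apply Subtype.ext
        rw [toContract_val, toContract_val]
        split_ifs with h h' h' <;> simp_all
      show g.1 (toContract G e₀ (G.src e₀)) = g.1 (toContract G e₀ (G.tgt e₀))
      rw [h1]⟩
  left_inv f := by
    apply Subtype.ext
    funext v
    exact eval_toContract f.2.2 v
  right_inv g := by
    apply Subtype.ext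
    funext w
    show g.1 (toContract G e₀ w.1) = g.1 w
    refine congrArg g.1 (Subtype.ext ?_)
    rw [toContract_val]
    split_ifs with h
    · exact (w.2 h).symm
    · rfl

lemma delcon (G : Multigraph) (e₀ : G.E) (t : ℕ) :
    (G.deleteEdge e₀).properColorings t =
      G.properColorings t + (G.contractEdge e₀).properColorings t := by
  classical
  unfold Multigraph.properColorings
  have e1 := (Equiv.sumCompl (α := {f : (G.deleteEdge e₀).V → Fin t //
      ∀ e : (G.deleteEdge e₀).E, f ((G.deleteEdge e₀).src e) ≠ f ((G.deleteEdge e₀).tgt e)})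
      (fun f => f.1 (G.src e₀) ≠ f.1 (G.tgt e₀))).symm
  rw [Nat.card_congr e1, Nat.card_sum]
  congr 1
  · apply Nat.card_congr
    refine (Equiv.subtypeSubtypeEquivSubtypeInter
      (fun f : (G.deleteEdge e₀).V → Fin t => ∀ e : (G.deleteEdge e₀).E,
        f ((G.deleteEdge e₀).src e) ≠ f ((G.deleteEdge e₀).tgt e))
      (fun f => f (G.src e₀) ≠ f (G.tgt e₀))).trans (Equiv.subtypeEquivRight ?_)
    intro f
    constructor
    · rintro ⟨h1, h2⟩ e
      by_cases he : e = e₀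
      · subst he; exact h2
      · exact h1 ⟨e, he⟩
    · intro h
      exact ⟨fun e => h e.1, h e₀⟩
  · apply Nat.card_congr
    refine ((Equiv.subtypeSubtypeEquivSubtypeInter
      (fun f : (G.deleteEdge e₀).V → Fin t => ∀ e : (G.deleteEdge e₀).E,
        f ((G.deleteEdge e₀).src e) ≠ f ((G.deleteEdge e₀).tgt e))
      (fun f => ¬ (f (G.src e₀) ≠ f (G.tgt e₀)))).trans
      ((Equiv.subtypeEquivRight ?_).trans (contractEquiv G e₀ t)))
    intro f
    simp

end ChromAux

namespace ChromAux

lemma card_contract (G : Multigraph) (e₀ : G.E) (h : G.src e₀ ≠ G.tgt e₀) :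
    Fintype.card (G.contractEdge e₀).V + 1 = Fintype.card G.V := by
  classical
  have e1 : (G.contractEdge e₀).V ≃ {v : G.V // ¬ (v = G.src e₀)} :=
    Equiv.subtypeEquivRight (fun v => by
      constructor
      · intro hv hvs
        exact h (hvs.symm.trans (hv hvs))
      · intro hv hvs
        exact absurd hvs hv)
  have h2 := Fintype.card_congr e1
  rw [Fintype.card_subtype_compl, Fintype.card_subtype_eq] at h2
  have h3 : 0 < Fintype.card G.V := Fintype.card_pos_iff.mpr ⟨G.src e₀⟩
  omega

lemma exists_chrom (n : ℕ) : ∀ G : Multigraph, Fintype.card G.E = n →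
    ∃ P : Polynomial ℝ, G.IsChromaticPoly P ∧
      ∀ t : ℝ, t < 0 → 0 ≤ (-1 : ℝ) ^ (Fintype.card G.V) * P.eval t ∧
        (G.Loopless → 0 < (-1 : ℝ) ^ (Fintype.card G.V) * P.eval t) := by
  induction n using Nat.strong_induction_on with
  | _ n ih =>
  intro G hn
  by_cases hE : IsEmpty G.E
  · refine ⟨X ^ Fintype.card G.V, ?_, ?_⟩
    · intro t ht
      rw [eval_pow, eval_X]
      unfold Multigraph.properColorings
      have e1 : {f : G.V → Fin t // ∀ e : G.E, f (G.src e) ≠ f (G.tgt e)} ≃ (G.V → Fin t) :=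
        Equiv.subtypeUnivEquiv (fun f e => (hE.false e).elim)
      rw [Nat.card_congr e1, Nat.card_eq_fintype_card, Fintype.card_fun]
      push_cast
      simp
    · intro t ht
      have hpos : 0 < (-1:ℝ)^(Fintype.card G.V) * ((X:ℝ[X]) ^ Fintype.card G.V).eval t := by
        rw [eval_pow, eval_X, ← mul_pow, neg_one_mul]
        exact pow_pos (by linarith) _
      exact ⟨le_of_lt hpos, fun _ => hpos⟩
  · rw [not_isEmpty_iff] at hE
    obtain ⟨e₀⟩ := hE
    by_cases hloop : ∃ e : G.E, G.src e = G.tgt e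
    · obtain ⟨e, he⟩ := hloop
      refine ⟨0, ?_, ?_⟩
      · intro t ht
        unfold Multigraph.properColorings
        have : IsEmpty {f : G.V → Fin t // ∀ e : G.E, f (G.src e) ≠ f (G.tgt e)} :=
          ⟨fun f => f.2 e (by rw [he])⟩
        rw [Nat.card_of_isEmpty]
        simp
      · intro t ht
        refine ⟨by simp, fun hl => absurd he (hl e)⟩
    · push_neg at hloop
      have hcard : Fintype.card (G.deleteEdge e₀).E < n := by
        rw [← hn]
        exact Fintype.card_subtype_lt (x := e₀) (by simp)
      obtain ⟨Pd, hPd, hPds⟩ := ih _ hcard (G.deleteEdge e₀) rfl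
      have hcard2 : Fintype.card (G.contractEdge e₀).E < n := by
        rw [← hn]
        exact Fintype.card_subtype_lt (x := e₀) (by simp)
      obtain ⟨Pc, hPc, hPcs⟩ := ih _ hcard2 (G.contractEdge e₀) rfl
      refine ⟨Pd - Pc, ?_, ?_⟩
      · intro t ht
        rw [eval_sub, hPd t ht, hPc t ht]
        have hd := delcon G e₀ t
        have := congrArg (Nat.cast : ℕ → ℝ) hd
        push_cast at this
        linarith
      · intro t ht
        obtain ⟨m, hm⟩ : ∃ m, Fintype.card G.V = m + 1 := by
          have h3 : 0 < Fintype.card G.V := Fintype.card_pos_iff.mpr ⟨G.src e₀⟩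
          exact ⟨Fintype.card G.V - 1, by omega⟩
        have hcV : Fintype.card (G.contractEdge e₀).V = m := by
          have := card_contract G e₀ (hloop e₀)
          omega
        have hdV : Fintype.card (G.deleteEdge e₀).V = Fintype.card G.V :=
          Fintype.card_congr (Equiv.refl _)
        have hd := hPds t ht
        have hdstrict := (hd.2) (fun e => hloop e.1)
        rw [hdV, hm] at hdstrict
        have hc := (hPcs t ht).1
        rw [hcV] at hc
        have key : (-1:ℝ)^(m+1) * (Pd - Pc).eval t =
            (-1:ℝ)^(m+1) * Pd.eval t + (-1:ℝ)^m * Pc.eval t := by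
          rw [eval_sub, pow_succ]
          ring
        rw [hm, key]
        constructor
        · linarith
        · intro _
          linarith

lemma chrom_unique {G : Multigraph} {P Q : ℝ[X]}
    (hP : G.IsChromaticPoly P) (hQ : G.IsChromaticPoly Q) : P = Q := by
  apply Polynomial.eq_of_infinite_eval_eq
  apply Set.infinite_of_injective_forall_mem (f := fun k : ℕ => ((k + 1 : ℕ) : ℝ))
  · intro a b hab
    simpa using hab
  · intro k
    simp only [Set.mem_setOf_eq]
    rw [hP (k+1) (Nat.succ_pos k), hQ (k+1) (Nat.succ_pos k)]

end ChromAux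

/-- For a loopless graph with `n` vertices, `P(G,t)` is non-zero with sign `(-1)^n`
on `(-∞, 0)`. -/
theorem chromatic_nonzero_neg (G : Multigraph) (hG : G.Loopless)
    (P : Polynomial ℝ) (hP : G.IsChromaticPoly P)
    (t : ℝ) (ht : t < 0) :
    0 < (-1 : ℝ) ^ (Fintype.card G.V) * P.eval t := by
  obtain ⟨Q, hQ, hQs⟩ := ChromAux.exists_chrom (Fintype.card G.E) G rfl
  rw [ChromAux.chrom_unique hP hQ]
  exact (hQs t ht).2 hG
end

section
/- Let G be a loopless finite graph with n vertices and c connected components. Then for every real t with 0 < t < 1, the chromatic polynomial P(G,t) is non-zero and has sign (−1)^{n+c}. -/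
open Polynomial

section Aux
open Multigraph Relation

/-- The adjacency relation of `G` (full edge set). -/
def mgRel (G : Multigraph) : G.V → G.V → Prop :=
  fun x y => ∃ e ∈ (Finset.univ : Finset G.E), G.src e = x ∧ G.tgt e = y

lemma numComponents_def (G : Multigraph) :
    G.numComponents = Nat.card (Quotient (Relation.EqvGen.setoid (mgRel G))) := rfl

private lemma eqvGen_eq_of_empty {α : Type*} {r : α → α → Prop} (h : ∀ a b, ¬ r a b)
    {a b : α} (hab : Relation.EqvGen r a b) : a = b := by
  induction hab with
  | rel x y hxy => exact absurd hxy (h x y)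
  | refl x => rfl
  | symm x y _ ih => exact ih.symm
  | trans x y z _ _ ih1 ih2 => exact ih1.trans ih2

lemma numComponents_of_isEmpty (G : Multigraph) (h : IsEmpty G.E) :
    G.numComponents = Fintype.card G.V := by
  rw [numComponents_def]
  have : Quotient (Relation.EqvGen.setoid (mgRel G)) ≃ G.V := by
    refine ⟨Quotient.lift id (fun a b hab => eqvGen_eq_of_empty (fun a b hr => by
      obtain ⟨e, _, _⟩ := hr; exact h.elim e) hab), Quotient.mk _, ?_, ?_⟩
    · intro q; induction q using Quotient.ind; rfl
    · intro v; rfl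
  rw [Nat.card_congr this, Nat.card_eq_fintype_card]

variable {G : Multigraph}

/-- The projection map for edge contraction. -/
def mgPi (G : Multigraph) (e₀ : G.E) (v : G.V) : (G.contractEdge e₀).V :=
  if h : v = G.src e₀ then ⟨G.tgt e₀, fun _ => rfl⟩ else ⟨v, fun hv => absurd hv h⟩

lemma mgPi_src (e₀ : G.E) (e : (G.contractEdge e₀).E) :
    (G.contractEdge e₀).src e = mgPi G e₀ (G.src e.1) := rfl

lemma mgPi_tgt (e₀ : G.E) (e : (G.contractEdge e₀).E) :
    (G.contractEdge e₀).tgt e = mgPi G e₀ (G.tgt e.1) := rfl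

lemma mgPi_src_e₀ (e₀ : G.E) : mgPi G e₀ (G.src e₀) = ⟨G.tgt e₀, fun _ => rfl⟩ := by
  simp [mgPi]; rfl

lemma mgPi_of_ne (e₀ : G.E) {v : G.V} (h : v ≠ G.src e₀) :
    (mgPi G e₀ v).1 = v := by
  simp [mgPi, h]

lemma mgPi_val (e₀ : G.E) (hne : G.src e₀ ≠ G.tgt e₀) (x : (G.contractEdge e₀).V) :
    mgPi G e₀ x.1 = x := by
  have hx : x.1 ≠ G.src e₀ := by
    intro h
    exact hne (h.symm.trans (x.2 h))
  exact Subtype.ext (mgPi_of_ne e₀ hx)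

lemma mgPi_tgt_e₀ (e₀ : G.E) (hne : G.src e₀ ≠ G.tgt e₀) :
    mgPi G e₀ (G.tgt e₀) = ⟨G.tgt e₀, fun _ => rfl⟩ :=
  mgPi_val e₀ hne ⟨G.tgt e₀, fun _ => rfl⟩

/-- Every vertex is connected (in `G`) to its projection. -/
lemma mgPi_reach (e₀ : G.E) (v : G.V) :
    Relation.EqvGen (mgRel G) (mgPi G e₀ v).1 v := by
  by_cases h : v = G.src e₀
  · subst h
    rw [mgPi_src_e₀]
    exact Relation.EqvGen.symm _ _
      (Relation.EqvGen.rel _ _ ⟨e₀, Finset.mem_univ _, rfl, rfl⟩)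
  · rw [mgPi_of_ne e₀ h]
    exact Relation.EqvGen.refl v

lemma contract_numComponents (e₀ : G.E) (hne : G.src e₀ ≠ G.tgt e₀) :
    (G.contractEdge e₀).numComponents = G.numComponents := by
  rw [numComponents_def, numComponents_def]
  have hstep : ∀ x y : (G.contractEdge e₀).V,
      Relation.EqvGen (mgRel (G.contractEdge e₀)) x y →
      Relation.EqvGen (mgRel G) x.1 y.1 := by
    intro x y h
    induction h with
    | rel a b hab =>
      obtain ⟨e, _, hs, ht⟩ := hab
      have h1 : Relation.EqvGen (mgRel G) a.1 (G.src e.1) := by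
        rw [← hs, mgPi_src]; exact mgPi_reach e₀ _
      have h2 : Relation.EqvGen (mgRel G) (G.tgt e.1) b.1 := by
        rw [← ht, mgPi_tgt]
        exact Relation.EqvGen.symm _ _ (mgPi_reach e₀ _)
      exact h1.trans _ _ _ ((Relation.EqvGen.rel _ _
        ⟨e.1, Finset.mem_univ _, rfl, rfl⟩).trans _ _ _ h2)
    | refl a => exact Relation.EqvGen.refl _
    | symm a b _ ih => exact ih.symm _ _
    | trans a b c _ _ ih1 ih2 => exact ih1.trans _ _ _ ih2
  have hstep2 : ∀ a b : G.V, Relation.EqvGen (mgRel G) a b →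
      Relation.EqvGen (mgRel (G.contractEdge e₀)) (mgPi G e₀ a) (mgPi G e₀ b) := by
    intro a b h
    induction h with
    | rel a b hab =>
      obtain ⟨e, _, hs, ht⟩ := hab
      subst hs; subst ht
      by_cases he : e = e₀
      · rw [he, mgPi_src_e₀, mgPi_tgt_e₀ e₀ hne]
        exact Relation.EqvGen.refl _
      · exact Relation.EqvGen.rel _ _
          ⟨⟨e, he⟩, Finset.mem_univ _, (mgPi_src e₀ ⟨e, he⟩).symm, (mgPi_tgt e₀ ⟨e, he⟩).symm⟩
    | refl a => exact Relation.EqvGen.refl _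
    | symm a b _ ih => exact ih.symm _ _
    | trans a b c _ _ ih1 ih2 => exact ih1.trans _ _ _ ih2
  refine Nat.card_congr ⟨Quotient.lift (fun x => Quotient.mk _ x.1)
      (fun x y h => Quotient.sound (hstep x y h)),
    Quotient.lift (fun v => Quotient.mk _ (mgPi G e₀ v))
      (fun a b h => Quotient.sound (hstep2 a b h)), ?_, ?_⟩
  · intro q
    induction q using Quotient.ind with
    | _ x => exact congrArg (Quotient.mk _) (mgPi_val e₀ hne x)
  · intro q
    induction q using Quotient.ind with
    | _ v => exact Quotient.sound (mgPi_reach e₀ v)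

lemma delete_numComponents (e₀ : G.E)
    (hconn : Relation.EqvGen (mgRel (G.deleteEdge e₀)) (G.src e₀) (G.tgt e₀)) :
    (G.deleteEdge e₀).numComponents = G.numComponents := by
  rw [numComponents_def, numComponents_def]
  refine Nat.card_congr (Quotient.congrRight fun a b => ⟨?_, ?_⟩)
  · exact Relation.EqvGen.mono (r := mgRel (G.deleteEdge e₀)) (p := mgRel G) (fun x y hxy => by
      obtain ⟨e, _, hs, ht⟩ := hxy
      exact ⟨e.1, Finset.mem_univ _, hs, ht⟩) a b
  · intro h
    induction h with
    | rel a b hab =>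
      obtain ⟨e, _, hs, ht⟩ := hab
      subst hs; subst ht
      by_cases he : e = e₀
      · rw [he]; exact hconn
      · exact Relation.EqvGen.rel _ _ ⟨⟨e, he⟩, Finset.mem_univ _, rfl, rfl⟩
    | refl a => exact Relation.EqvGen.refl _
    | symm a b _ ih => exact ih.symm _ _
    | trans a b c _ _ ih1 ih2 => exact ih1.trans _ _ _ ih2

/-- Key evaluation lemma: a colouring with equal values at the endpoints of `e₀`
factors through the projection. -/
lemma mgPi_key (e₀ : G.E) {t : ℕ} (f : G.V → Fin t) (hf : f (G.src e₀) = f (G.tgt e₀))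
    (x : G.V) : f ((mgPi G e₀ x).1) = f x := by
  by_cases h : x = G.src e₀
  · subst h; rw [mgPi_src_e₀]; exact hf.symm
  · rw [mgPi_of_ne e₀ h]

noncomputable def colorings_contract_equiv (e₀ : G.E) (hne : G.src e₀ ≠ G.tgt e₀) (t : ℕ) :
    {f : G.V → Fin t //
        (∀ e : (G.deleteEdge e₀).E,
          f ((G.deleteEdge e₀).src e) ≠ f ((G.deleteEdge e₀).tgt e)) ∧
        f (G.src e₀) = f (G.tgt e₀)} ≃
    {g : (G.contractEdge e₀).V → Fin t //
        ∀ e : (G.contractEdge e₀).E,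
          g ((G.contractEdge e₀).src e) ≠ g ((G.contractEdge e₀).tgt e)} := by
  refine ⟨fun x => ⟨fun w => x.1 w.1, ?_⟩, fun y => ⟨fun v => y.1 (mgPi G e₀ v), ?_, ?_⟩,
    ?_, ?_⟩
  · intro e
    show x.1 ((G.contractEdge e₀).src e).1 ≠ x.1 ((G.contractEdge e₀).tgt e).1
    rw [mgPi_src e₀ e, mgPi_tgt e₀ e, mgPi_key e₀ x.1 x.2.2, mgPi_key e₀ x.1 x.2.2]
    exact x.2.1 e
  · intro e
    show y.1 (mgPi G e₀ (G.src e.1)) ≠ y.1 (mgPi G e₀ (G.tgt e.1))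
    rw [← mgPi_src e₀ e, ← mgPi_tgt e₀ e]
    exact y.2 e
  · show y.1 (mgPi G e₀ (G.src e₀)) = y.1 (mgPi G e₀ (G.tgt e₀))
    rw [mgPi_src_e₀, mgPi_tgt_e₀ e₀ hne]
  · intro x
    exact Subtype.ext (funext fun v => mgPi_key e₀ x.1 x.2.2 v)
  · intro y
    exact Subtype.ext (funext fun w => congrArg y.1 (mgPi_val e₀ hne w))

private def subtypeSplit {α : Type*} (p q : α → Prop) [DecidablePred q] :
    {a // p a} ≃ {a // p a ∧ q a} ⊕ {a // p a ∧ ¬ q a} :=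
  ((Equiv.sumCompl (fun x : {a // p a} => q x.1)).symm.trans
    (Equiv.sumCongr (Equiv.subtypeSubtypeEquivSubtypeInter p q)
      (Equiv.subtypeSubtypeEquivSubtypeInter p fun a => ¬ q a)))

lemma properColorings_delete (e₀ : G.E) (hG : G.Loopless) (t : ℕ) :
    (G.deleteEdge e₀).properColorings t =
      G.properColorings t + (G.contractEdge e₀).properColorings t := by
  classical
  have hne := hG e₀
  have e1 := subtypeSplit
    (fun f : G.V → Fin t => ∀ e : (G.deleteEdge e₀).E,
      f ((G.deleteEdge e₀).src e) ≠ f ((G.deleteEdge e₀).tgt e))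
    (fun f => f (G.src e₀) = f (G.tgt e₀))
  have eG : {f : G.V → Fin t //
      (∀ e : (G.deleteEdge e₀).E,
        f ((G.deleteEdge e₀).src e) ≠ f ((G.deleteEdge e₀).tgt e)) ∧
      ¬ f (G.src e₀) = f (G.tgt e₀)} ≃
      {f : G.V → Fin t // ∀ e : G.E, f (G.src e) ≠ f (G.tgt e)} := by
    refine Equiv.subtypeEquivRight fun f => ⟨?_, ?_⟩
    · rintro ⟨hd, hne'⟩ e
      by_cases he : e = e₀
      · subst he; exact hne'
      · exact hd ⟨e, he⟩
    · intro h
      exact ⟨fun e => h e.1, h e₀⟩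
  have key : Nat.card {f : G.V → Fin t // ∀ e : (G.deleteEdge e₀).E,
      f ((G.deleteEdge e₀).src e) ≠ f ((G.deleteEdge e₀).tgt e)} =
      Nat.card ({g : (G.contractEdge e₀).V → Fin t //
        ∀ e : (G.contractEdge e₀).E,
          g ((G.contractEdge e₀).src e) ≠ g ((G.contractEdge e₀).tgt e)} ⊕
       {f : G.V → Fin t // ∀ e : G.E, f (G.src e) ≠ f (G.tgt e)}) :=
    Nat.card_congr (e1.trans
      (Equiv.sumCongr (colorings_contract_equiv e₀ hne t) eG))
  show Nat.card {f : G.V → Fin t // ∀ e : (G.deleteEdge e₀).E,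
      f ((G.deleteEdge e₀).src e) ≠ f ((G.deleteEdge e₀).tgt e)} = _
  rw [key, Nat.card_sum, Nat.add_comm]
  rfl

lemma properColorings_of_isEmpty (h : IsEmpty G.E) (t : ℕ) :
    G.properColorings t = t ^ Fintype.card G.V := by
  unfold properColorings
  rw [Nat.card_congr (Equiv.subtypeUnivEquiv (fun f e => h.elim e))]
  rw [Nat.card_fun, Nat.card_eq_fintype_card, Nat.card_eq_fintype_card, Fintype.card_fin]

lemma properColorings_parallel (e₀ e₁ : G.E) (h01 : e₁ ≠ e₀)
    (hpar : (G.src e₁ = G.src e₀ ∧ G.tgt e₁ = G.tgt e₀) ∨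
      (G.src e₁ = G.tgt e₀ ∧ G.tgt e₁ = G.src e₀)) (t : ℕ) :
    G.properColorings t = (G.deleteEdge e₀).properColorings t := by
  unfold properColorings
  refine Nat.card_congr (Equiv.subtypeEquivRight fun f => ⟨?_, ?_⟩)
  · exact fun h e => h e.1
  · intro h e
    by_cases he : e = e₀
    · rw [he]
      have h1 := h ⟨e₁, h01⟩
      rcases hpar with ⟨hs, ht⟩ | ⟨hs, ht⟩
      · rw [show (G.deleteEdge e₀).src ⟨e₁, h01⟩ = G.src e₁ from rfl,
          show (G.deleteEdge e₀).tgt ⟨e₁, h01⟩ = G.tgt e₁ from rfl, hs, ht] at h1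
        exact h1
      · rw [show (G.deleteEdge e₀).src ⟨e₁, h01⟩ = G.src e₁ from rfl,
          show (G.deleteEdge e₀).tgt ⟨e₁, h01⟩ = G.tgt e₁ from rfl, hs, ht] at h1
        exact h1.symm
    · exact h ⟨e, he⟩

lemma properColorings_delete_bridge (e₀ : G.E) (hne : G.src e₀ ≠ G.tgt e₀)
    (hnc : ¬ Relation.EqvGen (mgRel (G.deleteEdge e₀)) (G.src e₀) (G.tgt e₀)) (t : ℕ) :
    (G.deleteEdge e₀).properColorings t = t * (G.contractEdge e₀).properColorings t := by
  classical
  obtain _ | t := t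
  · haveI : IsEmpty ((G.deleteEdge e₀).V → Fin 0) :=
      ⟨fun f => Fin.elim0 (f (show (G.deleteEdge e₀).V from G.src e₀))⟩
    unfold properColorings
    rw [Nat.card_of_isEmpty, Nat.zero_mul]
  · have hCv : ¬ Relation.EqvGen (mgRel (G.deleteEdge e₀)) (G.tgt e₀) (G.src e₀) :=
      fun h => hnc (h.symm _ _)
    have hCstep : ∀ e : (G.deleteEdge e₀).E,
        (Relation.EqvGen (mgRel (G.deleteEdge e₀)) (G.src e.1) (G.src e₀) ↔
          Relation.EqvGen (mgRel (G.deleteEdge e₀)) (G.tgt e.1) (G.src e₀)) := by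
      intro e
      have hr : Relation.EqvGen (mgRel (G.deleteEdge e₀)) (G.src e.1) (G.tgt e.1) :=
        Relation.EqvGen.rel _ _ ⟨e, Finset.mem_univ _, rfl, rfl⟩
      exact ⟨fun h => (hr.symm _ _).trans _ _ _ h, fun h => hr.trans _ _ _ h⟩
    set C : G.V → Prop := fun w =>
      Relation.EqvGen (mgRel (G.deleteEdge e₀)) w (G.src e₀) with hC
    have hCu : C (G.src e₀) := Relation.EqvGen.refl _
    letI : DecidablePred C := fun w => Classical.dec _
    set σ : (G.V → Fin (t+1)) → Fin (t+1) → (G.V → Fin (t+1)) :=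
      fun f s w => if C w then f w + s else f w with hσ
    have hσprop : ∀ (f : G.V → Fin (t+1)) (s : Fin (t+1)),
        (∀ e : (G.deleteEdge e₀).E, f (G.src e.1) ≠ f (G.tgt e.1)) →
        ∀ e : (G.deleteEdge e₀).E, σ f s (G.src e.1) ≠ σ f s (G.tgt e.1) := by
      intro f s hf e
      by_cases h : C (G.src e.1)
      · have h2 : C (G.tgt e.1) := (hCstep e).mp h
        simp only [hσ, if_pos h, if_pos h2]
        exact fun hEq => hf e (add_right_cancel hEq)
      · have h2 : ¬ C (G.tgt e.1) := fun hh => h ((hCstep e).mpr hh)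
        simp only [hσ, if_neg h, if_neg h2]
        exact hf e
    have hσu : ∀ f s, σ f s (G.src e₀) = f (G.src e₀) + s := by
      intro f s; simp only [hσ, if_pos hCu]
    have hσv : ∀ f s, σ f s (G.tgt e₀) = f (G.tgt e₀) := by
      intro f s; simp only [hσ, if_neg hCv]; exact if_neg hCv
    have E : {f : G.V → Fin (t+1) // ∀ e : (G.deleteEdge e₀).E,
          f (G.src e.1) ≠ f (G.tgt e.1)} ≃
        Fin (t+1) × {f : G.V → Fin (t+1) //
          (∀ e : (G.deleteEdge e₀).E, f (G.src e.1) ≠ f (G.tgt e.1)) ∧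
          f (G.src e₀) = f (G.tgt e₀)} := by
      refine ⟨fun x => ⟨x.1 (G.src e₀) - x.1 (G.tgt e₀),
          σ x.1 (x.1 (G.tgt e₀) - x.1 (G.src e₀)), hσprop _ _ x.2, ?_⟩,
        fun y => ⟨σ y.2.1 y.1, hσprop _ _ y.2.2.1⟩, ?_, ?_⟩
      · rw [hσu, hσv]; abel
      · intro x
        refine Subtype.ext (funext fun w => ?_)
        show σ (σ x.1 _) _ w = x.1 w
        by_cases h : C w
        · simp only [hσ, if_pos h]; abel
        · simp only [hσ, if_neg h]
      · intro y
        have huv := y.2.2.2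
        refine Prod.ext ?_ (Subtype.ext (funext fun w => ?_))
        · show σ y.2.1 y.1 (G.src e₀) - σ y.2.1 y.1 (G.tgt e₀) = y.1
          rw [hσu, hσv, huv]; abel
        · show σ (σ y.2.1 y.1) (σ y.2.1 y.1 (G.tgt e₀) - σ y.2.1 y.1 (G.src e₀)) w = y.2.1 w
          rw [hσu, hσv, huv]
          by_cases h : C w
          · simp only [hσ, if_pos h]; abel
          · simp only [hσ, if_neg h]
    have key : Nat.card {f : G.V → Fin (t+1) // ∀ e : (G.deleteEdge e₀).E,
        f (G.src e.1) ≠ f (G.tgt e.1)} =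
        (t+1) * (G.contractEdge e₀).properColorings (t+1) := by
      rw [Nat.card_congr (E.trans (Equiv.prodCongr (Equiv.refl _)
        (colorings_contract_equiv e₀ hne (t+1)))), Nat.card_prod,
        Nat.card_eq_fintype_card, Fintype.card_fin]
      rfl
    exact key

lemma mgPi_src_e₀_val (e₀ : G.E) : (mgPi G e₀ (G.src e₀)).1 = G.tgt e₀ := by
  rw [mgPi_src_e₀]

lemma poly_eq_of_pos_nat {P Q : Polynomial ℝ} (h : ∀ n : ℕ, 0 < n → P.eval (n:ℝ) = Q.eval (n:ℝ)) :
    P = Q := by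
  apply Polynomial.eq_of_infinite_eval_eq
  apply Set.infinite_of_injective_forall_mem (f := fun n : ℕ => ((n+1 : ℕ) : ℝ))
  · intro a b hab
    simpa using hab
  · intro n
    exact h (n+1) n.succ_pos

lemma base_case (G : Multigraph) (hE : IsEmpty G.E) :
    ∃ P : Polynomial ℝ, G.IsChromaticPoly P ∧
      ∀ t : ℝ, 0 < t → t < 1 →
        0 < (-1:ℝ) ^ (Fintype.card G.V + G.numComponents) * P.eval t := by
  refine ⟨Polynomial.X ^ Fintype.card G.V, ?_, ?_⟩
  · intro k hk
    rw [properColorings_of_isEmpty hE]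
    push_cast
    simp
  · intro t ht0 ht1
    rw [numComponents_of_isEmpty G hE]
    rw [Even.neg_one_pow ⟨Fintype.card G.V, rfl⟩]
    simp only [Polynomial.eval_pow, Polynomial.eval_X, one_mul]
    positivity

lemma main_aux : ∀ (m : ℕ) (G : Multigraph), Fintype.card G.E ≤ m → G.Loopless →
    ∃ P : Polynomial ℝ, G.IsChromaticPoly P ∧
      ∀ t : ℝ, 0 < t → t < 1 →
        0 < (-1:ℝ) ^ (Fintype.card G.V + G.numComponents) * P.eval t := by
  intro m
  induction m with
  | zero =>
    intro G hm hG
    exact base_case G (by rw [← Fintype.card_eq_zero_iff]; omega)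
  | succ m ih =>
    intro G hm hG
    by_cases hE : Nonempty G.E
    swap
    · exact base_case G (not_nonempty_iff.mp hE)
    obtain ⟨e₀⟩ := hE
    have hne := hG e₀
    have hcard : Fintype.card {e : G.E // e ≠ e₀} ≤ m := by
      have : Fintype.card {e : G.E // e ≠ e₀} < Fintype.card G.E :=
        Fintype.card_subtype_lt (x := e₀) (by simp)
      omega
    have hGd : (G.deleteEdge e₀).Loopless := fun e => hG e.1
    obtain ⟨P₁, hC₁, hS₁⟩ := ih (G.deleteEdge e₀) hcard hGd
    have hVd : Fintype.card (G.deleteEdge e₀).V = Fintype.card G.V := rfl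
    by_cases hpar : ∃ e₁ : G.E, e₁ ≠ e₀ ∧ ((G.src e₁ = G.src e₀ ∧ G.tgt e₁ = G.tgt e₀) ∨
        (G.src e₁ = G.tgt e₀ ∧ G.tgt e₁ = G.src e₀))
    · -- parallel edge exists: deleting e₀ changes nothing
      obtain ⟨e₁, h01, hp⟩ := hpar
      have hconn : Relation.EqvGen (mgRel (G.deleteEdge e₀)) (G.src e₀) (G.tgt e₀) := by
        have hr : Relation.EqvGen (mgRel (G.deleteEdge e₀)) (G.src e₁) (G.tgt e₁) :=
          Relation.EqvGen.rel _ _ ⟨⟨e₁, h01⟩, Finset.mem_univ _, rfl, rfl⟩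
        rcases hp with ⟨hs, ht⟩ | ⟨hs, ht⟩
        · rw [hs, ht] at hr; exact hr
        · rw [hs, ht] at hr; exact hr.symm _ _
      refine ⟨P₁, ?_, ?_⟩
      · intro k hk
        rw [properColorings_parallel e₀ e₁ h01 hp k]
        exact hC₁ k hk
      · intro t ht0 ht1
        have h1 := hS₁ t ht0 ht1
        rwa [hVd, delete_numComponents e₀ hconn] at h1
    · -- no parallel edge: contraction is loopless
      push_neg at hpar
      have hGc : (G.contractEdge e₀).Loopless := by
        intro e hcontra
        rw [mgPi_src, mgPi_tgt] at hcontra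
        have hval := congrArg Subtype.val hcontra
        by_cases h1 : G.src e.1 = G.src e₀ <;> by_cases h2 : G.tgt e.1 = G.src e₀
        · exact hG e.1 (h1.trans h2.symm)
        · rw [h1] at hval
          rw [show (mgPi G e₀ (G.src e₀)).val = G.tgt e₀ from mgPi_src_e₀_val e₀,
            show (mgPi G e₀ (G.tgt e.1)).val = G.tgt e.1 from mgPi_of_ne e₀ h2] at hval
          exact (hpar e.1 e.2).1 h1 hval.symm
        · rw [h2] at hval
          rw [show (mgPi G e₀ (G.src e₀)).val = G.tgt e₀ from mgPi_src_e₀_val e₀,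
            show (mgPi G e₀ (G.src e.1)).val = G.src e.1 from mgPi_of_ne e₀ h1] at hval
          exact (hpar e.1 e.2).2 hval h2
        · rw [show (mgPi G e₀ (G.src e.1)).val = G.src e.1 from mgPi_of_ne e₀ h1,
            show (mgPi G e₀ (G.tgt e.1)).val = G.tgt e.1 from mgPi_of_ne e₀ h2] at hval
          exact hG e.1 hval
      have hcardc : Fintype.card (G.contractEdge e₀).E ≤ m := hcard
      obtain ⟨P₂, hC₂, hS₂⟩ := ih (G.contractEdge e₀) hcardc hGc
      have hVc : Fintype.card (G.contractEdge e₀).V + 1 = Fintype.card G.V := by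
        have e1 : (G.contractEdge e₀).V ≃ {v : G.V // v ≠ G.src e₀} := by
          refine Equiv.subtypeEquivRight fun v => ⟨?_, ?_⟩
          · intro h hv
            exact hne ((hv ▸ (h hv) : G.src e₀ = G.tgt e₀))
          · intro h hv
            exact absurd hv h
        rw [Fintype.card_congr e1]
        rw [← Fintype.card_congr (Equiv.optionSubtypeNe (G.src e₀)), Fintype.card_option]
      have hpow : (-1:ℝ)^(Fintype.card G.V + G.numComponents) =
          -((-1:ℝ)^(Fintype.card (G.contractEdge e₀).V + G.numComponents)) := by
        rw [← hVc, show Fintype.card (G.contractEdge e₀).V + 1 + G.numComponents =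
          (Fintype.card (G.contractEdge e₀).V + G.numComponents) + 1 from by omega,
          pow_succ, mul_neg_one]
      have hCP : G.IsChromaticPoly (P₁ - P₂) := by
        intro k hk
        have hd := properColorings_delete e₀ hG k
        rw [Polynomial.eval_sub, hC₁ k hk, hC₂ k hk, hd]
        push_cast
        ring
      by_cases hconn : Relation.EqvGen (mgRel (G.deleteEdge e₀)) (G.src e₀) (G.tgt e₀)
      · -- e₀ is not a bridge
        refine ⟨P₁ - P₂, hCP, ?_⟩
        intro t ht0 ht1
        have h1 := hS₁ t ht0 ht1
        have h2 := hS₂ t ht0 ht1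
        rw [hVd, delete_numComponents e₀ hconn, hpow] at h1
        rw [contract_numComponents e₀ hne] at h2
        rw [Polynomial.eval_sub, hpow]
        nlinarith [h1, h2]
      · -- e₀ is a bridge
        have hXP : P₁ = Polynomial.X * P₂ := by
          apply poly_eq_of_pos_nat
          intro k hk
          rw [hC₁ k hk, Polynomial.eval_mul, Polynomial.eval_X, hC₂ k hk,
            properColorings_delete_bridge e₀ hne hconn k]
          push_cast
          ring
        refine ⟨P₁ - P₂, hCP, ?_⟩
        intro t ht0 ht1
        have h2 := hS₂ t ht0 ht1
        rw [contract_numComponents e₀ hne] at h2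
        rw [Polynomial.eval_sub, hXP, Polynomial.eval_mul, Polynomial.eval_X, hpow]
        nlinarith [h2, ht1]

end Aux

/-- For a loopless graph with `n` vertices and `c` components, `P(G,t)` is non-zero
with sign `(-1)^(n+c)` on `(0, 1)`. -/
theorem chromatic_nonzero_zero_one (G : Multigraph) (hG : G.Loopless)
    (P : Polynomial ℝ) (hP : G.IsChromaticPoly P)
    (t : ℝ) (ht0 : 0 < t) (ht1 : t < 1) :
    0 < (-1 : ℝ) ^ (Fintype.card G.V + G.numComponents) * P.eval t := by
  obtain ⟨P₀, hC₀, hS₀⟩ := main_aux (Fintype.card G.E) G le_rfl hG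
  have hPP : P = P₀ := poly_eq_of_pos_nat (fun k hk => by rw [hP k hk, hC₀ k hk])
  rw [hPP]
  exact hS₀ t ht0 ht1
end

section
/- Let G be a 2-connected bipartite graph with an odd number of vertices. Then the chromatic polynomial P(G,t) has a real root strictly between 1 and 2. -/
open Polynomial

/-- `P` is the chromatic polynomial of the simple graph `G`: its value at each
positive integer `t` is the number of proper `t`-colourings of `G`. -/
def SimpleGraph.IsChromaticPoly {V : Type*} (G : SimpleGraph V) (P : Polynomial ℝ) : Prop :=
  ∀ t : ℕ, 0 < t → P.eval (t : ℝ) = Nat.card (G.Coloring (Fin t))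

/-- `G` is 2-connected: it has at least 3 vertices and deleting any set of fewer
than 2 vertices leaves a connected graph. -/
def SimpleGraph.TwoConnected {V : Type*} (G : SimpleGraph V) : Prop :=
  3 ≤ Nat.card V ∧ ∀ U : Set V, Nat.card U < 2 →
    ((⊤ : G.Subgraph).deleteVerts U).coe.Connected

namespace ChromAux

open SimpleGraph

variable {V : Type} {G : SimpleGraph V} {A B : Set V} {x y z u v w : V}

/-- Reachability within a set of allowed vertices. -/
def ReachIn (G : SimpleGraph V) (A : Set V) (x y : V) : Prop :=
  ∃ p : G.Walk x y, ∀ z ∈ p.support, z ∈ A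

lemma ReachIn.refl (hx : x ∈ A) : ReachIn G A x x :=
  ⟨SimpleGraph.Walk.nil, by simp [hx]⟩

lemma ReachIn.start_mem (h : ReachIn G A x y) : x ∈ A := by
  obtain ⟨p, hp⟩ := h; exact hp _ p.start_mem_support

lemma ReachIn.end_mem (h : ReachIn G A x y) : y ∈ A := by
  obtain ⟨p, hp⟩ := h; exact hp _ p.end_mem_support

lemma ReachIn.symm (h : ReachIn G A x y) : ReachIn G A y x := by
  obtain ⟨p, hp⟩ := h
  exact ⟨p.reverse, by simpa using hp⟩

lemma ReachIn.trans (h : ReachIn G A x y) (h' : ReachIn G A y z) : ReachIn G A x z := by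
  obtain ⟨p, hp⟩ := h; obtain ⟨q, hq⟩ := h'
  refine ⟨p.append q, ?_⟩
  intro t ht
  rw [SimpleGraph.Walk.mem_support_append_iff] at ht
  rcases ht with h | h
  · exact hp _ h
  · exact hq _ h

lemma ReachIn.cons (hxy : G.Adj x y) (hx : x ∈ A) (h : ReachIn G A y z) :
    ReachIn G A x z := by
  obtain ⟨p, hp⟩ := h
  refine ⟨SimpleGraph.Walk.cons hxy p, ?_⟩
  intro t ht
  rw [SimpleGraph.Walk.support_cons, List.mem_cons] at ht
  rcases ht with rfl | h
  · exact hx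
  · exact hp _ h

lemma ReachIn.single (hxy : G.Adj x y) (hx : x ∈ A) (hy : y ∈ A) : ReachIn G A x y :=
  ReachIn.cons hxy hx (ReachIn.refl hy)

lemma ReachIn.mono (hAB : A ⊆ B) (h : ReachIn G A x y) : ReachIn G B x y := by
  obtain ⟨p, hp⟩ := h; exact ⟨p, fun z hz => hAB (hp z hz)⟩

lemma ReachIn.reachable (h : ReachIn G A x y) : G.Reachable x y := by
  obtain ⟨p, _⟩ := h; exact ⟨p⟩

lemma reachIn_univ_iff : ReachIn G Set.univ x y ↔ G.Reachable x y :=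
  ⟨fun h => h.reachable, fun ⟨p⟩ => ⟨p, fun _ _ => Set.mem_univ _⟩⟩

/-- Walks avoiding an endpoint of a deleted edge transfer to the deleted graph. -/
lemma ReachIn.deleteEdges (h : ReachIn G A x y) (hA : u ∉ A ∨ v ∉ A) :
    ReachIn (G.deleteEdges {s(u, v)}) A x y := by
  obtain ⟨p, hp⟩ := h
  have hedges : ∀ e ∈ p.edges, e ∈ (G.deleteEdges {s(u, v)}).edgeSet := by
    intro e he
    induction e with
    | h a b =>
      have hab : G.Adj a b := p.edges_subset_edgeSet he
      have ha : a ∈ A := hp _ (p.fst_mem_support_of_mem_edges he)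
      have hb : b ∈ A := hp _ (p.snd_mem_support_of_mem_edges he)
      simp only [SimpleGraph.mem_edgeSet, SimpleGraph.deleteEdges_adj, Set.mem_singleton_iff]
      refine ⟨hab, fun hcontra => ?_⟩
      rw [Sym2.eq_iff] at hcontra
      rcases hA with hA | hA <;> rcases hcontra with ⟨rfl, rfl⟩ | ⟨rfl, rfl⟩ <;>
        first | exact hA ha | exact hA hb
  refine ⟨p.transfer _ hedges, ?_⟩
  rw [SimpleGraph.Walk.support_transfer]
  exact hp

/-- Self-strengthening: every support vertex of a witnessing walk is itself
`ReachIn`-reachable from the start. -/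
lemma ReachIn.strengthen (h : ReachIn G A x y) :
    ReachIn G (A ∩ {z | ReachIn G A x z}) x y := by
  letI := Classical.decEq V
  obtain ⟨p, hp⟩ := h
  refine ⟨p, fun t ht => ⟨hp _ ht, ?_⟩⟩
  refine ⟨p.takeUntil t ht, fun s hs => hp _ (p.support_takeUntil_subset ht hs)⟩


/-- Contract the edge `(u,v)`: delete `v`, attaching its neighbours to `u`. -/
def contract (G : SimpleGraph V) (u v : V) : SimpleGraph {x : V // x ≠ v} where
  Adj a b := a ≠ b ∧ (G.Adj a.1 b.1 ∨ (a.1 = u ∧ G.Adj v b.1) ∨ (b.1 = u ∧ G.Adj v a.1))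
  symm := by
    constructor
    rintro a b ⟨hne, h⟩
    refine ⟨hne.symm, ?_⟩
    rcases h with h | h | h
    · exact Or.inl h.symm
    · exact Or.inr (Or.inr h)
    · exact Or.inr (Or.inl h)
  loopless := ⟨fun a h => h.1 rfl⟩

lemma contract_adj {u v : V} {a b : {x : V // x ≠ v}} :
    (contract G u v).Adj a b ↔
      a ≠ b ∧ (G.Adj a.1 b.1 ∨ (a.1 = u ∧ G.Adj v b.1) ∨ (b.1 = u ∧ G.Adj v a.1)) :=
  Iff.rfl

open Classical in
/-- Projection of vertices to the contracted graph, sending `v` to `u`. -/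
noncomputable def cproj (u v : V) (h : u ≠ v) (x : V) : {x : V // x ≠ v} :=
  if hx : x = v then ⟨u, h⟩ else ⟨x, hx⟩

lemma cproj_of_ne {u v : V} (h : u ≠ v) {x : V} (hx : x ≠ v) : cproj u v h x = ⟨x, hx⟩ := by
  simp [cproj, hx]

lemma cproj_v {u v : V} (h : u ≠ v) : cproj u v h v = ⟨u, h⟩ := by
  simp [cproj]

lemma cproj_val {u v : V} (h : u ≠ v) (x : {x : V // x ≠ v}) : cproj u v h x.1 = x := by
  rw [cproj_of_ne h x.2]

lemma cproj_step (huv : G.Adj u v) {x c : V} (h : G.Adj x c) :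
    cproj u v huv.ne x = cproj u v huv.ne c ∨
      (contract G u v).Adj (cproj u v huv.ne x) (cproj u v huv.ne c) := by
  have hne' : u ≠ v := huv.ne
  by_cases hx : x = v <;> by_cases hc : c = v
  · subst hx; subst hc; exact absurd rfl h.ne
  · subst hx
    rw [cproj_v hne', cproj_of_ne hne' hc]
    by_cases hcu : c = u
    · exact Or.inl (by simp [hcu])
    · refine Or.inr ⟨by simp [Subtype.ext_iff, Ne.symm hcu], Or.inr (Or.inl ⟨rfl, h⟩)⟩
  · subst hc
    rw [cproj_v hne', cproj_of_ne hne' hx]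
    by_cases hxu : x = u
    · exact Or.inl (by simp [hxu])
    · refine Or.inr ⟨by simp [Subtype.ext_iff, hxu], Or.inr (Or.inr ⟨rfl, h.symm⟩)⟩
  · rw [cproj_of_ne hne' hx, cproj_of_ne hne' hc]
    exact Or.inr ⟨by simp [Subtype.ext_iff, h.ne], Or.inl h⟩

lemma reachIn_contract (huv : G.Adj u v) (S : Set {x : V // x ≠ v})
    {x y : V} (p : G.Walk x y) (hp : ∀ z ∈ p.support, cproj u v huv.ne z ∈ S) :
    ReachIn (contract G u v) S (cproj u v huv.ne x) (cproj u v huv.ne y) := by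
  induction p with
  | nil => exact ReachIn.refl (hp _ (SimpleGraph.Walk.start_mem_support _))
  | @cons a c y h p ih =>
    have hmem : ∀ z ∈ p.support, cproj u v huv.ne z ∈ S := by
      intro z hz
      exact hp _ (by rw [SimpleGraph.Walk.support_cons]; exact List.mem_cons_of_mem _ hz)
    have ha : cproj u v huv.ne a ∈ S := hp _ (SimpleGraph.Walk.start_mem_support _)
    rcases cproj_step huv h with heq | hadj
    · rw [heq]; exact ih hmem
    · exact ReachIn.cons hadj ha (ih hmem)

lemma contract_connected (hG : G.Connected) (huv : G.Adj u v) :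
    (contract G u v).Connected := by
  have hne' : u ≠ v := huv.ne
  rw [SimpleGraph.connected_iff]
  refine ⟨fun a b => ?_, ⟨⟨u, hne'⟩⟩⟩
  obtain ⟨p⟩ := hG.preconnected a.1 b.1
  have := reachIn_contract huv Set.univ p (fun z _ => Set.mem_univ _)
  rw [cproj_val hne' a, cproj_val hne' b] at this
  exact this.reachable

noncomputable instance subFintype [Fintype V] (p : V → Prop) : Fintype {x : V // p x} :=
  Fintype.ofFinite _

instance colFinite [Fintype V] (G : SimpleGraph V) (α : Type) [Finite α] :
    Finite (G.Coloring α) :=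
  Finite.of_injective (fun f => (f : V → α)) DFunLike.coe_injective

lemma cproj_eq_cases {u v : V} (hne : u ≠ v) {x c : V} (hxc : x ≠ c)
    (h : cproj u v hne x = cproj u v hne c) :
    (x = u ∧ c = v) ∨ (x = v ∧ c = u) := by
  by_cases hx : x = v <;> by_cases hc : c = v
  · exact absurd (hx.trans hc.symm) hxc
  · subst hx
    rw [cproj_v hne, cproj_of_ne hne hc] at h
    exact Or.inr ⟨rfl, (congrArg Subtype.val h).symm⟩
  · subst hc
    rw [cproj_v hne, cproj_of_ne hne hx] at h
    exact Or.inl ⟨congrArg Subtype.val h, rfl⟩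
  · rw [cproj_of_ne hne hx, cproj_of_ne hne hc] at h
    exact absurd (congrArg Subtype.val h) hxc

lemma not_mem_edge {u v a b : V} (h : G.Adj a b) (hne : ¬((a = u ∧ b = v) ∨ (a = v ∧ b = u))) :
    s(a, b) ∉ ({s(u, v)} : Set (Sym2 V)) := by
  simp only [Set.mem_singleton_iff, Sym2.eq_iff]
  exact hne

/-- The fundamental deletion–contraction bijection for colourings. -/
noncomputable def colorEquiv (huv : G.Adj u v) (α : Type) [DecidableEq α] :
    (G.deleteEdges {s(u, v)}).Coloring α ≃ (G.Coloring α ⊕ (contract G u v).Coloring α) where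
  toFun f :=
    if h : f u = f v then
      Sum.inr (SimpleGraph.Coloring.mk (fun a => f a.1) (by
        rintro a b ⟨hne, hadj | ⟨hau, hvb⟩ | ⟨hbu, hva⟩⟩
        · refine f.valid ?_
          rw [SimpleGraph.deleteEdges_adj]
          refine ⟨hadj, not_mem_edge hadj ?_⟩
          rintro (⟨-, hb⟩ | ⟨ha, -⟩)
          · exact b.2 hb
          · exact a.2 ha
        · have hbu : b.1 ≠ u := by
            intro hb; exact hne (Subtype.ext (hau.trans hb.symm))
          have : f v ≠ f b.1 := f.valid (by
            rw [SimpleGraph.deleteEdges_adj]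
            exact ⟨hvb, not_mem_edge hvb (by
              rintro (⟨rfl, _⟩ | ⟨_, rfl⟩)
              · exact huv.ne rfl
              · exact hbu rfl)⟩)
          show f a.1 ≠ f b.1
          rw [hau, h]; exact this
        · have hau : a.1 ≠ u := by
            intro ha; exact hne (Subtype.ext (ha.trans hbu.symm))
          have : f v ≠ f a.1 := f.valid (by
            rw [SimpleGraph.deleteEdges_adj]
            exact ⟨hva, not_mem_edge hva (by
              rintro (⟨rfl, _⟩ | ⟨_, rfl⟩)
              · exact huv.ne rfl
              · exact hau rfl)⟩)
          show f a.1 ≠ f b.1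
          rw [hbu, h]; exact this.symm))
    else
      Sum.inl (SimpleGraph.Coloring.mk f (by
        intro a b hadj
        by_cases he : (a = u ∧ b = v) ∨ (a = v ∧ b = u)
        · rcases he with ⟨rfl, rfl⟩ | ⟨rfl, rfl⟩
          · exact h
          · exact fun hc => h hc.symm
        · exact f.valid (by rw [SimpleGraph.deleteEdges_adj]; exact ⟨hadj, not_mem_edge hadj he⟩)))
  invFun := Sum.elim
    (fun g => SimpleGraph.Coloring.mk g
      (fun hadj => g.valid ((SimpleGraph.deleteEdges_adj).1 hadj).1))
    (fun g => SimpleGraph.Coloring.mk (fun x => g (cproj u v huv.ne x)) (by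
      intro a b hadj
      rw [SimpleGraph.deleteEdges_adj] at hadj
      obtain ⟨hab, hmem⟩ := hadj
      rcases cproj_step huv hab with heq | hadj'
      · exfalso
        rcases cproj_eq_cases huv.ne hab.ne heq with ⟨rfl, rfl⟩ | ⟨rfl, rfl⟩
        · exact hmem rfl
        · exact hmem (Sym2.eq_swap)
      · exact g.valid hadj'))
  left_inv := by
    intro f
    dsimp only
    by_cases h : f u = f v
    · rw [dif_pos h]
      refine DFunLike.coe_injective (funext fun x => ?_)
      show f (cproj u v huv.ne x).1 = f x
      by_cases hx : x = v
      · subst hx; rw [cproj_v huv.ne]; exact h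
      · rw [cproj_of_ne huv.ne hx]
    · rw [dif_neg h]
      exact DFunLike.coe_injective rfl
  right_inv := by
    rintro (g | g)
    · have h : (g : V → α) u ≠ g v := g.valid huv
      dsimp only [Sum.elim_inl]
      rw [dif_neg]
      · exact congrArg Sum.inl (DFunLike.coe_injective rfl)
      · exact h
    · have h : g (cproj u v huv.ne u) = g (cproj u v huv.ne v) := by
        rw [cproj_v huv.ne, cproj_of_ne huv.ne huv.ne]
      dsimp only [Sum.elim_inr]
      rw [dif_pos]
      · refine congrArg Sum.inr (DFunLike.coe_injective (funext fun a => ?_))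
        show g (cproj u v huv.ne a.1) = g a
        rw [cproj_val huv.ne a]
      · exact h

lemma card_rec [Fintype V] (huv : G.Adj u v) (α : Type) [Finite α] :
    Nat.card ((G.deleteEdges {s(u, v)}).Coloring α) =
      Nat.card (G.Coloring α) + Nat.card ((contract G u v).Coloring α) := by
  classical
  rw [Nat.card_congr (colorEquiv huv α), Nat.card_sum]

section EdgeCount

lemma ncard_del_lt [Fintype V] (huv : G.Adj u v) :
    (G.deleteEdges {s(u, v)}).edgeSet.ncard < G.edgeSet.ncard := by
  rw [SimpleGraph.edgeSet_deleteEdges]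
  exact Set.ncard_diff_singleton_lt_of_mem huv (Set.toFinite _)

open Classical in
lemma ncard_contract_lt [Fintype V] (huv : G.Adj u v) :
    (contract G u v).edgeSet.ncard < G.edgeSet.ncard := by
  classical
  set g : {x : V // x ≠ v} → V := fun a => if a.1 = u then v else a.1 with hg
  set F : Sym2 {x : V // x ≠ v} → Sym2 V :=
    fun e => if Sym2.map Subtype.val e ∈ G.edgeSet then Sym2.map Subtype.val e
             else Sym2.map g e with hF
  have hretr : ∀ e : Sym2 {x : V // x ≠ v}, Sym2.map (cproj u v huv.ne) (F e) = e := by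
    intro e
    by_cases h : Sym2.map Subtype.val e ∈ G.edgeSet
    · rw [hF]; simp only [if_pos h]
      rw [Sym2.map_map]
      have : (cproj u v huv.ne ∘ Subtype.val) = id := funext fun x => cproj_val huv.ne x
      rw [this, Sym2.map_id, id_eq]
    · rw [hF]; simp only [if_neg h]
      rw [Sym2.map_map]
      have : (cproj u v huv.ne ∘ g) = id := by
        funext x
        show cproj u v huv.ne (if x.1 = u then v else x.1) = x
        by_cases hx : x.1 = u
        · rw [if_pos hx, cproj_v huv.ne]; exact Subtype.ext hx.symm
        · rw [if_neg hx, cproj_val huv.ne]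
      rw [this, Sym2.map_id, id_eq]
  have hinj : Set.InjOn F (contract G u v).edgeSet := by
    intro a _ b _ hab
    have := congrArg (Sym2.map (cproj u v huv.ne)) hab
    rwa [hretr, hretr] at this
  have hmapsto : ∀ e ∈ (contract G u v).edgeSet, F e ∈ G.edgeSet \ {s(u, v)} := by
    intro e he
    induction e with
    | h a b =>
      rw [SimpleGraph.mem_edgeSet, contract_adj] at he
      obtain ⟨hne, hcase⟩ := he
      by_cases h : Sym2.map Subtype.val s(a, b) ∈ G.edgeSet
      · rw [hF]; simp only [if_pos h]
        refine ⟨h, ?_⟩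
        simp only [Set.mem_singleton_iff, Sym2.map_pair_eq, Sym2.eq_iff]
        rintro (⟨-, hb⟩ | ⟨ha, -⟩)
        · exact b.2 hb
        · exact a.2 ha
      · rw [hF]; simp only [if_neg h]
        have hnadj : ¬ G.Adj a.1 b.1 := by
          intro hadj; exact h (by rwa [Sym2.map_pair_eq, SimpleGraph.mem_edgeSet])
        rcases hcase with hadj | ⟨hau, hvb⟩ | ⟨hbu, hva⟩
        · exact absurd hadj hnadj
        · have hbu : b.1 ≠ u := fun hb => hne (Subtype.ext (hau.trans hb.symm))
          rw [Sym2.map_pair_eq]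
          have hga : g a = v := by rw [hg]; simp only [if_pos hau]
          have hgb : g b = b.1 := by rw [hg]; simp only [if_neg hbu]
          rw [hga, hgb]
          refine ⟨hvb, ?_⟩
          simp only [Set.mem_singleton_iff, Sym2.eq_iff]
          rintro (⟨hv, -⟩ | ⟨-, hb⟩)
          · exact huv.ne hv.symm
          · exact hbu hb
        · have hau2 : a.1 ≠ u := fun ha => hne (Subtype.ext (ha.trans hbu.symm))
          rw [Sym2.map_pair_eq]
          have hga : g a = a.1 := by rw [hg]; simp only [if_neg hau2]
          have hgb : g b = v := by rw [hg]; simp only [if_pos hbu]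
          rw [hga, hgb]
          refine ⟨hva.symm, ?_⟩
          simp only [Set.mem_singleton_iff, Sym2.eq_iff]
          rintro (⟨ha, -⟩ | ⟨-, hv⟩)
          · exact hau2 ha
          · exact huv.ne hv.symm
  calc (contract G u v).edgeSet.ncard = (F '' (contract G u v).edgeSet).ncard :=
        (Set.ncard_image_of_injOn hinj).symm
    _ ≤ (G.edgeSet \ {s(u, v)}).ncard := by
        refine Set.ncard_le_ncard ?_ (Set.toFinite _)
        rintro e ⟨e', he', rfl⟩
        exact hmapsto e' he'
    _ < G.edgeSet.ncard := Set.ncard_diff_singleton_lt_of_mem huv (Set.toFinite _)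

end EdgeCount

section CP

open Polynomial

lemma isChromaticPoly_edgeless [Fintype V] (h : G.edgeSet = ∅) :
    G.IsChromaticPoly ((X : Polynomial ℝ) ^ (Nat.card V)) := by
  intro t _
  have hequiv : G.Coloring (Fin t) ≃ (V → Fin t) :=
    { toFun := fun f => f
      invFun := fun f => SimpleGraph.Coloring.mk f (by
        intro a b hadj
        exact absurd (G.mem_edgeSet.2 hadj) (by rw [h]; exact Set.notMem_empty _))
      left_inv := fun f => DFunLike.coe_injective rfl
      right_inv := fun f => rfl }
  rw [Nat.card_congr hequiv, Nat.card_fun, Nat.card_eq_fintype_card (α := Fin t),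
    Fintype.card_fin]
  push_cast
  simp

lemma exists_cp_aux : ∀ (m : ℕ) (V : Type) [Fintype V] (G : SimpleGraph V),
    G.edgeSet.ncard = m → ∃ P, G.IsChromaticPoly P := by
  intro m
  induction m using Nat.strong_induction_on with
  | _ m ih =>
    intro V _ G hm
    classical
    by_cases h : G.edgeSet = ∅
    · exact ⟨_, isChromaticPoly_edgeless h⟩
    · obtain ⟨e, he⟩ := Set.nonempty_iff_ne_empty.2 h
      induction e with
      | h u v =>
        rw [SimpleGraph.mem_edgeSet] at he
        obtain ⟨P₁, h₁⟩ := ih _ (hm ▸ ncard_del_lt he) _ (G.deleteEdges {s(u, v)}) rfl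
        obtain ⟨P₂, h₂⟩ := ih _ (hm ▸ ncard_contract_lt he) _ (contract G u v) rfl
        refine ⟨P₁ - P₂, ?_⟩
        intro t ht
        have hc := card_rec he (Fin t)
        rw [eval_sub, h₁ t ht, h₂ t ht]
        rw [hc]
        push_cast
        ring

lemma exists_cp [Fintype V] (G : SimpleGraph V) : ∃ P, G.IsChromaticPoly P :=
  exists_cp_aux _ _ G rfl

/-- The chromatic polynomial. -/
noncomputable def cp [Fintype V] (G : SimpleGraph V) : Polynomial ℝ :=
  (exists_cp G).choose

lemma cp_spec [Fintype V] (G : SimpleGraph V) : G.IsChromaticPoly (cp G) :=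
  (exists_cp G).choose_spec

lemma icp_unique {P Q : Polynomial ℝ} (h1 : G.IsChromaticPoly P) (h2 : G.IsChromaticPoly Q) :
    P = Q := by
  apply Polynomial.eq_of_infinite_eval_eq
  refine Set.infinite_of_injective_forall_mem (f := fun n : ℕ => ((n + 1 : ℕ) : ℝ)) ?_ ?_
  · intro a b hab
    have : (a : ℝ) + 1 = (b : ℝ) + 1 := by push_cast at hab ⊢; linarith
    exact_mod_cast (by linarith : (a : ℝ) = b)
  · intro n
    show Polynomial.eval _ P = Polynomial.eval _ Q
    rw [h1 _ (Nat.succ_pos n), h2 _ (Nat.succ_pos n)]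

lemma cp_eq_of_icp [Fintype V] {P : Polynomial ℝ} (h : G.IsChromaticPoly P) : cp G = P :=
  icp_unique (cp_spec G) h

lemma cp_rec [Fintype V] (huv : G.Adj u v) :
    cp G = cp (G.deleteEdges {s(u, v)}) - cp (contract G u v) := by
  classical
  refine cp_eq_of_icp ?_
  intro t ht
  rw [eval_sub, cp_spec _ t ht, cp_spec _ t ht, card_rec huv (Fin t)]
  push_cast
  ring

lemma cp_edgeless [Fintype V] (h : G.edgeSet = ∅) : cp G = X ^ (Nat.card V) :=
  cp_eq_of_icp (isChromaticPoly_edgeless h)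

lemma cp_eval_one [Fintype V] (huv : G.Adj u v) : (cp G).eval 1 = 0 := by
  have h := cp_spec G 1 one_pos
  have : IsEmpty (G.Coloring (Fin 1)) := by
    constructor
    intro f
    exact f.valid huv (Subsingleton.elim _ _)
  rw [Nat.card_of_isEmpty] at h
  simpa using h

lemma cp_prod [Fintype V] (p : V → Prop) (hcl : ∀ a b, G.Adj a b → p a → p b) :
    cp G = cp (G.comap (Subtype.val : {x // p x} → V)) *
           cp (G.comap (Subtype.val : {x // ¬ p x} → V)) := by
  classical
  refine cp_eq_of_icp ?_
  intro t ht
  have hequiv : G.Coloring (Fin t) ≃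
      ((G.comap (Subtype.val : {x // p x} → V)).Coloring (Fin t) ×
       (G.comap (Subtype.val : {x // ¬ p x} → V)).Coloring (Fin t)) :=
    { toFun := fun f =>
        (SimpleGraph.Coloring.mk (fun a => f a.1) (fun hadj => f.valid hadj),
         SimpleGraph.Coloring.mk (fun a => f a.1) (fun hadj => f.valid hadj))
      invFun := fun g => SimpleGraph.Coloring.mk
        (fun x => if h : p x then g.1 ⟨x, h⟩ else g.2 ⟨x, h⟩) (by
          intro a b hadj
          show (if h : p a then g.1 ⟨a, h⟩ else g.2 ⟨a, h⟩) ≠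
            (if h : p b then g.1 ⟨b, h⟩ else g.2 ⟨b, h⟩)
          by_cases ha : p a
          · have hb : p b := hcl a b hadj ha
            rw [dif_pos ha, dif_pos hb]
            exact g.1.valid hadj
          · have hb : ¬ p b := fun hb => ha (hcl b a hadj.symm hb)
            rw [dif_neg ha, dif_neg hb]
            exact g.2.valid hadj)
      left_inv := by
        intro f
        refine DFunLike.coe_injective (funext fun x => ?_)
        show (if h : p x then f x else f x) = f x
        split <;> rfl
      right_inv := by
        rintro ⟨g1, g2⟩
        refine Prod.ext ?_ ?_
        · refine DFunLike.coe_injective (funext fun a => ?_)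
          show (if h : p a.1 then g1 ⟨a.1, h⟩ else g2 ⟨a.1, h⟩) = g1 a
          rw [dif_pos a.2]
        · refine DFunLike.coe_injective (funext fun a => ?_)
          show (if h : p a.1 then g1 ⟨a.1, h⟩ else g2 ⟨a.1, h⟩) = g2 a
          rw [dif_neg a.2]
    }
  rw [Nat.card_congr hequiv, Nat.card_prod, eval_mul, cp_spec _ t ht, cp_spec _ t ht]
  push_cast
  ring

end CP

section BI

open Polynomial

/-- The (signed) derivative of the chromatic polynomial at 1. -/
noncomputable def bI [Fintype V] (G : SimpleGraph V) : ℝ :=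
  (-1 : ℝ) ^ (Nat.card V) * ((cp G).derivative.eval 1)

lemma card_succ [Fintype V] (v : V) : Nat.card V = Nat.card {x : V // x ≠ v} + 1 := by
  classical
  rw [Nat.card_eq_fintype_card, Nat.card_eq_fintype_card]
  have h1 : Fintype.card {x : V // ¬ x = v} = Fintype.card V - Fintype.card {x : V // x = v} :=
    Fintype.card_subtype_compl _
  have h2 : Fintype.card {x : V // x = v} = 1 := Fintype.card_subtype_eq v
  have h3 : 1 ≤ Fintype.card V := Fintype.card_pos_iff.2 ⟨v⟩
  have h4 : Fintype.card {x : V // x ≠ v} = Fintype.card {x : V // ¬ x = v} := rfl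
  omega

lemma b_rec [Fintype V] (huv : G.Adj u v) :
    bI G = bI (G.deleteEdges {s(u, v)}) + bI (contract G u v) := by
  have hrec := cp_rec huv
  have hn := card_succ v
  unfold bI
  rw [hrec, hn, derivative_sub, eval_sub, pow_succ]
  ring

lemma contract_card_one [Fintype V] (huv : G.Adj u v) (hall : ∀ x : V, x = u ∨ x = v) :
    Nat.card {x : V // x ≠ v} = 1 := by
  rw [Nat.card_eq_one_iff_unique]
  refine ⟨⟨fun a b => ?_⟩, ⟨⟨u, huv.ne⟩⟩⟩
  have ha := (hall a.1).resolve_right a.2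
  have hb := (hall b.1).resolve_right b.2
  exact Subtype.ext (ha.trans hb.symm)

lemma b_two [Fintype V] (huv : G.Adj u v) (hall : ∀ x : V, x = u ∨ x = v) : bI G = 1 := by
  classical
  have hdel : (G.deleteEdges {s(u, v)}).edgeSet = ∅ := by
    rw [Set.eq_empty_iff_forall_notMem]
    intro e
    induction e with
    | h a b =>
      rw [SimpleGraph.mem_edgeSet, SimpleGraph.deleteEdges_adj]
      rintro ⟨hadj, hne⟩
      rcases hall a with rfl | rfl <;> rcases hall b with rfl | rfl
      · exact hadj.ne rfl
      · exact hne rfl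
      · exact hne Sym2.eq_swap
      · exact hadj.ne rfl
  have hcon : (contract G u v).edgeSet = ∅ := by
    rw [Set.eq_empty_iff_forall_notMem]
    intro e
    induction e with
    | h a b =>
      rw [SimpleGraph.mem_edgeSet, contract_adj]
      rintro ⟨hne, -⟩
      have ha := (hall a.1).resolve_right a.2
      have hb := (hall b.1).resolve_right b.2
      exact hne (Subtype.ext (ha.trans hb.symm))
  have h1 : Nat.card {x : V // x ≠ v} = 1 := contract_card_one huv hall
  have h2 : Nat.card V = 2 := by rw [card_succ v, h1]
  have hcp := cp_rec huv
  rw [cp_edgeless hdel, cp_edgeless hcon, h1, h2] at hcp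
  unfold bI
  rw [hcp, h2]
  simp [derivative_sub, derivative_X_pow]

lemma b_pendant [Fintype V] (huv : G.Adj u v) (hpend : ∀ w, G.Adj v w → w = u)
    (hw : ∃ w, w ≠ v ∧ G.Adj u w) : bI G = 0 := by
  classical
  obtain ⟨w, hwv, huw⟩ := hw
  set Gd := G.deleteEdges {s(u, v)} with hGd
  -- product decomposition of Gd along p := (· ≠ v)
  have hcl : ∀ a b, Gd.Adj a b → a ≠ v → b ≠ v := by
    intro a b hab ha hb
    subst hb
    rw [hGd, SimpleGraph.deleteEdges_adj] at hab
    obtain ⟨hab, hne⟩ := hab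
    have : a = u := hpend a hab.symm
    subst this
    exact hne rfl
  have hprod := cp_prod (G := Gd) (fun x => x ≠ v) (fun a b hab ha => hcl a b hab ha)
  -- the `≠ v` part of Gd equals the contraction
  have hH : Gd.comap (Subtype.val : {x // x ≠ v} → V) = contract G u v := by
    apply SimpleGraph.ext
    ext a b
    rw [SimpleGraph.comap_adj, contract_adj]
    constructor
    · intro hab
      rw [hGd, SimpleGraph.deleteEdges_adj] at hab
      refine ⟨fun h => hab.1.ne (congrArg Subtype.val h), Or.inl hab.1⟩
    · rintro ⟨hne, hadj | ⟨hau, hvb⟩ | ⟨hbu, hva⟩⟩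
      · rw [hGd, SimpleGraph.deleteEdges_adj]
        refine ⟨hadj, not_mem_edge hadj ?_⟩
        rintro (⟨-, hb⟩ | ⟨ha, -⟩)
        · exact b.2 hb
        · exact a.2 ha
      · exact absurd (Subtype.ext (hau.trans ((hpend b.1 hvb)).symm)) hne
      · exact absurd (Subtype.ext ((hpend a.1 hva).trans hbu.symm)) hne
  -- the `= v` part of Gd is a single vertex
  have hKcard : Nat.card {x : V // ¬ x ≠ v} = 1 := by
    rw [Nat.card_eq_one_iff_unique]
    refine ⟨⟨fun a b => ?_⟩, ⟨⟨v, fun h => h rfl⟩⟩⟩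
    have ha := not_not.1 a.2
    have hb := not_not.1 b.2
    exact Subtype.ext (ha.trans hb.symm)
  have hKempty : (Gd.comap (Subtype.val : {x // ¬ x ≠ v} → V)).edgeSet = ∅ := by
    rw [Set.eq_empty_iff_forall_notMem]
    intro e
    induction e with
    | h a b =>
      rw [SimpleGraph.mem_edgeSet, SimpleGraph.comap_adj]
      intro hab
      have ha := not_not.1 a.2
      have hb := not_not.1 b.2
      exact hab.ne (ha.trans hb.symm)
  have hK : cp (Gd.comap (Subtype.val : {x // ¬ x ≠ v} → V)) = X := by
    rw [cp_edgeless hKempty, hKcard, pow_one]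
  -- contraction has an edge
  have hHedge : (contract G u v).Adj ⟨u, huv.ne⟩ ⟨w, hwv⟩ := by
    rw [contract_adj]
    exact ⟨fun h => huw.ne (congrArg Subtype.val h), Or.inl huw⟩
  -- assemble
  have hcp := cp_rec huv
  rw [← hGd, hprod, hH, hK] at hcp
  have : cp G = cp (contract G u v) * (X - 1) := by rw [hcp]; ring
  unfold bI
  rw [this, derivative_mul, derivative_sub, derivative_X, derivative_one]
  simp only [eval_add, eval_mul, eval_sub, eval_X, eval_one, sub_self, mul_zero, zero_add,
    mul_one]
  rw [cp_eval_one hHedge]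
  ring

end BI

section LemmaA

open Polynomial

lemma exists_edge_of_reachable {x y : V} (h : G.Reachable x y) (hxy : x ≠ y) :
    G.edgeSet.Nonempty := by
  obtain ⟨p⟩ := h
  cases p with
  | nil => exact absurd rfl hxy
  | cons h _ => exact ⟨_, G.mem_edgeSet.2 h⟩

lemma reachable_delete_of_reachable (huv : G.Adj u v)
    (hre : (G.deleteEdges {s(u, v)}).Reachable u v) {x y : V} (p : G.Walk x y) :
    (G.deleteEdges {s(u, v)}).Reachable x y := by
  induction p with
  | nil => exact SimpleGraph.Reachable.refl _
  | @cons a c y h p ih =>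
    refine SimpleGraph.Reachable.trans ?_ ih
    by_cases he : (a = u ∧ c = v) ∨ (a = v ∧ c = u)
    · rcases he with ⟨rfl, rfl⟩ | ⟨rfl, rfl⟩
      · exact hre
      · exact hre.symm
    · exact SimpleGraph.Adj.reachable
        (by rw [SimpleGraph.deleteEdges_adj]; exact ⟨h, not_mem_edge h he⟩)

lemma walk_stays {Sset : Set V} (hclosed : ∀ a b, G.Adj a b → a ∈ Sset → b ∈ Sset)
    {x y : V} (p : G.Walk x y) (hx : x ∈ Sset) : y ∈ Sset := by
  induction p with
  | nil => exact hx
  | @cons a c y h p ih => exact ih (hclosed a c h hx)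

lemma bI_nonneg_aux : ∀ (m : ℕ) (V : Type) [Fintype V] (G : SimpleGraph V),
    G.edgeSet.ncard = m → G.Connected → G.edgeSet.Nonempty → 0 ≤ bI G := by
  intro m
  induction m using Nat.strong_induction_on with
  | _ m ih =>
  intro V _ G hm hconn hedge
  classical
  obtain ⟨e, he⟩ := hedge
  induction e with
  | h u v =>
  rw [SimpleGraph.mem_edgeSet] at he
  by_cases hNu : ∃ w, w ≠ v ∧ G.Adj u w
  · by_cases hNv : ∃ w, w ≠ u ∧ G.Adj v w
    · -- both endpoints have other neighbours
      obtain ⟨w, hwv, huw⟩ := hNu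
      obtain ⟨w', hw'u, hvw'⟩ := hNv
      have hconedge : (contract G u v).edgeSet.Nonempty :=
        ⟨s(⟨u, he.ne⟩, ⟨w, hwv⟩), (contract G u v).mem_edgeSet.2 (by
          rw [contract_adj]
          exact ⟨fun h => huw.ne (congrArg Subtype.val h), Or.inl huw⟩)⟩
      have hcont : 0 ≤ bI (contract G u v) :=
        ih _ (hm ▸ ncard_contract_lt he) _ (contract G u v) rfl
          (contract_connected hconn he) hconedge
      by_cases hbr : (G.deleteEdges {s(u, v)}).Reachable u v
      · -- not a bridge
        have hdcon : (G.deleteEdges {s(u, v)}).Connected := by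
          rw [SimpleGraph.connected_iff]
          refine ⟨fun x y => ?_, hconn.nonempty⟩
          obtain ⟨p⟩ := hconn.preconnected x y
          exact reachable_delete_of_reachable he hbr p
        have hdedge : (G.deleteEdges {s(u, v)}).edgeSet.Nonempty :=
          exists_edge_of_reachable hbr he.ne
        have hdel : 0 ≤ bI (G.deleteEdges {s(u, v)}) :=
          ih _ (hm ▸ ncard_del_lt he) _ _ rfl hdcon hdedge
        rw [b_rec he]
        linarith
      · -- a bridge
        set Gd := G.deleteEdges {s(u, v)} with hGd
        have huw_d : Gd.Adj u w := by
          rw [hGd, SimpleGraph.deleteEdges_adj]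
          refine ⟨huw, not_mem_edge huw ?_⟩
          rintro (⟨-, hb⟩ | ⟨ha, -⟩)
          · exact hwv hb
          · exact he.ne ha
        have hvw'_d : Gd.Adj v w' := by
          rw [hGd, SimpleGraph.deleteEdges_adj]
          refine ⟨hvw', not_mem_edge hvw' ?_⟩
          rintro (⟨hv, -⟩ | ⟨-, hw⟩)
          · exact he.ne hv.symm
          · exact hw'u hw
        have hw'_not : ¬ Gd.Reachable u w' := fun h => hbr (h.trans hvw'_d.symm.reachable)
        have hb0 : bI Gd = 0 := by
          have hprod := cp_prod (G := Gd) (fun x => Gd.Reachable u x)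
            (fun a b hab ha => ha.trans hab.reachable)
          have hE1 : (Gd.comap (Subtype.val : {x // Gd.Reachable u x} → V)).Adj
              ⟨u, SimpleGraph.Reachable.refl u⟩ ⟨w, huw_d.reachable⟩ := by
            rw [SimpleGraph.comap_adj]; exact huw_d
          have hE2 : (Gd.comap (Subtype.val : {x // ¬ Gd.Reachable u x} → V)).Adj
              ⟨v, hbr⟩ ⟨w', hw'_not⟩ := by
            rw [SimpleGraph.comap_adj]; exact hvw'_d
          unfold bI
          rw [hprod, derivative_mul, eval_add, eval_mul, eval_mul,
            cp_eval_one hE1, cp_eval_one hE2]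
          ring
        rw [b_rec he, ← hGd, hb0]
        linarith
    · -- v is pendant
      push_neg at hNv
      have hpend : ∀ w, G.Adj v w → w = u := fun w hw => by
        by_contra hne
        exact (hNv w hne) hw
      rw [b_pendant he hpend hNu]
  · by_cases hNv : ∃ w, w ≠ u ∧ G.Adj v w
    · -- u is pendant (use the edge in the other direction)
      push_neg at hNu
      have hpend : ∀ w, G.Adj u w → w = v := fun w hw => by
        by_contra hne
        exact (hNu w hne) hw
      rw [b_pendant he.symm hpend hNv]
    · -- G is a single edge
      push_neg at hNu hNv
      have hall : ∀ x : V, x = u ∨ x = v := by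
        intro x
        have hclosed : ∀ a b, G.Adj a b → a ∈ ({u, v} : Set V) → b ∈ ({u, v} : Set V) := by
          rintro a b hab (rfl | rfl)
          · right
            by_contra hbv
            exact (hNu b hbv) hab
          · left
            by_contra hbu
            exact (hNv b hbu) hab
        obtain ⟨p⟩ := hconn.preconnected u x
        have := walk_stays hclosed p (Set.mem_insert u {v})
        simpa using this
      rw [b_two he hall]
      norm_num

lemma bI_nonneg [Fintype V] (G : SimpleGraph V) (hconn : G.Connected)
    (hedge : G.edgeSet.Nonempty) : 0 ≤ bI G :=
  bI_nonneg_aux _ _ G rfl hconn hedge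

end LemmaA

section TwoConn

/-- Our working notion of 2-connectivity. -/
def TC (G : SimpleGraph V) : Prop :=
  3 ≤ Nat.card V ∧ ∀ w x y : V, x ≠ w → y ≠ w → ReachIn G {w}ᶜ x y

lemma exists_third [Fintype V] (h : 3 ≤ Nat.card V) (x y : V) : ∃ w, w ≠ x ∧ w ≠ y := by
  classical
  by_contra hc
  push_neg at hc
  have hsub : (Finset.univ : Finset V) ⊆ {x, y} := by
    intro z _
    by_cases hz : z = x
    · simp [hz]
    · simp [hc z hz]
  have h1 := Finset.card_le_card hsub
  have h2 : ({x, y} : Finset V).card ≤ 2 := (Finset.card_insert_le _ _).trans (by simp)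
  rw [Nat.card_eq_fintype_card] at h
  rw [Finset.card_univ] at h1
  omega

lemma TC.connected [Fintype V] (h : TC G) : G.Connected := by
  rw [SimpleGraph.connected_iff]
  constructor
  · intro x y
    obtain ⟨w, hwx, hwy⟩ := exists_third h.1 x y
    exact ((h.2 w x y) (Ne.symm hwx) (Ne.symm hwy)).reachable
  · have h3 := h.1
    have : 0 < Nat.card V := by omega
    rw [Nat.card_eq_fintype_card] at this
    exact Fintype.card_pos_iff.1 this

lemma exists_other_neighbor [Fintype V] (hTC : TC G) (huv : G.Adj u v) :
    ∃ y, y ≠ v ∧ G.Adj u y := by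
  by_contra hc
  push_neg at hc
  obtain ⟨w, hwu, hwv⟩ := exists_third hTC.1 u v
  obtain ⟨p, hp⟩ := hTC.2 v u w huv.ne hwv
  cases p with
  | nil => exact hwu rfl
  | @cons _ c _ h q =>
    have hcv : c ≠ v := by
      have : c ∈ (SimpleGraph.Walk.cons h q).support := by
        rw [SimpleGraph.Walk.support_cons]
        exact List.mem_cons_of_mem _ q.start_mem_support
      exact hp _ this
    exact hc c hcv h

lemma del_edge_connected [Fintype V] (hTC : TC G) (huv : G.Adj u v) :
    (G.deleteEdges {s(u, v)}).Connected := by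
  obtain ⟨yu, hyuv, huyu⟩ := exists_other_neighbor hTC huv
  have hkey : ∀ x : V, (G.deleteEdges {s(u, v)}).Reachable x u := by
    intro x
    rcases Classical.em (x = u) with rfl | hxu
    · exact SimpleGraph.Reachable.refl _
    · have h1 : ReachIn G {u}ᶜ x yu := hTC.2 u x yu hxu huyu.ne'
      have h2 : ReachIn (G.deleteEdges {s(u, v)}) {u}ᶜ x yu :=
        h1.deleteEdges (Or.inl (by simp))
      refine h2.reachable.trans (SimpleGraph.Adj.reachable ?_)
      rw [SimpleGraph.deleteEdges_adj]
      refine ⟨huyu.symm, not_mem_edge huyu.symm ?_⟩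
      rintro (⟨hyu2, -⟩ | ⟨hyv, -⟩)
      · exact huyu.ne' hyu2
      · exact hyuv hyv
  rw [SimpleGraph.connected_iff]
  exact ⟨fun x y => (hkey x).trans (hkey y).symm, ⟨u⟩⟩

lemma first_arrival {a t s : V} (p : G.Walk a t) (hav : ∀ z ∈ p.support, z ≠ s)
    (hat : a ≠ t) : ∃ y, G.Adj y t ∧ ReachIn G ({t}ᶜ ∩ {s}ᶜ) a y := by
  induction p with
  | nil => exact absurd rfl hat
  | @cons a c t h q ih =>
    have has : a ≠ s := hav _ (SimpleGraph.Walk.start_mem_support _)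
    have hmem : ∀ z ∈ q.support, z ≠ s := fun z hz =>
      hav _ (by rw [SimpleGraph.Walk.support_cons]; exact List.mem_cons_of_mem _ hz)
    rcases Classical.em (c = t) with rfl | hct
    · exact ⟨a, h, ReachIn.refl ⟨hat, has⟩⟩
    · obtain ⟨y, hy, hry⟩ := ih hmem hct
      exact ⟨y, hy, ReachIn.cons h ⟨hat, has⟩ hry⟩

/-- From a vertex outside `{u,v}`, reach a neighbour of `t ∈ {u,v}` while
avoiding both `u` and `v`. -/
lemma nbr_toward [Fintype V] (hTC : TC G) {x0 t s : V} (hts : t ≠ s)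
    (hx0t : x0 ≠ t) (hx0s : x0 ≠ s) :
    ∃ y, G.Adj y t ∧ ReachIn G ({t}ᶜ ∩ {s}ᶜ) x0 y := by
  obtain ⟨p, hp⟩ := hTC.2 s x0 t hx0s hts
  exact first_arrival p hp hx0t

lemma uv_conn [Fintype V] (hTC : TC G) (huv : G.Adj u v) {x0 w : V}
    (hx0u : x0 ≠ u) (hx0v : x0 ≠ v)
    (hw : ¬ ReachIn G ({u}ᶜ ∩ {v}ᶜ) x0 w) (hwu : w ≠ u) (hwv : w ≠ v) :
    ReachIn (G.deleteEdges {s(u, v)}) {w}ᶜ u v := by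
  set A : Set V := {u}ᶜ ∩ {v}ᶜ with hA
  obtain ⟨ya, hya, hrya⟩ := nbr_toward hTC huv.ne hx0u hx0v
  obtain ⟨yb, hyb, hryb⟩ := nbr_toward hTC huv.ne' hx0v hx0u
  have hryb' : ReachIn G A x0 yb := by
    refine hryb.mono ?_
    intro z hz
    exact ⟨hz.2, hz.1⟩
  have r1 : ReachIn G A ya yb := hrya.symm.trans hryb'
  have r2 := r1.strengthen
  have r3 : ReachIn G (A ∩ {w}ᶜ) ya yb := by
    refine r2.mono ?_
    rintro z ⟨hzA, hzr⟩
    refine ⟨hzA, ?_⟩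
    intro hzw
    subst hzw
    exact hw (hrya.trans hzr)
  have r4 : ReachIn (G.deleteEdges {s(u, v)}) (A ∩ {w}ᶜ) ya yb :=
    r3.deleteEdges (Or.inl (fun h => h.1.1 rfl))
  have r5 : ReachIn (G.deleteEdges {s(u, v)}) {w}ᶜ ya yb := r4.mono (fun z hz => hz.2)
  have hadj_uya : (G.deleteEdges {s(u, v)}).Adj u ya := by
    rw [SimpleGraph.deleteEdges_adj]
    refine ⟨hya.symm, not_mem_edge hya.symm ?_⟩
    rintro (⟨-, hx⟩ | ⟨hy, -⟩)
    · exact hrya.end_mem.2 hx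
    · exact huv.ne hy
  have hadj_ybv : (G.deleteEdges {s(u, v)}).Adj yb v := by
    rw [SimpleGraph.deleteEdges_adj]
    refine ⟨hyb, not_mem_edge hyb ?_⟩
    rintro (⟨hy, -⟩ | ⟨-, hy⟩)
    · exact hryb.end_mem.2 hy
    · exact huv.ne hy.symm
  refine ReachIn.cons hadj_uya (by simpa using Ne.symm hwu) ?_
  refine r5.trans (ReachIn.single hadj_ybv ?_ (by simpa using Ne.symm hwv))
  exact r5.end_mem

lemma replace_e (hc : ReachIn (G.deleteEdges {s(u, v)}) {w}ᶜ u v)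
    {x y : V} (p : G.Walk x y) (hp : ∀ z ∈ p.support, z ∈ ({w}ᶜ : Set V)) :
    ReachIn (G.deleteEdges {s(u, v)}) {w}ᶜ x y := by
  induction p with
  | nil => exact ReachIn.refl (hp _ (SimpleGraph.Walk.start_mem_support _))
  | @cons a c y h q ih =>
    have ha : a ∈ ({w}ᶜ : Set V) := hp _ (SimpleGraph.Walk.start_mem_support _)
    have hmem : ∀ z ∈ q.support, z ∈ ({w}ᶜ : Set V) := fun z hz =>
      hp _ (by rw [SimpleGraph.Walk.support_cons]; exact List.mem_cons_of_mem _ hz)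
    refine ReachIn.trans ?_ (ih hmem)
    by_cases he : (a = u ∧ c = v) ∨ (a = v ∧ c = u)
    · rcases he with ⟨rfl, rfl⟩ | ⟨rfl, rfl⟩
      · exact hc
      · exact hc.symm
    · refine ReachIn.single ?_ ha (hmem _ q.start_mem_support)
      rw [SimpleGraph.deleteEdges_adj]
      exact ⟨h, not_mem_edge h he⟩

end TwoConn

section DL

lemma TC_del_of_not_TC_contract [Fintype V] (hTC : TC G) (huv : G.Adj u v)
    (hcard4 : 4 ≤ Nat.card V) (hnc : ¬ TC (contract G u v)) :
    TC (G.deleteEdges {s(u, v)}) := by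
  classical
  have hccard : 3 ≤ Nat.card {x : V // x ≠ v} := by
    have := card_succ (V := V) v
    omega
  rw [TC] at hnc
  push_neg at hnc
  obtain ⟨wb, xb, yb, hxb, hyb, hnr⟩ := hnc hccard
  by_cases hwb : wb = ⟨u, huv.ne⟩
  · -- deleting the merged vertex disconnects G - {u, v}
    subst hwb
    have hau : xb.1 ≠ u := fun h => hxb (Subtype.ext h)
    have hbu : yb.1 ≠ u := fun h => hyb (Subtype.ext h)
    have hav : xb.1 ≠ v := xb.2
    have hbv : yb.1 ≠ v := yb.2
    have hab : ¬ ReachIn G ({u}ᶜ ∩ {v}ᶜ) xb.1 yb.1 := by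
      rintro ⟨p, hp⟩
      apply hnr
      have := reachIn_contract huv {(⟨u, huv.ne⟩ : {x : V // x ≠ v})}ᶜ p (by
        intro z hz
        have hzu : z ≠ u := fun h => (hp z hz).1 h
        have hzv : z ≠ v := fun h => (hp z hz).2 h
        rw [cproj_of_ne huv.ne hzv]
        simp only [Set.mem_compl_iff, Set.mem_singleton_iff]
        exact fun h => hzu (congrArg Subtype.val h))
      rwa [cproj_val huv.ne xb, cproj_val huv.ne yb] at this
    refine ⟨hTC.1, ?_⟩
    intro w x y hxw hyw
    by_cases hwu : w = u
    · refine (hTC.2 w x y hxw hyw).deleteEdges (Or.inl ?_)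
      simp only [Set.mem_compl_iff, Set.mem_singleton_iff, not_not]
      exact hwu.symm
    by_cases hwv : w = v
    · refine (hTC.2 w x y hxw hyw).deleteEdges (Or.inr ?_)
      simp only [Set.mem_compl_iff, Set.mem_singleton_iff, not_not]
      exact hwv.symm
    have hcuv : ReachIn (G.deleteEdges {s(u, v)}) {w}ᶜ u v := by
      by_cases hwa : ReachIn G ({u}ᶜ ∩ {v}ᶜ) xb.1 w
      · refine uv_conn hTC huv hbu hbv ?_ hwu hwv
        intro hwb2
        exact hab (hwa.trans hwb2.symm)
      · exact uv_conn hTC huv hau hav hwa hwu hwv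
    obtain ⟨p, hp⟩ := hTC.2 w x y hxw hyw
    exact replace_e hcuv p hp
  · -- deleting another vertex of the contraction cannot disconnect it
    exfalso
    apply hnr
    have hx : xb.1 ≠ wb.1 := fun h => hxb (Subtype.ext h)
    have hy : yb.1 ≠ wb.1 := fun h => hyb (Subtype.ext h)
    obtain ⟨p, hp⟩ := hTC.2 wb.1 xb.1 yb.1 hx hy
    have := reachIn_contract huv {wb}ᶜ p (by
      intro z hz
      have hzw : z ≠ wb.1 := hp z hz
      simp only [Set.mem_compl_iff, Set.mem_singleton_iff]
      by_cases hzv : z = v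
      · subst hzv
        rw [cproj_v huv.ne]
        exact fun h => hwb h.symm
      · rw [cproj_of_ne huv.ne hzv]
        exact fun h => hzw (congrArg Subtype.val h))
    rwa [cproj_val huv.ne xb, cproj_val huv.ne yb] at this

end DL

section LemmaB

lemma nontrivial_of_two_le_card {W : Type} [Fintype W] (h : 2 ≤ Nat.card W) :
    Nontrivial W := by
  rw [← Finite.one_lt_card_iff_nontrivial]
  omega

lemma edge_of_connected_two_le {W : Type} [Fintype W] {H : SimpleGraph W} (hconn : H.Connected)
    (h2 : 2 ≤ Nat.card W) : H.edgeSet.Nonempty := by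
  have := nontrivial_of_two_le_card h2
  obtain ⟨a, b, hab⟩ := this
  exact exists_edge_of_reachable (hconn.preconnected a b) hab

lemma four_distinct_le_card [Fintype V] {x y t s : V} (hxy : x ≠ y) (htx : t ≠ x)
    (hty : t ≠ y) (hsx : s ≠ x) (hsy : s ≠ y) (hst : s ≠ t) : 4 ≤ Nat.card V := by
  classical
  have hsub : ({x, y, t, s} : Finset V) ⊆ Finset.univ := Finset.subset_univ _
  have hcard : ({x, y, t, s} : Finset V).card = 4 := by
    rw [Finset.card_insert_of_notMem (by simp [hxy, htx.symm, hsx.symm]),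
      Finset.card_insert_of_notMem (by simp [hty.symm, hsy.symm]),
      Finset.card_insert_of_notMem (by simp [hst.symm]), Finset.card_singleton]
  have hle := Finset.card_le_card hsub
  rw [Finset.card_univ] at hle
  rw [Nat.card_eq_fintype_card]
  omega

lemma three_cases [Fintype V] (h3 : Nat.card V = 3) {x y t : V} (hxy : x ≠ y)
    (htx : t ≠ x) (hty : t ≠ y) : ∀ s : V, s = x ∨ s = y ∨ s = t := by
  intro s
  by_contra hc
  push_neg at hc
  obtain ⟨h1, h2, h3'⟩ := hc
  have := four_distinct_le_card hxy htx hty h1 h2 h3'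
  omega

lemma adj_of_TC_three [Fintype V] (hTC : TC G) (h3 : Nat.card V = 3) :
    ∀ x y : V, x ≠ y → G.Adj x y := by
  intro x y hxy
  obtain ⟨t, htx, hty⟩ := exists_third hTC.1 x y
  obtain ⟨p, hp⟩ := hTC.2 t x y (Ne.symm htx) (Ne.symm hty)
  cases p with
  | nil => exact absurd rfl hxy
  | @cons _ c _ h q =>
    have hct : c ≠ t := hp _ (by
      rw [SimpleGraph.Walk.support_cons]
      exact List.mem_cons_of_mem _ q.start_mem_support)
    rcases three_cases h3 hxy htx hty c with rfl | rfl | rfl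
    · exact absurd rfl h.ne
    · exact h
    · exact absurd rfl hct

lemma bI_pos_three [Fintype V] (hTC : TC G) (h3 : Nat.card V = 3) : bI G = 1 := by
  classical
  have hnt : Nontrivial V := nontrivial_of_two_le_card (by omega)
  obtain ⟨u, v, huv_ne⟩ := hnt
  obtain ⟨z, hzu, hzv⟩ := exists_third hTC.1 u v
  have hadj := adj_of_TC_three hTC h3
  have huv : G.Adj u v := hadj u v huv_ne
  have hall3 := three_cases h3 huv_ne hzu hzv
  set Gd := G.deleteEdges {s(u, v)} with hGd
  have hGd_zv : Gd.Adj z v := by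
    rw [hGd, SimpleGraph.deleteEdges_adj]
    refine ⟨hadj z v hzv, not_mem_edge (hadj z v hzv) ?_⟩
    rintro (⟨hz, -⟩ | ⟨hz, -⟩)
    · exact hzu hz
    · exact hzv hz
  have hGd_zu : Gd.Adj z u := by
    rw [hGd, SimpleGraph.deleteEdges_adj]
    refine ⟨hadj z u hzu, not_mem_edge (hadj z u hzu) ?_⟩
    rintro (⟨hz, -⟩ | ⟨hz, -⟩)
    · exact hzu hz
    · exact hzv hz
  have hpend : ∀ w, Gd.Adj v w → w = z := by
    intro w hw
    rw [hGd, SimpleGraph.deleteEdges_adj] at hw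
    obtain ⟨hvw, hne⟩ := hw
    rcases hall3 w with ht | ht | ht
    · exfalso
      apply hne
      rw [ht, Sym2.eq_swap]
      rfl
    · exact absurd ht.symm hvw.ne
    · exact ht
  have hb1 : bI Gd = 0 :=
    b_pendant hGd_zv hpend ⟨u, huv_ne, hGd_zu⟩
  have hcadj : (contract G u v).Adj ⟨u, huv.ne⟩ ⟨z, hzv⟩ :=
    ⟨fun h => hzu (congrArg Subtype.val h).symm, Or.inl (hadj u z (Ne.symm hzu))⟩
  have hcall : ∀ t : {x : V // x ≠ v}, t = ⟨u, huv.ne⟩ ∨ t = ⟨z, hzv⟩ := by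
    intro t
    rcases hall3 t.1 with ht | ht | ht
    · exact Or.inl (Subtype.ext ht)
    · exact absurd ht t.2
    · exact Or.inr (Subtype.ext ht)
  have hb2 : bI (contract G u v) = 1 := b_two hcadj hcall
  rw [b_rec huv, ← hGd, hb1, hb2]
  norm_num

lemma bI_pos_aux : ∀ (m : ℕ) (V : Type) [Fintype V] (G : SimpleGraph V),
    G.edgeSet.ncard = m → TC G → 0 < bI G := by
  intro m
  induction m using Nat.strong_induction_on with
  | _ m ih =>
  intro V _ G hm hTC
  classical
  have hconn := hTC.connected
  have hnt : Nontrivial V := nontrivial_of_two_le_card (by have := hTC.1; omega)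
  obtain ⟨x, y, hxy⟩ := hnt
  obtain ⟨e, he⟩ := exists_edge_of_reachable (hconn.preconnected x y) hxy
  induction e with
  | h u v =>
  rw [SimpleGraph.mem_edgeSet] at he
  by_cases h3 : Nat.card V = 3
  · rw [bI_pos_three hTC h3]
    norm_num
  · have h4 : 4 ≤ Nat.card V := by have := hTC.1; omega
    by_cases hTCc : TC (contract G u v)
    · have hpos := ih _ (hm ▸ ncard_contract_lt he) _ (contract G u v) rfl hTCc
      have hge : 0 ≤ bI (G.deleteEdges {s(u, v)}) := by
        refine bI_nonneg _ (del_edge_connected hTC he) ?_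
        exact exists_edge_of_reachable
          ((del_edge_connected hTC he).preconnected x y) hxy
      rw [b_rec he]
      linarith
    · have hTCd := TC_del_of_not_TC_contract hTC he h4 hTCc
      have hpos := ih _ (hm ▸ ncard_del_lt he) _ (G.deleteEdges {s(u, v)}) rfl hTCd
      have hge : 0 ≤ bI (contract G u v) := by
        refine bI_nonneg _ (contract_connected hconn he) ?_
        refine edge_of_connected_two_le (contract_connected hconn he) ?_
        have := card_succ (V := V) v
        omega
      rw [b_rec he]
      linarith

lemma bI_pos [Fintype V] (G : SimpleGraph V) (hTC : TC G) : 0 < bI G :=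
  bI_pos_aux _ _ G rfl hTC

end LemmaB

section Final

lemma TC_of_twoConnected [Fintype V] (h2 : G.TwoConnected) : TC G := by
  refine ⟨h2.1, ?_⟩
  intro w x y hxw hyw
  have hU : Nat.card ↥({w} : Set V) < 2 := by
    have h1 : Nat.card ↥({w} : Set V) = 1 := by
      rw [Nat.card_eq_one_iff_unique]
      exact ⟨⟨fun a b => Subtype.ext (a.2.trans b.2.symm)⟩, ⟨⟨w, rfl⟩⟩⟩
    omega
  have hc := h2.2 {w} hU
  have hx : x ∈ ((⊤ : G.Subgraph).deleteVerts {w}).verts := ⟨Set.mem_univ x, hxw⟩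
  have hy : y ∈ ((⊤ : G.Subgraph).deleteVerts {w}).verts := ⟨Set.mem_univ y, hyw⟩
  obtain ⟨pc⟩ := hc.preconnected ⟨x, hx⟩ ⟨y, hy⟩
  refine ⟨pc.map (SimpleGraph.Subgraph.hom _), ?_⟩
  intro z hz
  replace hz : z ∈ pc.support.map (SimpleGraph.Subgraph.hom _) := by
    rw [← SimpleGraph.Walk.support_map]; exact hz
  obtain ⟨z', hz', rfl⟩ := List.mem_map.1 hz
  exact z'.2.2

lemma fin2_eq {a b c : Fin 2} (h1 : a ≠ c) (h2 : b ≠ c) : a = b := by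
  have ha := a.isLt
  have hb := b.isLt
  have hc := c.isLt
  rw [Fin.ext_iff]
  rw [Ne, Fin.ext_iff] at h1 h2
  omega

lemma fin2_succ_ne {a b : Fin 2} (h : a ≠ b) : a + 1 ≠ b + 1 := by
  have ha := a.isLt
  have hb := b.isLt
  rw [Ne, Fin.ext_iff] at h ⊢
  rw [Fin.val_add, Fin.val_add]
  simp only [Fin.val_one]
  omega

lemma fin2_succ_eq {a b : Fin 2} (h : a ≠ b) : a + 1 = b := by
  have ha := a.isLt
  have hb := b.isLt
  rw [Ne, Fin.ext_iff] at h
  rw [Fin.ext_iff, Fin.val_add]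
  simp only [Fin.val_one]
  omega

lemma card_coloring_two [Fintype V] (hconn : G.Connected) (hcol : G.Colorable 2) :
    Nat.card (G.Coloring (Fin 2)) = 2 := by
  classical
  obtain ⟨c⟩ := hcol
  have hv0 : Nonempty V := hconn.nonempty
  obtain ⟨v0⟩ := hv0
  have hdet : ∀ (f g : G.Coloring (Fin 2)) {a b : V} (p : G.Walk a b), f a = g a → f b = g b := by
    intro f g a b p
    induction p with
    | nil => exact id
    | @cons a c' b hadj q ih =>
      intro h
      apply ih
      have h1 : f c' ≠ f a := (f.valid hadj).symm
      have h2 : g c' ≠ f a := by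
        rw [h]
        exact (g.valid hadj).symm
      exact fin2_eq h1 h2
  have hbij : Function.Bijective (fun f : G.Coloring (Fin 2) => f v0) := by
    constructor
    · intro f g h
      refine DFunLike.coe_injective (funext fun x => ?_)
      exact hdet f g (Classical.choice (hconn.preconnected v0 x)) h
    · intro t
      by_cases h : c v0 = t
      · exact ⟨c, h⟩
      · refine ⟨SimpleGraph.Coloring.mk (fun x => c x + 1)
          (fun hadj => fin2_succ_ne (c.valid hadj)), ?_⟩
        exact fin2_succ_eq h
  rw [Nat.card_eq_of_bijective _ hbij]
  simp

end Final

lemma cp_deriv_neg [Fintype V] (hTC : TC G) (hodd : Odd (Nat.card V)) :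
    (cp G).derivative.eval 1 < 0 := by
  have h := bI_pos G hTC
  unfold bI at h
  rw [Odd.neg_one_pow hodd] at h
  linarith

end ChromAux

/-- A 2-connected bipartite graph with an odd number of vertices has a real
chromatic root strictly between 1 and 2. -/
theorem chromatic_root_in_one_two {V : Type} [Fintype V]
    (G : SimpleGraph V) (h2 : G.TwoConnected) (hbip : G.Colorable 2)
    (hodd : Odd (Fintype.card V))
    (P : Polynomial ℝ) (hP : G.IsChromaticPoly P) :
    ∃ x : ℝ, 1 < x ∧ x < 2 ∧ P.eval x = 0 := by
  classical
  have hTC : ChromAux.TC G := ChromAux.TC_of_twoConnected h2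
  have hconn := hTC.connected
  have hP' : P = ChromAux.cp G := ChromAux.icp_unique hP (ChromAux.cp_spec G)
  have h2eval : P.eval 2 = 2 := by
    have h := hP 2 (by norm_num)
    rw [ChromAux.card_coloring_two hconn hbip] at h
    simpa using h
  have hodd' : Odd (Nat.card V) := by rwa [Nat.card_eq_fintype_card]
  have hd : P.derivative.eval 1 < 0 := by
    rw [hP']
    exact ChromAux.cp_deriv_neg hTC hodd'
  have h1eval : P.eval 1 = 0 := by
    obtain ⟨e, he⟩ := ChromAux.edge_of_connected_two_le hconn (by have := hTC.1; omega)
    induction e with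
    | h a b =>
      rw [SimpleGraph.mem_edgeSet] at he
      rw [hP']
      exact ChromAux.cp_eval_one he
  have hslope : Filter.Tendsto (slope (fun x => P.eval x) 1) (nhdsWithin 1 (Set.Ioi 1))
      (nhds (P.derivative.eval 1)) := by
    refine (hasDerivAt_iff_tendsto_slope.1 (P.hasDerivAt 1)).mono_left
      (nhdsWithin_mono 1 ?_)
    intro y hy
    exact Set.mem_compl_singleton_iff.2 (ne_of_gt hy)
  have hev : ∀ᶠ x in nhdsWithin 1 (Set.Ioi 1),
      slope (fun x => P.eval x) 1 x < 0 := hslope.eventually_lt_const hd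
  have hIoo : Set.Ioo (1 : ℝ) 2 ∈ nhdsWithin 1 (Set.Ioi 1) :=
    Ioo_mem_nhdsGT one_lt_two
  obtain ⟨x0, hx0s, hx0I⟩ :=
    (hev.and (Filter.eventually_of_mem hIoo fun x hx => hx)).exists
  have hx01 : (1 : ℝ) < x0 := hx0I.1
  have hPx0 : P.eval x0 < 0 := by
    rw [slope_def_field, h1eval, sub_zero] at hx0s
    have hpos : (0 : ℝ) < x0 - 1 := by linarith
    by_contra hge
    push_neg at hge
    have := div_nonneg hge (le_of_lt hpos)
    linarith
  have hsub : Set.Ioo (P.eval x0) (P.eval 2) ⊆ (fun x => P.eval x) '' Set.Ioo x0 2 :=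
    intermediate_value_Ioo (le_of_lt hx0I.2) P.continuous.continuousOn
  have h0mem : (0 : ℝ) ∈ Set.Ioo (P.eval x0) (P.eval 2) := ⟨hPx0, by rw [h2eval]; norm_num⟩
  obtain ⟨x, hx, hPx⟩ := hsub h0mem
  exact ⟨x, lt_trans hx01 hx.1, hx.2, hPx⟩
end

section
/- For any finite graph G and positive integers t0 ≤ t, if G has a nowhere-zero Z_{t0}-flow then G has a nowhere-zero Z_t-flow; in particular if F(G,t0) ≠ 0 for some positive integer t0, then F(G,t) ≠ 0 for all integers t ≥ t0. -/
open Polynomial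

namespace FlowProofAux

variable {G : Multigraph} {t0 : ℕ}

/-- The excess (outflow minus inflow) of an integer-valued edge function at a vertex. -/
def exc (G : Multigraph) (g : G.E → ℤ) (v : G.V) : ℤ :=
  (∑ e : G.E, if G.src e = v then g e else 0) - ∑ e : G.E, if G.tgt e = v then g e else 0

/-- `g` has nonzero values of absolute value less than `t0`, and all excesses
are divisible by `t0`. -/
def Good (G : Multigraph) (t0 : ℕ) (g : G.E → ℤ) : Prop :=
  (∀ e, g e ≠ 0 ∧ g e < (t0 : ℤ) ∧ -(t0 : ℤ) < g e) ∧ ∀ v, (t0 : ℤ) ∣ exc G g v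

/-- Total absolute excess. -/
noncomputable def Kz (G : Multigraph) (g : G.E → ℤ) : ℤ := ∑ v : G.V, |exc G g v|

lemma Kz_nonneg (g : G.E → ℤ) : 0 ≤ Kz G g :=
  Finset.sum_nonneg fun v _ => abs_nonneg _

/-- One can push flow from `a` to `c` along the edge `e`. -/
def StepVia (G : Multigraph) (g : G.E → ℤ) (e : G.E) (a c : G.V) : Prop :=
  (0 < g e ∧ G.src e = a ∧ G.tgt e = c) ∨ (g e < 0 ∧ G.src e = c ∧ G.tgt e = a)

inductive Chain (G : Multigraph) (g : G.E → ℤ) : G.V → G.V → List G.E → Prop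
  | nil (a : G.V) : Chain G g a a []
  | cons {a c b : G.V} {e : G.E} {l : List G.E} :
      StepVia G g e a c → Chain G g c b l → Chain G g a b (e :: l)

/-- Push `t0` units of flow along edge `e`. -/
def flip (G : Multigraph) (t0 : ℕ) (g : G.E → ℤ) (e : G.E) : G.E → ℤ :=
  Function.update g e (if 0 < g e then g e - (t0 : ℤ) else g e + (t0 : ℤ))

lemma sum_ite_update (g : G.E → ℤ) (e : G.E) (x : ℤ) (s : G.E → G.V) (v : G.V) :
    (∑ e' : G.E, if s e' = v then Function.update g e x e' else 0) =
      (∑ e' : G.E, if s e' = v then g e' else 0) + (if s e = v then x - g e else 0) := by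
  classical
  rw [← Finset.add_sum_erase _ _ (Finset.mem_univ e),
      ← Finset.add_sum_erase _ (fun e' => if s e' = v then g e' else 0) (Finset.mem_univ e)]
  have h1 : ∀ e' ∈ Finset.univ.erase e,
      (if s e' = v then Function.update g e x e' else 0) = (if s e' = v then g e' else 0) := by
    intro e' he'
    rw [Function.update_of_ne (Finset.ne_of_mem_erase he')]
  rw [Finset.sum_congr rfl h1, Function.update_self]
  by_cases hv : s e = v <;> simp [hv] <;> ring

lemma exc_flip {g : G.E → ℤ} {a c : G.V} {e : G.E} (h : StepVia G g e a c) (v : G.V) :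
    exc G (flip G t0 g e) v =
      exc G g v - (if a = v then (t0 : ℤ) else 0) + (if c = v then (t0 : ℤ) else 0) := by
  unfold exc flip
  rw [sum_ite_update, sum_ite_update]
  rcases h with ⟨hg, hs, ht⟩ | ⟨hg, hs, ht⟩
  · rw [if_pos hg]
    subst hs; subst ht
    split_ifs <;> omega
  · rw [if_neg (by omega : ¬ (0 : ℤ) < g e)]
    subst hs; subst ht
    split_ifs <;> omega

lemma Good_flip (ht0 : 0 < t0) {g : G.E → ℤ} {a c : G.V} {e : G.E}
    (hG : Good G t0 g) (h : StepVia G g e a c) : Good G t0 (flip G t0 g e) := by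
  constructor
  · intro e'
    by_cases he : e' = e
    · subst he
      obtain ⟨h1, h2, h3⟩ := hG.1 e'
      unfold flip
      rw [Function.update_self]
      split_ifs <;> omega
    · unfold flip
      rw [Function.update_of_ne he]
      exact hG.1 e'
  · intro v
    rw [exc_flip h]
    have hd := hG.2 v
    have h1 : (t0 : ℤ) ∣ (if a = v then (t0 : ℤ) else 0) := by
      split_ifs; exacts [dvd_refl _, dvd_zero _]
    have h2 : (t0 : ℤ) ∣ (if c = v then (t0 : ℤ) else 0) := by
      split_ifs; exacts [dvd_refl _, dvd_zero _]
    exact dvd_add (dvd_sub hd h1) h2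

lemma Kz_flip {g : G.E → ℤ} {a c : G.V} {e : G.E} (h : StepVia G g e a c) (hac : a ≠ c) :
    Kz G (flip G t0 g e) =
      Kz G g + (|exc G g a - (t0 : ℤ)| - |exc G g a|) + (|exc G g c + (t0 : ℤ)| - |exc G g c|) := by
  classical
  unfold Kz
  have hmem : c ∈ Finset.univ.erase a := Finset.mem_erase.mpr ⟨Ne.symm hac, Finset.mem_univ c⟩
  rw [← Finset.add_sum_erase _ (fun v => |exc G (flip G t0 g e) v|) (Finset.mem_univ a),
      ← Finset.add_sum_erase _ (fun v => |exc G (flip G t0 g e) v|) hmem,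
      ← Finset.add_sum_erase _ (fun v => |exc G g v|) (Finset.mem_univ a),
      ← Finset.add_sum_erase _ (fun v => |exc G g v|) hmem]
  have h1 : exc G (flip G t0 g e) a = exc G g a - (t0 : ℤ) := by
    rw [exc_flip h]
    rw [if_pos rfl, if_neg (Ne.symm hac)]
    ring
  have h2 : exc G (flip G t0 g e) c = exc G g c + (t0 : ℤ) := by
    rw [exc_flip h]
    rw [if_neg hac, if_pos rfl]
    ring
  have h3 : ∀ v ∈ (Finset.univ.erase a).erase c,
      |exc G (flip G t0 g e) v| = |exc G g v| := by
    intro v hv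
    have hvc : v ≠ c := (Finset.mem_erase.mp hv).1
    have hva : v ≠ a := (Finset.mem_erase.mp (Finset.mem_erase.mp hv).2).1
    rw [exc_flip h, if_neg (fun hh => hva hh.symm), if_neg (fun hh => hvc hh.symm)]
    ring_nf
  rw [Finset.sum_congr rfl h3, h1, h2]
  ring

lemma chain_congr {g g' : G.E → ℤ} :
    ∀ {a b : G.V} {l : List G.E}, Chain G g a b l → (∀ e ∈ l, g' e = g e) →
      Chain G g' a b l := by
  intro a b l hC
  induction hC with
  | nil a => intro _; exact Chain.nil a
  | cons step rest ih =>
    intro hagree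
    refine Chain.cons ?_ (ih fun e' he' => hagree e' (List.mem_cons_of_mem _ he'))
    have heq := hagree _ List.mem_cons_self
    unfold StepVia at step ⊢
    rw [heq]
    exact step

lemma chain_snoc {g : G.E → ℤ} {e : G.E} {x y : G.V} :
    ∀ {a : G.V} {l : List G.E}, Chain G g a x l → StepVia G g e x y →
      Chain G g a y (l ++ [e]) := by
  intro a l hC
  induction hC with
  | nil a => intro hs; exact Chain.cons hs (Chain.nil y)
  | cons step rest ih => intro hs; exact Chain.cons step (ih hs)

lemma step_det {g : G.E → ℤ} {e : G.E} {a c x y : G.V}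
    (h1 : StepVia G g e a c) (h2 : StepVia G g e x y) : c = y := by
  rcases h1 with ⟨p1, p2, p3⟩ | ⟨p1, p2, p3⟩ <;>
    rcases h2 with ⟨q1, q2, q3⟩ | ⟨q1, q2, q3⟩ <;>
    first
      | (exact p3.symm.trans q3)
      | (exact p2.symm.trans q2)
      | omega

lemma chain_shortcut {g : G.E → ℤ} {e : G.E} {a c : G.V} :
    ∀ {x b : G.V} {l : List G.E}, Chain G g x b l → e ∈ l → StepVia G g e a c →
      ∃ l', Chain G g c b l' ∧ l'.length < l.length := by
  intro x b l hC
  induction hC with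
  | nil a => intro hmem; simp at hmem
  | @cons x' c' b' e' l2 step rest ih =>
    intro hmem hstep
    by_cases he : e' = e
    · subst he
      have hcy : c = c' := step_det hstep step
      exact ⟨l2, hcy ▸ rest, by simp⟩
    · obtain ⟨l', hl1, hl2⟩ := ih (by
        rcases List.mem_cons.mp hmem with h | h
        · exact absurd h.symm he
        · exact h) hstep
      exact ⟨l', hl1, by simp; omega⟩

lemma sum_exc (g : G.E → ℤ) : ∑ v : G.V, exc G g v = 0 := by
  unfold exc
  rw [Finset.sum_sub_distrib]
  have h1 : ∑ v : G.V, ∑ e : G.E, (if G.src e = v then g e else 0)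
      = ∑ e : G.E, ∑ v : G.V, (if G.src e = v then g e else 0) := Finset.sum_comm
  have h2 : ∑ v : G.V, ∑ e : G.E, (if G.tgt e = v then g e else 0)
      = ∑ e : G.E, ∑ v : G.V, (if G.tgt e = v then g e else 0) := Finset.sum_comm
  rw [h1, h2]
  simp [Finset.sum_ite_eq]

lemma exists_neg_reachable {g : G.E → ℤ} (hG : Good G t0 g) (u : G.V)
    (hu : 0 < exc G g u) : ∃ w l, Chain G g u w l ∧ exc G g w < 0 := by
  classical
  by_contra hcon
  push_neg at hcon
  set R : Finset G.V := Finset.univ.filter (fun v => ∃ l, Chain G g u v l) with hR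
  have huR : u ∈ R := by
    simp only [hR, Finset.mem_filter, Finset.mem_univ, true_and]
    exact ⟨[], Chain.nil u⟩
  have hclosed : ∀ e : G.E, G.src e ∈ R → 0 < g e → G.tgt e ∈ R := by
    intro e hs hpos
    simp only [hR, Finset.mem_filter, Finset.mem_univ, true_and] at hs ⊢
    obtain ⟨l, hl⟩ := hs
    exact ⟨l ++ [e], chain_snoc hl (Or.inl ⟨hpos, rfl, rfl⟩)⟩
  have hclosed' : ∀ e : G.E, G.tgt e ∈ R → g e < 0 → G.src e ∈ R := by
    intro e hs hneg
    simp only [hR, Finset.mem_filter, Finset.mem_univ, true_and] at hs ⊢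
    obtain ⟨l, hl⟩ := hs
    exact ⟨l ++ [e], chain_snoc hl (Or.inr ⟨hneg, rfl, rfl⟩)⟩
  have hsum : ∑ v ∈ R, exc G g v =
      ∑ e : G.E, ((if G.src e ∈ R then g e else 0) - (if G.tgt e ∈ R then g e else 0)) := by
    unfold exc
    rw [Finset.sum_sub_distrib, Finset.sum_sub_distrib]
    have h1 : ∑ v ∈ R, ∑ e : G.E, (if G.src e = v then g e else 0)
        = ∑ e : G.E, ∑ v ∈ R, (if G.src e = v then g e else 0) := Finset.sum_comm
    have h2 : ∑ v ∈ R, ∑ e : G.E, (if G.tgt e = v then g e else 0)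
        = ∑ e : G.E, ∑ v ∈ R, (if G.tgt e = v then g e else 0) := Finset.sum_comm
    rw [h1, h2]
    congr 1 <;> exact Finset.sum_congr rfl fun e _ => Finset.sum_ite_eq R _ _
  have hle : ∑ v ∈ R, exc G g v ≤ 0 := by
    rw [hsum]
    apply Finset.sum_nonpos
    intro e _
    have hne := (hG.1 e).1
    by_cases hsR : G.src e ∈ R <;> by_cases htR : G.tgt e ∈ R
    · simp [hsR, htR]
    · have : ¬ (0 < g e) := fun hp => htR (hclosed e hsR hp)
      simp only [hsR, htR, if_pos, if_neg, if_true, if_false]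
      omega
    · have : ¬ (g e < 0) := fun hp => hsR (hclosed' e htR hp)
      simp only [hsR, htR, if_neg, if_pos, if_true, if_false]
      omega
    · simp [hsR, htR]
  have hpos : 0 < ∑ v ∈ R, exc G g v := by
    apply Finset.sum_pos'
    · intro v hv
      simp only [hR, Finset.mem_filter, Finset.mem_univ, true_and] at hv
      obtain ⟨l, hl⟩ := hv
      have := hcon v l hl
      omega
    · exact ⟨u, huR, hu⟩
  omega

lemma descend (ht0 : 0 < t0) :
    ∀ (n : ℕ) (g : G.E → ℤ) (a b : G.V) (l : List G.E), Good G t0 g →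
      Chain G g a b l → l.length ≤ n → 0 < exc G g a → exc G g b < 0 →
      ∃ g', Good G t0 g' ∧ Kz G g' < Kz G g := by
  intro n
  induction n with
  | zero =>
    intro g a b l hG hC hlen ha hb
    cases hC with
    | nil _ => omega
    | cons _ _ => simp at hlen
  | succ n IH =>
    intro g a b l hG hC hlen ha hb
    cases hC with
    | nil _ => omega
    | @cons _ c _ e l2 step rest =>
      simp only [List.length_cons] at hlen
      by_cases hac : a = c
      · exact IH g c b l2 hG rest (by omega) (hac ▸ ha) hb
      · by_cases hel : e ∈ l2
        · obtain ⟨l', hl1, hl2⟩ := chain_shortcut rest hel step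
          exact IH g a b (e :: l') hG (Chain.cons step hl1) (by simp; omega) ha hb
        · have hexa : (t0 : ℤ) ≤ exc G g a := Int.le_of_dvd ha (hG.2 a)
          have hKz := Kz_flip (t0 := t0) step hac
          by_cases hc : exc G g c < 0
          · refine ⟨flip G t0 g e, Good_flip ht0 hG step, ?_⟩
            have hdc : (t0 : ℤ) ∣ -exc G g c := dvd_neg.mpr (hG.2 c)
            have hexc : exc G g c ≤ -(t0 : ℤ) := by
              have := Int.le_of_dvd (by omega) hdc
              omega
            rw [abs_of_nonneg (by omega : (0:ℤ) ≤ exc G g a - (t0:ℤ)),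
              abs_of_nonneg (by omega : (0:ℤ) ≤ exc G g a),
              abs_of_nonpos (by omega : exc G g c + (t0:ℤ) ≤ 0),
              abs_of_nonpos (by omega : exc G g c ≤ 0)] at hKz
            omega
          · push_neg at hc
            have h1 : exc G (flip G t0 g e) a = exc G g a - (t0 : ℤ) := by
              rw [exc_flip step, if_pos rfl, if_neg (Ne.symm hac)]; ring
            have h2 : exc G (flip G t0 g e) c = exc G g c + (t0 : ℤ) := by
              rw [exc_flip step, if_neg hac, if_pos rfl]; ring
            have hKeq : Kz G (flip G t0 g e) = Kz G g := by
              rw [hKz,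
                abs_of_nonneg (by omega : (0:ℤ) ≤ exc G g a - (t0:ℤ)),
                abs_of_nonneg (by omega : (0:ℤ) ≤ exc G g a),
                abs_of_nonneg (by omega : (0:ℤ) ≤ exc G g c + (t0:ℤ)),
                abs_of_nonneg hc]
              ring
            have hab : a ≠ b := by intro hh; rw [hh] at ha; omega
            have hcb : c ≠ b := by intro hh; rw [hh] at hc; omega
            have hb1 : exc G (flip G t0 g e) b = exc G g b := by
              rw [exc_flip step, if_neg hab, if_neg hcb]; ring
            have hrest1 : Chain G (flip G t0 g e) c b l2 :=
              chain_congr rest (fun e' he' =>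
                Function.update_of_ne (by rintro rfl; exact hel he') _ _)
            obtain ⟨g', hg', hKlt⟩ := IH (flip G t0 g e) c b l2 (Good_flip ht0 hG step)
              hrest1 (by omega) (by rw [h2]; omega) (by rw [hb1]; exact hb)
            exact ⟨g', hg', by omega⟩

lemma toFlow (ht0 : 0 < t0) :
    ∀ (n : ℕ) (g : G.E → ℤ), Good G t0 g → (Kz G g).toNat ≤ n →
      ∃ g', Good G t0 g' ∧ ∀ v, exc G g' v = 0 := by
  intro n
  induction n with
  | zero =>
    intro g hG hK
    refine ⟨g, hG, fun v => ?_⟩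
    have h1 : 0 ≤ Kz G g := Kz_nonneg g
    have h0 : Kz G g = 0 := by omega
    have := (Finset.sum_eq_zero_iff_of_nonneg
      (fun v _ => abs_nonneg (exc G g v))).mp h0 v (Finset.mem_univ v)
    exact abs_eq_zero.mp this
  | succ n IH =>
    intro g hG hK
    by_cases hall : ∀ v, exc G g v = 0
    · exact ⟨g, hG, hall⟩
    · push_neg at hall
      obtain ⟨v0, hv0⟩ := hall
      have hupos : ∃ u, 0 < exc G g u := by
        by_contra hcon
        push_neg at hcon
        have hs := sum_exc (G := G) g
        have : ∑ v : G.V, exc G g v < ∑ _v : G.V, (0 : ℤ) :=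
          Finset.sum_lt_sum (fun i _ => hcon i) ⟨v0, Finset.mem_univ v0, by
            have := hcon v0; omega⟩
        simp at this
        omega
      obtain ⟨u, hu⟩ := hupos
      obtain ⟨w, l, hCl, hw⟩ := exists_neg_reachable hG u hu
      obtain ⟨g1, hg1, hK1⟩ := descend ht0 l.length g u w l hG hCl le_rfl hu hw
      have h2 : 0 ≤ Kz G g1 := Kz_nonneg g1
      exact IH g1 hg1 (by omega)

lemma cast_exc (g : G.E → ℤ) (n : ℕ) (v : G.V) :
    ((exc G g v : ℤ) : ZMod n) =
      (∑ e : G.E, if G.src e = v then ((g e : ℤ) : ZMod n) else 0) -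
        ∑ e : G.E, if G.tgt e = v then ((g e : ℤ) : ZMod n) else 0 := by
  unfold exc
  push_cast [apply_ite (fun z : ℤ => (z : ZMod n))]
  ring

end FlowProofAux

/-- If `G` has a nowhere-zero `ZMod t₀`-flow and `t₀ ≤ t`, then `G` has a
nowhere-zero `ZMod t`-flow; in particular if `F(G,t₀) ≠ 0` for some positive
integer `t₀` then `F(G,t) ≠ 0` for all integers `t ≥ t₀`. -/
theorem flow_monotone (G : Multigraph) (t₀ t : ℕ) (ht₀ : 0 < t₀) (h : t₀ ≤ t) :
    ((∃ f : G.E → ZMod t₀, G.IsNZFlow f) → ∃ g : G.E → ZMod t, G.IsNZFlow g) ∧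
      (G.numFlows t₀ ≠ 0 → G.numFlows t ≠ 0) := by
  classical
  haveI : NeZero t₀ := ⟨ht₀.ne'⟩
  haveI : NeZero t := ⟨by omega⟩
  have main : (∃ f : G.E → ZMod t₀, G.IsNZFlow f) → ∃ g : G.E → ZMod t, G.IsNZFlow g := by
    rintro ⟨f, hfne, hfcons⟩
    set g0 : G.E → ℤ := fun e => ((f e).val : ℤ) with hg0
    have hGood : FlowProofAux.Good G t₀ g0 := by
      constructor
      · intro e
        have h1 : 0 < (f e).val :=
          Nat.pos_of_ne_zero (fun hh => hfne e ((ZMod.val_eq_zero _).mp hh))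
        have h2 : (f e).val < t₀ := ZMod.val_lt _
        have h3 : g0 e = ((f e).val : ℤ) := rfl
        refine ⟨?_, ?_, ?_⟩ <;> rw [h3] <;> omega
      · intro v
        have hc : ((FlowProofAux.exc G g0 v : ℤ) : ZMod t₀) = 0 := by
          rw [FlowProofAux.cast_exc]
          have he : ∀ e : G.E, ((g0 e : ℤ) : ZMod t₀) = f e := by
            intro e
            simp [hg0, ZMod.natCast_val, ZMod.cast_id]
          simp only [he]
          rw [hfcons v]
          ring
        exact (ZMod.intCast_zmod_eq_zero_iff_dvd _ _).mp hc
    obtain ⟨g', hgood', hflow⟩ :=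
      FlowProofAux.toFlow ht₀ (FlowProofAux.Kz G g0).toNat g0 hGood le_rfl
    refine ⟨fun e => ((g' e : ℤ) : ZMod t), ?_, ?_⟩
    · intro e h0
      have hd : (t : ℤ) ∣ g' e := (ZMod.intCast_zmod_eq_zero_iff_dvd _ _).mp h0
      obtain ⟨h1, h2, h3⟩ := hgood'.1 e
      have hd' : (t : ℤ) ∣ |g' e| := (dvd_abs _ _).mpr hd
      have h4 : (t : ℤ) ≤ |g' e| := Int.le_of_dvd (abs_pos.mpr h1) hd'
      have h5 : |g' e| < (t₀ : ℤ) := abs_lt.mpr ⟨h3, h2⟩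
      have h6 : (t₀ : ℤ) ≤ (t : ℤ) := by exact_mod_cast h
      omega
    · intro v
      have h8 : ((FlowProofAux.exc G g' v : ℤ) : ZMod t) = 0 := by
        rw [hflow v]; simp
      rw [FlowProofAux.cast_exc] at h8
      exact sub_eq_zero.mp h8
  refine ⟨main, fun hne => ?_⟩
  have h1 : Nonempty {f : G.E → ZMod t₀ // G.IsNZFlow f} := (Nat.card_ne_zero.mp hne).1
  obtain ⟨⟨f, hf⟩⟩ := h1
  obtain ⟨g, hg⟩ := main ⟨f, hf⟩
  exact Nat.card_ne_zero.mpr ⟨⟨⟨g, hg⟩⟩, inferInstance⟩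
end

section
/- A finite graph G has a nowhere-zero t-flow (an integer-valued flow f with 0 < |f(e)| ≤ t−1 on every edge) if and only if G has a nowhere-zero Z_t-flow. -/
open Polynomial

namespace TutteAux

open Finset

variable {G : Multigraph}

/-- Net outflow of `f` at `v`. -/
def excess (f : G.E → ℤ) (v : G.V) : ℤ :=
  (∑ e : G.E, if G.src e = v then f e else 0) - ∑ e : G.E, if G.tgt e = v then f e else 0

lemma sum_excess (f : G.E → ℤ) : ∑ v : G.V, excess f v = 0 := by
  unfold excess
  rw [Finset.sum_sub_distrib, Finset.sum_comm, Finset.sum_comm (s := (univ : Finset G.V))]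
  simp [Finset.sum_ite_eq]

lemma excess_single_diff {f f' : G.E → ℤ} {e : G.E} (h : ∀ e', e' ≠ e → f' e' = f e')
    (x : G.V) :
    excess f' x = excess f x +
      ((if G.src e = x then f' e - f e else 0) - (if G.tgt e = x then f' e - f e else 0)) := by
  have key : ∀ p : G.E → G.V,
      (∑ e' : G.E, if p e' = x then f' e' else 0) -
        (∑ e' : G.E, if p e' = x then f e' else 0) = if p e = x then f' e - f e else 0 := by
    intro p
    rw [← Finset.sum_sub_distrib,
      Finset.sum_eq_single e (fun e' _ hne => by simp [h e' hne]) (by simp)]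
    split_ifs <;> simp
  have h1 := key G.src
  have h2 := key G.tgt
  unfold excess
  linarith

/-- Signed choices of integer lift: `true` gives `r e`, `false` gives `r e - t`. -/
def fsig (t : ℕ) (r : G.E → ℤ) (s : G.E → Bool) : G.E → ℤ :=
  fun e => if s e then r e else r e - t

/-- Total absolute excess. -/
def K (t : ℕ) (r : G.E → ℤ) (s : G.E → Bool) : ℤ :=
  ∑ v : G.V, |excess (fsig t r s) v|

/-- Flipping edge `e` can push `t` units of excess from `a` to `b`. -/
def Step (s : G.E → Bool) (e : G.E) (a b : G.V) : Prop :=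
  (s e = true ∧ G.src e = a ∧ G.tgt e = b) ∨ (s e = false ∧ G.src e = b ∧ G.tgt e = a)

inductive Chain (s : G.E → Bool) : G.V → G.V → List G.E → Prop
  | nil (v : G.V) : Chain s v v []
  | cons {a b w : G.V} {e : G.E} {l : List G.E} :
      Step s e a b → Chain s b w l → Chain s a w (e :: l)

lemma step_det {s : G.E → Bool} {e : G.E} {a b a' b' : G.V}
    (h1 : Step s e a b) (h2 : Step s e a' b') : a = a' ∧ b = b' := by
  rcases h1 with ⟨h, rfl, rfl⟩ | ⟨h, rfl, rfl⟩ <;>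
    rcases h2 with ⟨h', rfl, rfl⟩ | ⟨h', rfl, rfl⟩ <;> simp_all

lemma chain_congr {s s' : G.E → Bool} {v w : G.V} {l : List G.E}
    (hc : Chain s v w l) (h : ∀ e ∈ l, s' e = s e) : Chain s' v w l := by
  induction hc with
  | nil v => exact .nil v
  | cons hst hcc ih =>
    refine Chain.cons ?_ (ih fun e he => h e (List.mem_cons_of_mem _ he))
    have hs : s' _ = s _ := h _ List.mem_cons_self
    rcases hst with ⟨h1, h2, h3⟩ | ⟨h1, h2, h3⟩
    · exact Or.inl ⟨hs.trans h1, h2, h3⟩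
    · exact Or.inr ⟨hs.trans h1, h2, h3⟩

lemma chain_snoc {s : G.E → Bool} {v a b : G.V} {e : G.E} {l : List G.E}
    (hc : Chain s v a l) (hst : Step s e a b) : Chain s v b (l ++ [e]) := by
  induction hc with
  | nil v => exact .cons hst (.nil b)
  | cons h hcc ih => exact .cons h (ih hst)

lemma chain_extract {s : G.E → Bool} {a w : G.V} {l : List G.E}
    (hc : Chain s a w l) {e : G.E} (he : e ∈ l) :
    ∃ (c : G.V) (l₂ : List G.E), Chain s c w (e :: l₂) ∧ l₂.length < l.length := by
  induction hc with
  | nil v => simp at he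
  | cons hst hcc ih =>
    rcases List.mem_cons.1 he with rfl | he'
    · exact ⟨_, _, .cons hst hcc, Nat.lt_succ_self _⟩
    · obtain ⟨c, l₂, hc₂, hlen⟩ := ih he'
      exact ⟨c, l₂, hc₂, hlen.trans (Nat.lt_succ_self _)⟩

lemma excess_flip {t : ℕ} {r : G.E → ℤ} {s : G.E → Bool} {e : G.E} {a b : G.V}
    (hst : Step s e a b) (x : G.V) :
    excess (fsig t r (Function.update s e (!s e))) x
      = excess (fsig t r s) x - (if a = x then (t : ℤ) else 0) + (if b = x then (t : ℤ) else 0) := by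
  have hne : ∀ e', e' ≠ e → fsig t r (Function.update s e (!s e)) e' = fsig t r s e' := by
    intro e' h; simp [fsig, Function.update_of_ne h]
  have hdiff := excess_single_diff (f := fsig t r s) hne x
  rcases hst with ⟨h1, h2, h3⟩ | ⟨h1, h2, h3⟩
  · have : fsig t r (Function.update s e (!s e)) e - fsig t r s e = -(t : ℤ) := by
      simp [fsig, h1]
    rw [this] at hdiff
    rw [hdiff, h2, h3]
    split_ifs <;> ring
  · have : fsig t r (Function.update s e (!s e)) e - fsig t r s e = (t : ℤ) := by
      simp [fsig, h1]
    rw [this] at hdiff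
    rw [hdiff, h2, h3]
    split_ifs <;> ring


lemma claimB {t : ℕ} {r : G.E → ℤ} (ht : 2 ≤ t)
    (hdvd : ∀ (s : G.E → Bool) (x : G.V), (t : ℤ) ∣ excess (fsig t r s) x) :
    ∀ n (s : G.E → Bool) (v w : G.V) (l : List G.E), Chain s v w l → l.length ≤ n →
      0 < excess (fsig t r s) v → excess (fsig t r s) w < 0 →
      ∃ s', K t r s' < K t r s := by
  have htpos : (0 : ℤ) < t := by exact_mod_cast Nat.lt_of_lt_of_le Nat.zero_lt_two ht
  intro n
  induction n using Nat.strong_induction_on with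
  | _ n ih =>
    intro s v w l hl hln hv hw
    classical
    have hPex : ∃ m, ∃ l₀ : List G.E, Chain s v w l₀ ∧ l₀.length = m := ⟨l.length, l, hl, rfl⟩
    obtain ⟨l₀, hc₀, hlen₀⟩ := Nat.find_spec hPex
    have hmin : ∀ k < Nat.find hPex, ¬ ∃ l₀ : List G.E, Chain s v w l₀ ∧ l₀.length = k :=
      fun k hk => Nat.find_min hPex hk
    have hmn : Nat.find hPex ≤ n := le_trans (Nat.find_le ⟨l, hl, rfl⟩) hln
    cases hc₀ with
    | nil => exact absurd hv (not_lt.2 hw.le)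
    | @cons _ c _ e l' hst hc' =>
      have hlen' : l'.length + 1 = Nat.find hPex := by simpa using hlen₀
      have hflip := excess_flip (t := t) (r := r) hst
      have hvw : v ≠ w := by rintro rfl; exact absurd hv (not_lt.2 hw.le)
      by_cases hc : excess (fsig t r s) c < 0
      · -- single flip decreases K
        have hvc : v ≠ c := by rintro rfl; exact absurd hv (not_lt.2 hc.le)
        have hKle : ∀ x, |excess (fsig t r (Function.update s e (!s e))) x|
            ≤ |excess (fsig t r s) x| := by
          intro x
          rw [hflip x]
          rcases eq_or_ne v x with rfl | hxv
          · rw [if_pos rfl, if_neg (Ne.symm hvc), add_zero]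
            have h1 : (t : ℤ) ≤ excess (fsig t r s) v := Int.le_of_dvd hv (hdvd s v)
            rw [abs_of_nonneg (by linarith), abs_of_pos hv]
            linarith
          · rcases eq_or_ne c x with rfl | hxc
            · rw [if_neg hxv, if_pos rfl, sub_zero]
              have h1 : excess (fsig t r s) c ≤ -(t : ℤ) := by
                have h2 := Int.le_of_dvd (neg_pos.2 hc) (dvd_neg.2 (hdvd s c))
                linarith
              rw [abs_of_nonpos (by linarith), abs_of_neg hc]
              linarith
            · rw [if_neg hxv, if_neg hxc]; simp
        have hKv : |excess (fsig t r (Function.update s e (!s e))) v|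
            < |excess (fsig t r s) v| := by
          rw [hflip v, if_pos rfl, if_neg (Ne.symm hvc), add_zero]
          have h1 : (t : ℤ) ≤ excess (fsig t r s) v := Int.le_of_dvd hv (hdvd s v)
          rw [abs_of_nonneg (by linarith), abs_of_pos hv]
          linarith
        exact ⟨Function.update s e (!s e),
          Finset.sum_lt_sum (fun x _ => hKle x) ⟨v, Finset.mem_univ v, hKv⟩⟩
      · push_neg at hc
        -- c ≠ v by minimality
        have hvc : v ≠ c := by
          rintro rfl
          exact hmin l'.length (by omega) ⟨l', hc', rfl⟩
        have hwc : w ≠ c := by rintro rfl; exact absurd hc (not_le.2 hw)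
        -- e does not occur in the tail
        have hel : e ∉ l' := by
          intro he
          obtain ⟨c₂, l₂, hc₂, hlen₂⟩ := chain_extract hc' he
          cases hc₂ with
          | @cons _ b₂ _ _ _ hst₂ hc₃ =>
            obtain ⟨h1, h2⟩ := step_det hst₂ hst
            subst h1; subst h2
            exact hmin (l₂.length + 1) (by omega) ⟨e :: l₂, .cons hst hc₃, rfl⟩
        have hc₁ : Chain (Function.update s e (!s e)) c w l' :=
          chain_congr hc' (fun e' he' => Function.update_of_ne (by rintro rfl; exact hel he') _ _)
        have hvpos1 : 0 < excess (fsig t r (Function.update s e (!s e))) c := by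
          rw [hflip c, if_neg hvc, if_pos rfl]; linarith
        have hwneg1 : excess (fsig t r (Function.update s e (!s e))) w < 0 := by
          rw [hflip w, if_neg hvw, if_neg (Ne.symm hwc)]; simpa using hw
        have hK : K t r (Function.update s e (!s e)) = K t r s := by
          unfold K
          have hpt : ∀ x, |excess (fsig t r (Function.update s e (!s e))) x|
              = |excess (fsig t r s) x|
                + ((if v = x then -(t : ℤ) else 0) + (if c = x then (t : ℤ) else 0)) := by
            intro x
            rw [hflip x]
            rcases eq_or_ne v x with rfl | hxv
            · have h1 : (t : ℤ) ≤ excess (fsig t r s) v := Int.le_of_dvd hv (hdvd s v)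
              simp only [eq_self_iff_true, if_true, if_neg (Ne.symm hvc), add_zero]
              rw [abs_of_nonneg (by linarith), abs_of_pos hv]
              ring
            · rcases eq_or_ne c x with rfl | hxc
              · simp only [eq_self_iff_true, if_true, if_neg hxv, sub_zero, zero_add]
                rw [abs_of_nonneg (by linarith), abs_of_nonneg hc]
              · simp [if_neg hxv, if_neg hxc]
          rw [Finset.sum_congr rfl (fun x _ => hpt x), Finset.sum_add_distrib,
            Finset.sum_add_distrib, Finset.sum_ite_eq, Finset.sum_ite_eq]
          simp
        have hlt : l'.length < n := by omega
        obtain ⟨s', hs'⟩ := ih l'.length hlt (Function.update s e (!s e)) c w l'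
          hc₁ le_rfl hvpos1 hwneg1
        exact ⟨s', by rwa [hK] at hs'⟩

lemma exists_conservative {t : ℕ} {r : G.E → ℤ} (ht : 2 ≤ t)
    (hr1 : ∀ e, 1 ≤ r e) (hr2 : ∀ e, r e ≤ (t : ℤ) - 1)
    (hdvd : ∀ (s : G.E → Bool) (x : G.V), (t : ℤ) ∣ excess (fsig t r s) x) :
    ∃ s : G.E → Bool, ∀ x : G.V, excess (fsig t r s) x = 0 := by
  classical
  obtain ⟨s, hsmin⟩ := Finite.exists_min (fun s : G.E → Bool => K t r s)
  refine ⟨s, ?_⟩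
  by_contra hnz
  push_neg at hnz
  obtain ⟨x, hx⟩ := hnz
  have hsum := sum_excess (fsig t r s)
  -- there is a vertex with positive excess
  have hvex : ∃ v : G.V, 0 < excess (fsig t r s) v := by
    by_contra hno
    push_neg at hno
    rcases lt_or_gt_of_ne hx with hneg | hpos
    · have hlt : ∑ v : G.V, excess (fsig t r s) v < ∑ _v : G.V, (0 : ℤ) :=
        Finset.sum_lt_sum (fun i _ => hno i) ⟨x, Finset.mem_univ x, hneg⟩
      simp [hsum] at hlt
    · exact absurd hpos (hno x).not_gt
  obtain ⟨v, hv⟩ := hvex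
  set X : Finset G.V := Finset.univ.filter (fun w => ∃ l, Chain s v w l) with hX
  have hvX : v ∈ X := Finset.mem_filter.2 ⟨Finset.mem_univ v, [], Chain.nil v⟩
  -- some vertex of X has negative excess
  have hneg : ∃ w ∈ X, excess (fsig t r s) w < 0 := by
    by_contra hno
    push_neg at hno
    have hpos : 0 < ∑ y ∈ X, excess (fsig t r s) y :=
      Finset.sum_pos' (fun i hi => hno i hi) ⟨v, hvX, hv⟩
    have hbd : ∑ y ∈ X, excess (fsig t r s) y
        = ∑ e : G.E, ((if G.src e ∈ X then fsig t r s e else 0)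
            - (if G.tgt e ∈ X then fsig t r s e else 0)) := by
      unfold excess
      rw [Finset.sum_sub_distrib, Finset.sum_comm, Finset.sum_comm (s := X),
        ← Finset.sum_sub_distrib]
      simp [Finset.sum_ite_eq]
    have hle : ∑ y ∈ X, excess (fsig t r s) y ≤ 0 := by
      rw [hbd]
      apply Finset.sum_nonpos
      intro e _
      by_cases hs1 : G.src e ∈ X <;> by_cases ht1 : G.tgt e ∈ X
      · simp [hs1, ht1]
      · -- src in X, tgt not: the edge must be negatively signed
        have hse : s e = false := by
          by_contra hb
          have hb' : s e = true := by simpa using hb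
          obtain ⟨l₁, hl₁⟩ := (Finset.mem_filter.1 hs1).2
          exact ht1 (Finset.mem_filter.2 ⟨Finset.mem_univ _,
            l₁ ++ [e], chain_snoc hl₁ (Or.inl ⟨hb', rfl, rfl⟩)⟩)
        have := hr2 e
        simp only [if_pos hs1, if_neg ht1, sub_zero, fsig, hse]
        simp only [Bool.false_eq_true, if_false]
        linarith
      · -- tgt in X, src not: the edge must be positively signed
        have hse : s e = true := by
          by_contra hb
          have hb' : s e = false := by simpa using hb
          obtain ⟨l₁, hl₁⟩ := (Finset.mem_filter.1 ht1).2
          exact hs1 (Finset.mem_filter.2 ⟨Finset.mem_univ _,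
            l₁ ++ [e], chain_snoc hl₁ (Or.inr ⟨hb', rfl, rfl⟩)⟩)
        have := hr1 e
        simp only [if_neg hs1, if_pos ht1, zero_sub, fsig, hse, if_true]
        linarith
      · simp [hs1, ht1]
    exact absurd hpos (not_lt.2 hle)
  obtain ⟨w, hwX, hwneg⟩ := hneg
  obtain ⟨lw, hlw⟩ := (Finset.mem_filter.1 hwX).2
  obtain ⟨s', hs'⟩ := claimB ht hdvd lw.length s v w lw hlw le_rfl hv hwneg
  exact absurd hs' (not_lt.2 (hsmin s'))

end TutteAux

/-- Tutte's theorem: `G` has a nowhere-zero `t`-flow (an integer flow `f` with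
`0 < |f e| ≤ t - 1` on every edge) if and only if `G` has a nowhere-zero
`ZMod t`-flow. -/
theorem nz_int_flow_iff_zmod_flow (G : Multigraph) (t : ℕ) (ht : 0 < t) :
    (∃ f : G.E → ℤ,
      (∀ v : G.V, (∑ e : G.E, if G.src e = v then f e else 0) =
        ∑ e : G.E, if G.tgt e = v then f e else 0) ∧
      ∀ e : G.E, f e ≠ 0 ∧ |f e| ≤ (t : ℤ) - 1) ↔
    ∃ g : G.E → ZMod t, G.IsNZFlow g := by
  constructor
  · rintro ⟨f, hcons, hf⟩
    refine ⟨fun e => ((f e : ℤ) : ZMod t), ?_, ?_⟩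
    · intro e h0
      rw [ZMod.intCast_zmod_eq_zero_iff_dvd] at h0
      have h1 : (t : ℤ) ≤ |f e| := Int.le_of_dvd (abs_pos.2 (hf e).1) ((dvd_abs _ _).2 h0)
      have h2 := (hf e).2
      linarith
    · intro v
      have hcast := congrArg (fun z : ℤ => (z : ZMod t)) (hcons v)
      push_cast at hcast
      simpa [apply_ite (fun z : ℤ => (z : ZMod t))] using hcast
  · rintro ⟨g, hg0, hgcons⟩
    rcases eq_or_lt_of_le (show 1 ≤ t from ht) with h1 | h2
    · -- t = 1
      have ht1 : t = 1 := h1.symm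
      subst ht1
      have hE : IsEmpty G.E := ⟨fun e => hg0 e (Subsingleton.elim _ _)⟩
      exact ⟨fun _ => 0, fun v => by simp, fun e => (hE.false e).elim⟩
    · haveI : NeZero t := ⟨by omega⟩
      set r : G.E → ℤ := fun e => ((g e).val : ℤ) with hrdef
      have hr1 : ∀ e, 1 ≤ r e := by
        intro e
        have hne : (g e).val ≠ 0 := fun h => hg0 e ((ZMod.val_eq_zero _).1 h)
        have h1 : 1 ≤ (g e).val := Nat.one_le_iff_ne_zero.2 hne
        simp only [hrdef]
        exact_mod_cast h1
      have hr2 : ∀ e, r e ≤ (t : ℤ) - 1 := by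
        intro e
        have := ZMod.val_lt (g e)
        simp only [hrdef]
        omega
      have hcast : ∀ (s : G.E → Bool) (e : G.E),
          ((TutteAux.fsig t r s e : ℤ) : ZMod t) = g e := by
        intro s e
        have hval : (((g e).val : ℕ) : ZMod t) = g e := ZMod.natCast_rightInverse (g e)
        by_cases hse : s e <;> simp [TutteAux.fsig, hse, hrdef, hval]
      have hdvd : ∀ (s : G.E → Bool) (x : G.V),
          (t : ℤ) ∣ TutteAux.excess (TutteAux.fsig t r s) x := by
        intro s x
        rw [← ZMod.intCast_zmod_eq_zero_iff_dvd]
        unfold TutteAux.excess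
        push_cast
        simp only [apply_ite (fun z : ℤ => (z : ZMod t)), Int.cast_zero, hcast]
        rw [hgcons x, sub_self]
      obtain ⟨s, hzero⟩ := TutteAux.exists_conservative (by omega) hr1 hr2 hdvd
      refine ⟨TutteAux.fsig t r s, fun v => ?_, fun e => ?_⟩
      · have hz := hzero v
        unfold TutteAux.excess at hz
        linarith
      · have h1 := hr1 e
        have h2 := hr2 e
        have htpos : (0 : ℤ) < t := by exact_mod_cast ht
        constructor
        · intro h0
          by_cases hse : s e <;> simp [TutteAux.fsig, hse] at h0 <;> omega
        · by_cases hse : s e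
          · have hfe : TutteAux.fsig t r s e = r e := by simp [TutteAux.fsig, hse]
            rw [hfe, abs_of_pos (by linarith)]; linarith
          · have hfe : TutteAux.fsig t r s e = r e - t := by simp [TutteAux.fsig, hse]
            rw [hfe, abs_of_neg (by linarith)]; linarith
end

section
/- Let G be a connected plane graph and G* its planar dual. Then t·F(G,t) = P(G*,t), i.e., the number of proper t-colourings of G* equals t times the number of nowhere-zero Z_t-flows of G, for every positive integer t. -/
open Polynomial

namespace Multigraph

/-- `A` is an even (cycle-space) edge set: every vertex is incident with an even
number of edge-ends of `A`. -/
def IsEvenEdgeSet (G : Multigraph) (A : Finset G.E) : Prop :=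
  ∀ v : G.V, Even ((A.filter fun e => G.src e = v).card +
    (A.filter fun e => G.tgt e = v).card)

/-- The edge cut determined by a vertex set `S`: the edges with exactly one
endpoint in `S`. -/
def cutEdges (G : Multigraph) (S : Finset G.V) : Finset G.E :=
  Finset.univ.filter fun e =>
    (G.src e ∈ S ∧ G.tgt e ∉ S) ∨ (G.src e ∉ S ∧ G.tgt e ∈ S)

/-- `H` together with the edge bijection `φ` is a (planar/abstract) dual of `G`:
an edge set of `G` lies in the cycle space of `G` exactly when its image lies in
the cocycle (cut) space of `H`. For a connected plane graph `G`, its planar dual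
`G*` satisfies this with the natural edge bijection. -/
def IsDual (G H : Multigraph) (φ : G.E ≃ H.E) : Prop :=
  ∀ A : Finset G.E,
    G.IsEvenEdgeSet A ↔ ∃ S : Finset H.V, A.map φ.toEmbedding = H.cutEdges S

end Multigraph

namespace Multigraph

open Finset

noncomputable section
open Classical

variable (G : Multigraph)

/-- The relation generating connectivity on edge set `A`. -/
def rel (A : Finset G.E) : G.V → G.V → Prop :=
  fun x y => ∃ e ∈ A, G.src e = x ∧ G.tgt e = y

/-- Components of the spanning subgraph with edge set `A`. -/
def comp (A : Finset G.E) : Type := Quotient (Relation.EqvGen.setoid (G.rel A))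

instance (A : Finset G.E) : Finite (G.comp A) := Quotient.finite _

lemma numComponentsOn_eq (A : Finset G.E) : G.numComponentsOn A = Nat.card (G.comp A) := rfl

lemma reachOn_iff {A : Finset G.E} {u v : G.V} :
    G.ReachOn A u v ↔
      (Quotient.mk (Relation.EqvGen.setoid (G.rel A)) u = Quotient.mk _ v) := by
  constructor
  · exact fun h => Quotient.sound h
  · exact fun h => Quotient.exact h

/-- The boundary map. -/
def bd (t : ℕ) (A : Finset G.E) :
    ({e : G.E // e ∈ A} → ZMod t) →+ (G.V → ZMod t) where
  toFun f := fun v => (∑ e : {e : G.E // e ∈ A}, if G.src e.1 = v then f e else 0)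
      - (∑ e : {e : G.E // e ∈ A}, if G.tgt e.1 = v then f e else 0)
  map_zero' := by funext v; simp
  map_add' f g := by
    funext v
    simp only [Pi.add_apply]
    have h1 : ∀ (w : G.V) (F : G.E → G.V),
        (∑ e : {e : G.E // e ∈ A}, if F e.1 = w then f e + g e else 0)
          = (∑ e : {e : G.E // e ∈ A}, if F e.1 = w then f e else 0)
            + (∑ e : {e : G.E // e ∈ A}, if F e.1 = w then g e else 0) := by
      intro w F
      rw [← Finset.sum_add_distrib]
      refine Finset.sum_congr rfl fun e _ => ?_
      by_cases h : F e.1 = w <;> simp [h]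
    rw [h1, h1]
    abel

/-- The component-sum map. -/
def csum (t : ℕ) (A : Finset G.E) : (G.V → ZMod t) →+ (G.comp A → ZMod t) where
  toFun h := fun q => ∑ v ∈ Finset.univ.filter
    (fun v => Quotient.mk (Relation.EqvGen.setoid (G.rel A)) v = q), h v
  map_zero' := by funext q; simp
  map_add' f g := by funext q; simp [Finset.sum_add_distrib]

lemma csum_surjective (t : ℕ) (A : Finset G.E) : Function.Surjective (G.csum t A) := by
  intro k
  set s := Relation.EqvGen.setoid (G.rel A) with hs
  refine ⟨fun v => if v = (Quotient.mk s v).out then k (Quotient.mk s v) else 0, ?_⟩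
  funext q
  show (∑ v ∈ Finset.univ.filter (fun v => Quotient.mk s v = q),
    if v = (Quotient.mk s v).out then k (Quotient.mk s v) else 0) = k q
  have h1 : ∀ v ∈ Finset.univ.filter (fun v => Quotient.mk s v = q),
      (if v = (Quotient.mk s v).out then k (Quotient.mk s v) else 0)
        = if v = q.out then k q else 0 := by
    intro v hv
    simp only [Finset.mem_filter] at hv
    rw [hv.2]
  rw [Finset.sum_congr rfl h1, Finset.sum_ite_eq']
  rw [if_pos]
  simp only [Finset.mem_filter, Finset.mem_univ, true_and]
  exact Quotient.out_eq q

lemma bd_apply (t : ℕ) (A : Finset G.E) (f : {e : G.E // e ∈ A} → ZMod t) (v : G.V) :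
    G.bd t A f v = (∑ e : {e : G.E // e ∈ A}, if G.src e.1 = v then f e else 0)
      - (∑ e : {e : G.E // e ∈ A}, if G.tgt e.1 = v then f e else 0) := rfl

lemma csum_apply (t : ℕ) (A : Finset G.E) (h : G.V → ZMod t) (q : G.comp A) :
    G.csum t A h q = ∑ v ∈ Finset.univ.filter
      (fun v => Quotient.mk (Relation.EqvGen.setoid (G.rel A)) v = q), h v := rfl

lemma bd_single (t : ℕ) (A : Finset G.E) (e₀ : {e : G.E // e ∈ A}) (c : ZMod t) :
    G.bd t A (fun e => if e = e₀ then c else 0)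
      = fun w => (if G.src e₀.1 = w then c else 0) - (if G.tgt e₀.1 = w then c else 0) := by
  funext w
  rw [bd_apply]
  have h1 : ∀ F : G.E → G.V,
      (∑ e : {e : G.E // e ∈ A}, if F e.1 = w then (if e = e₀ then c else 0) else 0)
        = if F e₀.1 = w then c else 0 := by
    intro F
    have : ∀ e : {e : G.E // e ∈ A},
        (if F e.1 = w then (if e = e₀ then c else 0) else 0)
          = if e = e₀ then (if F e.1 = w then c else 0) else 0 := by
      intro e
      by_cases h : e = e₀ <;> by_cases h2 : F e.1 = w <;> simp [h, h2]
    rw [Finset.sum_congr rfl (fun e _ => this e), Finset.sum_ite_eq']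
    simp
  rw [h1, h1]

lemma range_bd_eq (t : ℕ) (A : Finset G.E) :
    (G.bd t A).range = (G.csum t A).ker := by
  set s := Relation.EqvGen.setoid (G.rel A) with hs
  have key : ∀ e : {e : G.E // e ∈ A},
      Quotient.mk s (G.src e.1) = Quotient.mk s (G.tgt e.1) :=
    fun e => Quotient.sound (Relation.EqvGen.rel _ _ ⟨e.1, e.2, rfl, rfl⟩)
  ext h
  simp only [AddMonoidHom.mem_range, AddMonoidHom.mem_ker]
  constructor
  · rintro ⟨f, rfl⟩
    funext q
    show G.csum t A (G.bd t A f) q = 0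
    rw [csum_apply]
    have e1 : ∀ F : G.E → G.V, (∑ v ∈ Finset.univ.filter (fun v => Quotient.mk s v = q),
        ∑ e : {e : G.E // e ∈ A}, if F e.1 = v then f e else 0)
          = ∑ e : {e : G.E // e ∈ A}, if Quotient.mk s (F e.1) = q then f e else 0 := by
      intro F
      rw [Finset.sum_comm]
      refine Finset.sum_congr rfl fun e _ => ?_
      rw [Finset.sum_ite_eq]
      simp only [Finset.mem_filter, Finset.mem_univ, true_and]
    have e2 : (∑ v ∈ Finset.univ.filter (fun v => Quotient.mk s v = q), G.bd t A f v)
        = ∑ v ∈ Finset.univ.filter (fun v => Quotient.mk s v = q),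
            ((∑ e : {e : G.E // e ∈ A}, if G.src e.1 = v then f e else 0)
              - (∑ e : {e : G.E // e ∈ A}, if G.tgt e.1 = v then f e else 0)) :=
      Finset.sum_congr rfl fun v _ => by rw [bd_apply]
    rw [e2, Finset.sum_sub_distrib, e1, e1, sub_eq_zero]
    refine Finset.sum_congr rfl fun e _ => ?_
    rw [key e]
  · intro hh
    have claim : ∀ (c : ZMod t) (u v : G.V), G.ReachOn A u v →
        (fun w => (if u = w then c else 0) - (if v = w then c else 0))
          ∈ (G.bd t A).range := by
      intro c u v hr
      induction hr with
      | rel x y hxy =>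
        obtain ⟨e, he, hsrc, htgt⟩ := hxy
        refine ⟨fun e' => if e' = ⟨e, he⟩ then c else 0, ?_⟩
        rw [bd_single]
        simp only [hsrc, htgt]
      | refl x =>
        refine ⟨0, ?_⟩
        rw [map_zero]
        funext w
        simp
      | symm x y _ ih =>
        have := neg_mem ih
        convert this using 1
        funext w
        simp only [Pi.neg_apply]
        ring
      | trans x y z _ _ ih1 ih2 =>
        have := add_mem ih1 ih2
        convert this using 1
        funext w
        simp only [Pi.add_apply]
        ring
    have hrep : ∀ u : G.V, G.ReachOn A u ((Quotient.mk s u).out) :=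
      fun u => (reachOn_iff G).mpr (by rw [Quotient.out_eq])
    have hsum : h = ∑ u : G.V, (fun w =>
        (if u = w then h u else 0) - (if (Quotient.mk s u).out = w then h u else 0)) := by
      funext w
      rw [Finset.sum_apply, Finset.sum_sub_distrib]
      have e1 : (∑ u : G.V, if u = w then h u else 0) = h w := by
        rw [Finset.sum_ite_eq']
        simp
      have e2 : (∑ u : G.V, if (Quotient.mk s u).out = w then h u else 0) = 0 := by
        rw [← Finset.sum_filter]
        by_cases hw : ∃ u0 : G.V, (Quotient.mk s u0).out = w
        · obtain ⟨u0, hu0⟩ := hw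
          have hset : Finset.univ.filter (fun u : G.V => (Quotient.mk s u).out = w)
              = Finset.univ.filter (fun u : G.V => Quotient.mk s u = Quotient.mk s u0) := by
            ext u
            simp only [Finset.mem_filter, Finset.mem_univ, true_and]
            constructor
            · intro h1
              rw [← hu0] at h1
              exact Quotient.out_injective h1
            · intro h1
              rw [h1, hu0]
          rw [hset]
          have := congrFun hh (Quotient.mk s u0)
          have h3 := (G.csum_apply t A h (Quotient.mk s u0)).symm.trans this
          convert h3
          rfl
        · have hset : Finset.univ.filter (fun u : G.V => (Quotient.mk s u).out = w) = ∅ := by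
            ext u
            simp only [Finset.mem_filter, Finset.mem_univ, true_and, Finset.notMem_empty,
              iff_false]
            exact fun h1 => hw ⟨u, h1⟩
          rw [hset, Finset.sum_empty]
      rw [e1, e2, sub_zero]
    rw [hsum]
    exact AddSubgroup.sum_mem _ (fun u _ => claim (h u) u _ (hrep u))

/-- Cardinality of the space of flows supported in `A`. -/
lemma card_flows_mul (t : ℕ) (ht : 0 < t) (A : Finset G.E) :
    Nat.card {f : G.E → ZMod t // (∀ e ∉ A, f e = 0) ∧
        ∀ v : G.V, (∑ e : G.E, if G.src e = v then f e else 0) =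
          ∑ e : G.E, if G.tgt e = v then f e else 0} * t ^ (Fintype.card G.V)
      = t ^ (A.card + G.numComponentsOn A) := by
  haveI : NeZero t := ⟨ht.ne'⟩
  have sums : ∀ (f : G.E → ZMod t), (∀ e ∉ A, f e = 0) → ∀ (F : G.E → G.V) (v : G.V),
      (∑ e : {e : G.E // e ∈ A}, if F e.1 = v then f e.1 else 0)
        = ∑ e : G.E, if F e = v then f e else 0 := by
    intro f hf F v
    rw [← Finset.sum_subtype A (fun x => Iff.rfl) (fun e => if F e = v then f e else 0)]
    exact Finset.sum_subset (Finset.subset_univ A) (fun e _ he => by simp [hf e he])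
  have eqv : {f : G.E → ZMod t // (∀ e ∉ A, f e = 0) ∧
      ∀ v : G.V, (∑ e : G.E, if G.src e = v then f e else 0) =
        ∑ e : G.E, if G.tgt e = v then f e else 0} ≃ (G.bd t A).ker := by
    refine ⟨fun f => ⟨fun e => f.1 e.1, ?_⟩, fun g => ⟨fun e => if he : e ∈ A then g.1 ⟨e, he⟩ else 0, ?_, ?_⟩, ?_, ?_⟩
    · rw [AddMonoidHom.mem_ker]
      funext v
      simp only [Pi.zero_apply]
      rw [bd_apply, sums f.1 f.2.1 G.src v, sums f.1 f.2.1 G.tgt v, sub_eq_zero]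
      exact f.2.2 v
    · intro e he
      simp [he]
    · intro v
      have hsupp : ∀ e ∉ A, (if he : e ∈ A then g.1 ⟨e, he⟩ else 0) = 0 := by
        intro e he
        simp [he]
      rw [← sums _ hsupp G.src v, ← sums _ hsupp G.tgt v, ← sub_eq_zero]
      have hker := AddMonoidHom.mem_ker.mp g.2
      have := congrFun hker v
      rw [bd_apply] at this
      have hsc : ∀ F : G.E → G.V,
          (∑ e : {e : G.E // e ∈ A}, if F e.1 = v
              then (if he : e.1 ∈ A then g.1 ⟨e.1, he⟩ else 0) else 0)
            = ∑ e : {e : G.E // e ∈ A}, if F e.1 = v then g.1 e else 0 := by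
        intro F
        refine Finset.sum_congr rfl fun e _ => ?_
        simp [e.2]
      rw [hsc, hsc]
      exact this
    · intro f
      ext e
      by_cases he : e ∈ A
      · simp [he]
      · simp [he, f.2.1 e he]
    · intro g
      ext e
      simp [e.2]
  have c1 : Nat.card ({e : G.E // e ∈ A} → ZMod t) = t ^ A.card := by
    rw [Nat.card_fun, Nat.card_zmod, Nat.card_eq_fintype_card, Fintype.card_coe]
  have c2 : Nat.card (G.V → ZMod t) = t ^ (Fintype.card G.V) := by
    rw [Nat.card_fun, Nat.card_zmod, Nat.card_eq_fintype_card]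
  have i1 : Nat.card ({e : G.E // e ∈ A} → ZMod t)
      = Nat.card (G.bd t A).range * Nat.card (G.bd t A).ker := by
    rw [AddSubgroup.card_eq_card_quotient_mul_card_addSubgroup (G.bd t A).ker]
    congr 1
    exact Nat.card_congr (QuotientAddGroup.quotientKerEquivRange (G.bd t A)).toEquiv
  have i2 : Nat.card (G.V → ZMod t)
      = Nat.card (G.csum t A).range * Nat.card (G.csum t A).ker := by
    rw [AddSubgroup.card_eq_card_quotient_mul_card_addSubgroup (G.csum t A).ker]
    congr 1
    exact Nat.card_congr (QuotientAddGroup.quotientKerEquivRange (G.csum t A)).toEquiv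
  have r2 : Nat.card (G.csum t A).range = t ^ G.numComponentsOn A := by
    have : (G.csum t A).range = ⊤ :=
      AddMonoidHom.range_eq_top.mpr (G.csum_surjective t A)
    rw [this]
    rw [Nat.card_congr (AddSubgroup.topEquiv.toEquiv), Nat.card_fun, Nat.card_zmod,
      numComponentsOn_eq]
  have hmain : Nat.card (G.bd t A).ker * t ^ (Fintype.card G.V)
      = t ^ (A.card + G.numComponentsOn A) := by
    rw [← c2, i2, r2, ← range_bd_eq]
    rw [show Nat.card (G.bd t A).ker * (t ^ G.numComponentsOn A * Nat.card (G.bd t A).range)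
      = (Nat.card (G.bd t A).range * Nat.card (G.bd t A).ker) * t ^ G.numComponentsOn A by ring]
    rw [← i1, c1, pow_add]
  rw [Nat.card_congr eqv, hmain]

/-- Helper: `Nat.card` of a conjunction subtype as an integer Finset sum. -/
lemma nat_card_and {α : Type} [Fintype α] [DecidableEq α] (P Q : α → Prop)
    [DecidablePred P] [DecidablePred Q] :
    (Nat.card {x : α // P x ∧ Q x} : ℤ)
      = ∑ x ∈ Finset.univ.filter Q, (if P x then (1 : ℤ) else 0) := by
  rw [Finset.sum_boole]
  rw [Nat.card_eq_fintype_card, Fintype.card_subtype, Finset.filter_filter]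
  norm_cast
  apply Finset.card_nbij id (fun x h => by simpa [and_comm] using h)
    (fun x _ y _ h => h)
  intro x hx
  refine ⟨x, by simpa [and_comm] using hx, rfl⟩

lemma numFlows_eq_sum (t : ℕ) (ht : 0 < t) :
    (G.numFlows t : ℤ) = ∑ A ∈ (Finset.univ : Finset G.E).powerset,
      (-1) ^ (Finset.univ \ A).card *
        (Nat.card {f : G.E → ZMod t // (∀ e ∉ A, f e = 0) ∧
          ∀ v : G.V, (∑ e : G.E, if G.src e = v then f e else 0) =
            ∑ e : G.E, if G.tgt e = v then f e else 0} : ℤ) := by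
  haveI : NeZero t := ⟨ht.ne'⟩
  set Q : (G.E → ZMod t) → Prop := fun f => ∀ v : G.V,
    (∑ e : G.E, if G.src e = v then f e else 0) =
      ∑ e : G.E, if G.tgt e = v then f e else 0 with hQ
  have hrw : ∀ A : Finset G.E,
      (Nat.card {f : G.E → ZMod t // (∀ e ∉ A, f e = 0) ∧ Q f} : ℤ)
        = ∑ f ∈ Finset.univ.filter Q, (if (∀ e ∉ A, f e = 0) then (1 : ℤ) else 0) :=
    fun A => nat_card_and _ Q
  calc (G.numFlows t : ℤ)
      = ∑ f ∈ Finset.univ.filter Q, (if (∀ e : G.E, f e ≠ 0) then (1 : ℤ) else 0) := by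
        have hdef : G.numFlows t
            = Nat.card {f : G.E → ZMod t // (∀ e : G.E, f e ≠ 0) ∧ Q f} := rfl
        rw [hdef]
        exact nat_card_and _ Q
    _ = ∑ f ∈ Finset.univ.filter Q, ∑ A ∈ (Finset.univ : Finset G.E).powerset,
        (-1) ^ (Finset.univ \ A).card * (if (∀ e ∉ A, f e = 0) then (1 : ℤ) else 0) := by
        refine Finset.sum_congr rfl fun f _ => ?_
        set T : Finset G.E := Finset.univ.filter (fun e => f e ≠ 0) with hT
        have hsupp : ∀ A : Finset G.E, (∀ e ∉ A, f e = 0) ↔ T ⊆ A := by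
          intro A
          constructor
          · intro h e he
            have he2 := Finset.mem_filter.mp he
            by_contra heA
            exact he2.2 (h e heA)
          · intro h e he
            by_contra hne
            exact he (h (Finset.mem_filter.mpr ⟨Finset.mem_univ e, hne⟩))
        have hstep : ∑ A ∈ (Finset.univ : Finset G.E).powerset,
            (-1 : ℤ) ^ (Finset.univ \ A).card * (if (∀ e ∉ A, f e = 0) then (1 : ℤ) else 0)
              = ∑ A ∈ ((Finset.univ : Finset G.E).powerset.filter (fun A => T ⊆ A)),
                (-1 : ℤ) ^ (Finset.univ \ A).card := by
          rw [Finset.sum_filter]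
          refine Finset.sum_congr rfl fun A _ => ?_
          by_cases h : T ⊆ A
          · rw [if_pos h, if_pos ((hsupp A).mpr h), mul_one]
          · rw [if_neg h, if_neg (fun hh => h ((hsupp A).mp hh)), mul_zero]
        rw [hstep]
        have hbij : ∑ A ∈ ((Finset.univ : Finset G.E).powerset.filter (fun A => T ⊆ A)),
            (-1 : ℤ) ^ (Finset.univ \ A).card
              = ∑ S ∈ (Finset.univ \ T).powerset, (-1 : ℤ) ^ S.card := by
          refine Finset.sum_nbij' (fun A => Finset.univ \ A) (fun S => Finset.univ \ S)
            ?_ ?_ ?_ ?_ ?_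
          · intro A hA
            simp only [Finset.mem_filter, Finset.mem_powerset] at hA ⊢
            intro e he
            rw [Finset.mem_sdiff] at he ⊢
            exact ⟨he.1, fun hT' => he.2 (hA.2 hT')⟩
          · intro S hS
            simp only [Finset.mem_powerset] at hS
            simp only [Finset.mem_filter, Finset.mem_powerset]
            refine ⟨Finset.subset_univ _, ?_⟩
            intro e he
            rw [Finset.mem_sdiff]
            refine ⟨Finset.mem_univ e, fun heS => ?_⟩
            have := hS heS
            rw [Finset.mem_sdiff] at this
            exact this.2 he
          · intro A hA
            simp only [Finset.mem_filter, Finset.mem_powerset] at hA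
            show Finset.univ \ (Finset.univ \ A) = A
            rw [Finset.sdiff_sdiff_self_left, Finset.inter_eq_right.mpr hA.1]
          · intro S hS
            simp only [Finset.mem_powerset] at hS
            show Finset.univ \ (Finset.univ \ S) = S
            rw [Finset.sdiff_sdiff_self_left,
              Finset.inter_eq_right.mpr (hS.trans (Finset.sdiff_subset))]
          · intro A hA
            rfl
        rw [hbij, Finset.sum_powerset_neg_one_pow_card]
        have hTiff : Finset.univ \ T = ∅ ↔ ∀ e : G.E, f e ≠ 0 := by
          constructor
          · intro h e
            have : e ∈ T := by
              by_contra he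
              have : e ∈ Finset.univ \ T := Finset.mem_sdiff.mpr ⟨Finset.mem_univ e, he⟩
              rw [h] at this
              exact absurd this (Finset.notMem_empty e)
            rw [hT, Finset.mem_filter] at this
            exact this.2
          · intro h
            ext e
            simp only [Finset.mem_sdiff, Finset.mem_univ, true_and, Finset.notMem_empty,
              iff_false, not_not, hT, Finset.mem_filter]
            first
            | exact h e
            | exact ⟨Finset.mem_univ e, h e⟩
            | simp [h e]
        by_cases h : ∀ e : G.E, f e ≠ 0
        · rw [if_pos h, if_pos (hTiff.mpr h)]
        · rw [if_neg h, if_neg (fun hh => h (hTiff.mp hh))]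
    _ = ∑ A ∈ (Finset.univ : Finset G.E).powerset,
        (-1) ^ (Finset.univ \ A).card *
          (Nat.card {f : G.E → ZMod t // (∀ e ∉ A, f e = 0) ∧ Q f} : ℤ) := by
        rw [Finset.sum_comm]
        refine Finset.sum_congr rfl fun A _ => ?_
        rw [hrw A, Finset.mul_sum]

/-- Count of colourings constant on the components of `(V, B)`. -/
lemma card_colorings_const (t : ℕ) (B : Finset G.E) :
    Nat.card {f : G.V → Fin t // ∀ e ∈ B, f (G.src e) = f (G.tgt e)}
      = t ^ G.numComponentsOn B := by
  have eqv : {f : G.V → Fin t // ∀ e ∈ B, f (G.src e) = f (G.tgt e)}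
      ≃ (G.comp B → Fin t) := by
    refine ⟨fun f => Quotient.lift f.1 ?_, fun g => ⟨fun v => g (Quotient.mk _ v), ?_⟩, ?_, ?_⟩
    · intro a b hab
      induction hab with
      | rel x y hxy =>
        obtain ⟨e, he, h1, h2⟩ := hxy
        subst h1; subst h2
        exact f.2 e he
      | refl x => rfl
      | symm x y _ ih => exact ih.symm
      | trans x y z _ _ ih1 ih2 => exact ih1.trans ih2
    · intro e he
      have : Quotient.mk (Relation.EqvGen.setoid (G.rel B)) (G.src e)
          = Quotient.mk _ (G.tgt e) :=
        Quotient.sound (Relation.EqvGen.rel _ _ ⟨e, he, rfl, rfl⟩)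
      simp only [this]
    · intro f
      ext v
      rfl
    · intro g
      funext q
      induction q using Quotient.ind
      rfl
  rw [Nat.card_congr eqv, Nat.card_fun, Nat.card_eq_fintype_card, Fintype.card_fin,
    numComponentsOn_eq]

lemma properColorings_eq_sum (t : ℕ) (ht : 0 < t) :
    (G.properColorings t : ℤ) = ∑ B ∈ (Finset.univ : Finset G.E).powerset,
      (-1) ^ B.card * (t : ℤ) ^ G.numComponentsOn B := by
  have hM : ∀ B : Finset G.E,
      ((t : ℤ) ^ G.numComponentsOn B)
        = (Nat.card {f : G.V → Fin t // ∀ e ∈ B, f (G.src e) = f (G.tgt e)} : ℤ) := by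
    intro B
    rw [card_colorings_const]
    push_cast
    ring
  have hcard : ∀ B : Finset G.E,
      (Nat.card {f : G.V → Fin t // ∀ e ∈ B, f (G.src e) = f (G.tgt e)} : ℤ)
        = ∑ f : G.V → Fin t, (if (∀ e ∈ B, f (G.src e) = f (G.tgt e)) then (1 : ℤ) else 0) := by
    intro B
    have h2 : Nat.card {f : G.V → Fin t // ∀ e ∈ B, f (G.src e) = f (G.tgt e)}
        = Nat.card {f : G.V → Fin t // (∀ e ∈ B, f (G.src e) = f (G.tgt e)) ∧ True} :=
      Nat.card_congr (Equiv.subtypeEquivRight (fun f => (and_iff_left trivial).symm))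
    rw [h2, nat_card_and, Finset.filter_true]
  refine Eq.symm ?_
  calc (∑ B ∈ (Finset.univ : Finset G.E).powerset,
      (-1 : ℤ) ^ B.card * (t : ℤ) ^ G.numComponentsOn B)
      = ∑ B ∈ (Finset.univ : Finset G.E).powerset, ∑ f : G.V → Fin t,
          (-1 : ℤ) ^ B.card * (if (∀ e ∈ B, f (G.src e) = f (G.tgt e)) then (1 : ℤ) else 0) := by
        refine Finset.sum_congr rfl fun B _ => ?_
        rw [hM B, hcard B, Finset.mul_sum]
    _ = ∑ f : G.V → Fin t, ∑ B ∈ (Finset.univ : Finset G.E).powerset,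
          (-1 : ℤ) ^ B.card * (if (∀ e ∈ B, f (G.src e) = f (G.tgt e)) then (1 : ℤ) else 0) :=
        Finset.sum_comm
    _ = ∑ f : G.V → Fin t, (if (∀ e : G.E, f (G.src e) ≠ f (G.tgt e)) then (1 : ℤ) else 0) := by
        refine Finset.sum_congr rfl fun f _ => ?_
        set M : Finset G.E := Finset.univ.filter (fun e => f (G.src e) = f (G.tgt e)) with hMdef
        have hmono : ∀ B : Finset G.E, (∀ e ∈ B, f (G.src e) = f (G.tgt e)) ↔ B ⊆ M := by
          intro B
          constructor
          · intro h e he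
            rw [hMdef, Finset.mem_filter]
            exact ⟨Finset.mem_univ e, h e he⟩
          · intro h e he
            have := h he
            rw [hMdef, Finset.mem_filter] at this
            exact this.2
        have hstep : ∑ B ∈ (Finset.univ : Finset G.E).powerset,
            (-1 : ℤ) ^ B.card * (if (∀ e ∈ B, f (G.src e) = f (G.tgt e)) then (1 : ℤ) else 0)
              = ∑ B ∈ M.powerset, (-1 : ℤ) ^ B.card := by
          rw [← Finset.sum_filter_add_sum_filter_not
            ((Finset.univ : Finset G.E).powerset) (fun B => B ⊆ M)]
          have h1 : (Finset.univ : Finset G.E).powerset.filter (fun B => B ⊆ M)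
              = M.powerset := by
            ext B
            simp [Finset.mem_powerset, Finset.mem_filter]
          rw [h1]
          have h2 : ∀ B ∈ M.powerset,
              (-1 : ℤ) ^ B.card * (if (∀ e ∈ B, f (G.src e) = f (G.tgt e)) then (1 : ℤ) else 0)
                = (-1 : ℤ) ^ B.card := by
            intro B hB
            rw [if_pos ((hmono B).mpr (Finset.mem_powerset.mp hB)), mul_one]
          rw [Finset.sum_congr rfl h2]
          have h3 : ∀ B ∈ (Finset.univ : Finset G.E).powerset.filter (fun B => ¬ B ⊆ M),
              (-1 : ℤ) ^ B.card * (if (∀ e ∈ B, f (G.src e) = f (G.tgt e)) then (1 : ℤ) else 0)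
                = 0 := by
            intro B hB
            rw [Finset.mem_filter] at hB
            rw [if_neg (fun hh => hB.2 ((hmono B).mp hh)), mul_zero]
          rw [Finset.sum_congr rfl h3, Finset.sum_const_zero, add_zero]
        rw [hstep, Finset.sum_powerset_neg_one_pow_card]
        have : M = ∅ ↔ ∀ e : G.E, f (G.src e) ≠ f (G.tgt e) := by
          rw [hMdef, Finset.filter_eq_empty_iff]
          simp
        by_cases h : ∀ e : G.E, f (G.src e) ≠ f (G.tgt e)
        · rw [if_pos (this.mpr h), if_pos h]
        · rw [if_neg (fun hh => h (this.mp hh)), if_neg h]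
    _ = (G.properColorings t : ℤ) := by
        have h2 : G.properColorings t
            = Nat.card {f : G.V → Fin t //
                (∀ e : G.E, f (G.src e) ≠ f (G.tgt e)) ∧ True} :=
          Nat.card_congr (Equiv.subtypeEquivRight (fun f => (and_iff_left trivial).symm))
        rw [h2, nat_card_and, Finset.filter_true]

lemma indicator_sum (B : Finset G.E) (F : G.E → G.V) (v : G.V) :
    (∑ e : G.E, if F e = v then (if e ∈ B then (1 : ZMod 2) else 0) else 0)
      = ((B.filter (fun e => F e = v)).card : ZMod 2) := by
  have h1 : ∀ e : G.E, (if F e = v then (if e ∈ B then (1 : ZMod 2) else 0) else 0)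
      = if (e ∈ B ∧ F e = v) then (1 : ZMod 2) else 0 := by
    intro e
    by_cases h : F e = v <;> by_cases h2 : e ∈ B <;> simp [h, h2]
  rw [Finset.sum_congr rfl (fun e _ => h1 e), Finset.sum_boole]
  congr 2
  ext e
  simp [Finset.mem_filter]

lemma isEven_iff_indicator_flow (B : Finset G.E) :
    G.IsEvenEdgeSet B ↔ ∀ v : G.V,
      (∑ e : G.E, if G.src e = v then (if e ∈ B then (1 : ZMod 2) else 0) else 0)
        = ∑ e : G.E, if G.tgt e = v then (if e ∈ B then (1 : ZMod 2) else 0) else 0 := by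
  have h01 : ∀ a b : ZMod 2, (a + b = 0 ↔ a = b) := by decide
  have key : ∀ m n : ℕ, Even (m + n) ↔ ((m : ZMod 2) = (n : ZMod 2)) := by
    intro m n
    rw [even_iff_two_dvd, ← ZMod.natCast_eq_zero_iff, Nat.cast_add, h01]
  unfold IsEvenEdgeSet
  refine forall_congr' fun v => ?_
  rw [indicator_sum, indicator_sum, key]

lemma card_evens_mul (A : Finset G.E) :
    (A.powerset.filter (fun B => G.IsEvenEdgeSet B)).card * 2 ^ (Fintype.card G.V)
      = 2 ^ (A.card + G.numComponentsOn A) := by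
  have hzm : ∀ x : ZMod 2, (if x = 1 then (1 : ZMod 2) else 0) = x := by decide
  have eqv : {B : Finset G.E // B ⊆ A ∧ G.IsEvenEdgeSet B} ≃
      {f : G.E → ZMod 2 // (∀ e ∉ A, f e = 0) ∧
        ∀ v : G.V, (∑ e : G.E, if G.src e = v then f e else 0) =
          ∑ e : G.E, if G.tgt e = v then f e else 0} := by
    refine ⟨fun B => ⟨fun e => if e ∈ B.1 then 1 else 0, ?_, ?_⟩,
      fun f => ⟨Finset.univ.filter (fun e => f.1 e = 1), ?_, ?_⟩, ?_, ?_⟩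
    · intro e he
      exact if_neg (fun heB => he (B.2.1 heB))
    · exact (G.isEven_iff_indicator_flow B.1).mp B.2.2
    · intro e he
      rw [Finset.mem_filter] at he
      by_contra heA
      have h0 := f.2.1 e heA
      rw [he.2] at h0
      exact absurd h0 (by decide)
    · have hind : (fun e => if e ∈ Finset.univ.filter (fun e => f.1 e = 1) then (1 : ZMod 2) else 0)
          = f.1 := by
        funext e
        simp only [Finset.mem_filter, Finset.mem_univ, true_and]
        exact hzm (f.1 e)
      apply (G.isEven_iff_indicator_flow _).mpr
      intro v
      have := f.2.2 v
      rw [← hind] at this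
      exact this
    · intro B
      ext e
      simp only [Finset.mem_filter, Finset.mem_univ, true_and]
      by_cases h : e ∈ B.1 <;> simp [h]
    · intro f
      ext e
      simp only [Finset.mem_filter, Finset.mem_univ, true_and]
      exact hzm (f.1 e)
  have hflow := G.card_flows_mul 2 (by norm_num) A
  have hcard : (A.powerset.filter (fun B => G.IsEvenEdgeSet B)).card
      = Nat.card {B : Finset G.E // B ⊆ A ∧ G.IsEvenEdgeSet B} := by
    rw [Nat.card_eq_fintype_card, Fintype.card_subtype]
    congr 1
    ext B
    simp [Finset.mem_powerset]
  rw [hcard, Nat.card_congr eqv, hflow]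

lemma cutEdges_compl (S : Finset G.V) : G.cutEdges Sᶜ = G.cutEdges S := by
  ext e
  simp only [cutEdges, Finset.mem_filter, Finset.mem_univ, true_and, Finset.mem_compl]
  tauto

lemma cutEdges_subset_iff (B : Finset G.E) (S : Finset G.V) :
    G.cutEdges S ⊆ B ↔ ∀ u v : G.V, G.ReachOn Bᶜ u v → (u ∈ S ↔ v ∈ S) := by
  constructor
  · intro h u v hr
    induction hr with
    | rel x y hxy =>
      obtain ⟨e, he, h1, h2⟩ := hxy
      subst h1; subst h2
      by_contra hc
      have hcut : e ∈ G.cutEdges S := by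
        simp only [cutEdges, Finset.mem_filter, Finset.mem_univ, true_and]
        tauto
      exact (Finset.mem_compl.mp he) (h hcut)
    | refl x => exact Iff.rfl
    | symm x y _ ih => exact ih.symm
    | trans x y z _ _ ih1 ih2 => exact ih1.trans ih2
  · intro h e he
    by_contra heB
    have hr : G.ReachOn Bᶜ (G.src e) (G.tgt e) :=
      Relation.EqvGen.rel _ _ ⟨e, Finset.mem_compl.mpr heB, rfl, rfl⟩
    have hiff := h _ _ hr
    simp only [cutEdges, Finset.mem_filter, Finset.mem_univ, true_and] at he
    tauto

lemma cut_eq_cases (hconn : G.Conn) {S T : Finset G.V}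
    (h : G.cutEdges S = G.cutEdges T) : S = T ∨ S = Tᶜ := by
  set U := (S \ T) ∪ (T \ S) with hU
  have hedge : ∀ e : G.E, (G.src e ∈ U ↔ G.tgt e ∈ U) := by
    intro e
    have h1 : e ∈ G.cutEdges S ↔ e ∈ G.cutEdges T := by rw [h]
    simp only [cutEdges, Finset.mem_filter, Finset.mem_univ, true_and] at h1
    simp only [hU, Finset.mem_union, Finset.mem_sdiff]
    tauto
  have hreach : ∀ u v : G.V, G.ReachOn Finset.univ u v → (u ∈ U ↔ v ∈ U) := by
    intro u v hr
    induction hr with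
    | rel x y hxy =>
      obtain ⟨e, _, h1, h2⟩ := hxy
      subst h1; subst h2
      exact hedge e
    | refl x => exact Iff.rfl
    | symm x y _ ih => exact ih.symm
    | trans x y z _ _ ih1 ih2 => exact ih1.trans ih2
  by_cases hne : U = ∅
  · left
    ext v
    have h1 : v ∉ U := by rw [hne]; exact Finset.notMem_empty v
    simp only [hU, Finset.mem_union, Finset.mem_sdiff] at h1
    tauto
  · right
    have huniv : U = Finset.univ := by
      obtain ⟨u, hu⟩ := Finset.nonempty_iff_ne_empty.mpr hne
      ext v
      simp only [Finset.mem_univ, iff_true]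
      exact (hreach u v (hconn.2 u v)).mp hu
    ext v
    have h1 : v ∈ U := by rw [huniv]; exact Finset.mem_univ v
    simp only [hU, Finset.mem_union, Finset.mem_sdiff] at h1
    simp only [Finset.mem_compl]
    tauto

lemma card_cuts_mul (hconn : G.Conn) (B : Finset G.E) :
    ((Finset.univ.filter (fun S : Finset G.V => G.cutEdges S ⊆ B)).image G.cutEdges).card * 2
      = 2 ^ (G.numComponentsOn Bᶜ) := by
  classical
  set SS := Finset.univ.filter (fun S : Finset G.V => G.cutEdges S ⊆ B) with hSS
  haveI : Fintype (G.comp Bᶜ) := Fintype.ofFinite _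
  have hrep : ∀ v : G.V, G.ReachOn Bᶜ v ((Quotient.mk (Relation.EqvGen.setoid (G.rel Bᶜ)) v).out) :=
    fun v => (reachOn_iff G).mpr (by rw [Quotient.out_eq])
  have hScard : SS.card = 2 ^ (G.numComponentsOn Bᶜ) := by
    rw [numComponentsOn_eq, Nat.card_eq_fintype_card]
    have : SS.card = Fintype.card (G.comp Bᶜ → Bool) := by
      rw [← Finset.card_univ]
      apply Finset.card_bij' (fun S _ => fun q : G.comp Bᶜ => decide (q.out ∈ S))
        (fun k _ => Finset.univ.filter
          (fun v => k (Quotient.mk (Relation.EqvGen.setoid (G.rel Bᶜ)) v) = true))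
      · intro S hS
        exact Finset.mem_univ _
      · intro k hk
        rw [hSS, Finset.mem_filter]
        refine ⟨Finset.mem_univ _, ?_⟩
        rw [cutEdges_subset_iff]
        intro u v hr
        have : Quotient.mk (Relation.EqvGen.setoid (G.rel Bᶜ)) u
            = Quotient.mk _ v := (reachOn_iff G).mp hr
        simp only [Finset.mem_filter, Finset.mem_univ, true_and, this]
      · intro S hS
        rw [hSS, Finset.mem_filter] at hS
        have hclosed := (G.cutEdges_subset_iff B S).mp hS.2
        ext v
        simp only [Finset.mem_filter, Finset.mem_univ, true_and, decide_eq_true_eq]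
        exact (hclosed _ _ (hrep v)).symm
      · intro k hk
        funext q
        have hq : Quotient.mk (Relation.EqvGen.setoid (G.rel Bᶜ)) q.out = q :=
          Quotient.out_eq q
        simp only [Finset.mem_filter, Finset.mem_univ, true_and, hq]
        cases hkq : k q <;> simp [hkq]
    rw [this, Fintype.card_fun, Fintype.card_bool]
  have hfiber : ∀ C ∈ SS.image G.cutEdges,
      (SS.filter (fun S => G.cutEdges S = C)).card = 2 := by
    intro C hC
    rw [Finset.mem_image] at hC
    obtain ⟨S0, hS0mem, hS0⟩ := hC
    have hS0B : G.cutEdges S0 ⊆ B := by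
      rw [hSS, Finset.mem_filter] at hS0mem
      exact hS0mem.2
    have hset : SS.filter (fun S => G.cutEdges S = C) = {S0, S0ᶜ} := by
      ext T
      simp only [Finset.mem_filter, Finset.mem_insert, Finset.mem_singleton]
      constructor
      · rintro ⟨hTmem, hTC⟩
        have : G.cutEdges T = G.cutEdges S0 := by rw [hTC, ← hS0]
        rcases G.cut_eq_cases hconn this with h1 | h1
        · exact Or.inl h1
        · exact Or.inr h1
      · rintro (rfl | rfl)
        · exact ⟨hS0mem, hS0⟩
        · constructor
          · rw [hSS, Finset.mem_filter]
            exact ⟨Finset.mem_univ _, by rw [cutEdges_compl]; exact hS0B⟩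
          · rw [cutEdges_compl]
            exact hS0
    rw [hset]
    have hne : S0 ≠ S0ᶜ := by
      obtain ⟨v⟩ := hconn.1
      intro h
      by_cases hv : v ∈ S0
      · have := hv
        rw [h] at this
        exact (Finset.mem_compl.mp this) hv
      · have : v ∈ S0ᶜ := Finset.mem_compl.mpr hv
        rw [← h] at this
        exact hv this
    exact Finset.card_pair hne
  have hsum := Finset.card_eq_sum_card_image G.cutEdges SS
  rw [Finset.sum_congr rfl hfiber, Finset.sum_const, smul_eq_mul] at hsum
  rw [← hsum]
  exact hScard

lemma key_rank (Gs : Multigraph) (φ : G.E ≃ Gs.E) (hconn : Gs.Conn)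
    (hdual : G.IsDual Gs φ) (A : Finset G.E) :
    A.card + G.numComponentsOn A + 1
      = Gs.numComponentsOn ((A.map φ.toEmbedding)ᶜ) + Fintype.card G.V := by
  have hev := G.card_evens_mul A
  have hcut := Gs.card_cuts_mul hconn (A.map φ.toEmbedding)
  have hbij : (A.powerset.filter (fun B => G.IsEvenEdgeSet B)).card
      = ((Finset.univ.filter (fun S : Finset Gs.V =>
          Gs.cutEdges S ⊆ A.map φ.toEmbedding)).image Gs.cutEdges).card := by
    apply Finset.card_bij (fun B _ => B.map φ.toEmbedding)
    · intro B hB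
      rw [Finset.mem_filter, Finset.mem_powerset] at hB
      obtain ⟨S, hSeq⟩ := (hdual B).mp hB.2
      rw [Finset.mem_image]
      refine ⟨S, ?_, hSeq.symm⟩
      rw [Finset.mem_filter]
      refine ⟨Finset.mem_univ S, ?_⟩
      rw [← hSeq]
      exact Finset.map_subset_map.mpr hB.1
    · intro B1 h1 B2 h2 heq
      exact Finset.map_injective _ heq
    · intro C hC
      rw [Finset.mem_image] at hC
      obtain ⟨S, hSmem, hSC⟩ := hC
      rw [Finset.mem_filter] at hSmem
      have hCsub : C ⊆ A.map φ.toEmbedding := hSC ▸ hSmem.2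
      have hmapeq : (A.filter (fun e => φ e ∈ C)).map φ.toEmbedding = C := by
        ext e'
        simp only [Finset.mem_map, Finset.mem_filter, Equiv.coe_toEmbedding]
        constructor
        · rintro ⟨e, ⟨heA, heC⟩, rfl⟩
          exact heC
        · intro he'
          obtain ⟨e, heA, hee⟩ := Finset.mem_map.mp (hCsub he')
          rw [Equiv.coe_toEmbedding] at hee
          exact ⟨e, ⟨heA, by rw [hee]; exact he'⟩, hee⟩
      refine ⟨A.filter (fun e => φ e ∈ C), ?_, hmapeq⟩
      rw [Finset.mem_filter, Finset.mem_powerset]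
      refine ⟨Finset.filter_subset _ _, ?_⟩
      apply (hdual _).mpr
      refine ⟨S, ?_⟩
      rw [hmapeq, hSC]
  rw [hbij] at hev
  have h2 : (2:ℕ) ^ (A.card + G.numComponentsOn A + 1)
      = 2 ^ (Gs.numComponentsOn ((A.map φ.toEmbedding)ᶜ) + Fintype.card G.V) := by
    rw [pow_succ, ← hev, pow_add, ← hcut]
    ring
  exact Nat.pow_right_injective (le_refl 2) h2

end

end Multigraph

/-- For a connected plane graph `G` with planar dual `G*`, `t·F(G,t) = P(G*,t)`:
as polynomials, and for every positive integer `t` the number of proper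
`t`-colourings of `G*` is `t` times the number of nowhere-zero `ZMod t`-flows
of `G`. -/
theorem flow_chromatic_duality (G Gstar : Multigraph) (φ : G.E ≃ Gstar.E)
    (hG : G.Conn) (hGstar : Gstar.Conn) (hdual : G.IsDual Gstar φ)
    (F P : Polynomial ℝ) (hF : G.IsFlowPoly F)
    (hP : Gstar.IsChromaticPoly P) :
    X * F = P ∧ ∀ t : ℕ, 0 < t →
      t * G.numFlows t = Gstar.properColorings t := by
  have hEcard : Fintype.card G.E = Fintype.card Gstar.E := Fintype.card_congr φ
  have hcount : ∀ t : ℕ, 0 < t → t * G.numFlows t = Gstar.properColorings t := by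
    intro t ht
    have hV : ((t : ℤ) ^ (Fintype.card G.V)) ≠ 0 :=
      pow_ne_zero _ (by exact_mod_cast ht.ne')
    have hL : (t : ℤ) ^ (Fintype.card G.V) * ((t : ℤ) * (G.numFlows t : ℤ))
        = ∑ A ∈ (Finset.univ : Finset G.E).powerset,
            (-1) ^ (Finset.univ \ A).card *
              (t : ℤ) ^ (Gstar.numComponentsOn ((A.map φ.toEmbedding)ᶜ)
                + Fintype.card G.V) := by
      rw [G.numFlows_eq_sum t ht, Finset.mul_sum, Finset.mul_sum]
      refine Finset.sum_congr rfl fun A hA => ?_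
      have hkey := G.key_rank Gstar φ hGstar hdual A
      have hN := G.card_flows_mul t ht A
      have hNz : (Nat.card {f : G.E → ZMod t // (∀ e ∉ A, f e = 0) ∧
            ∀ v : G.V, (∑ e : G.E, if G.src e = v then f e else 0) =
              ∑ e : G.E, if G.tgt e = v then f e else 0} : ℤ)
            * (t : ℤ) ^ (Fintype.card G.V)
          = (t : ℤ) ^ (A.card + G.numComponentsOn A) := by
        exact_mod_cast hN
      rw [← hkey, pow_succ, ← hNz]
      ring
    have hR : (t : ℤ) ^ (Fintype.card G.V) * (Gstar.properColorings t : ℤ)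
        = ∑ B ∈ (Finset.univ : Finset Gstar.E).powerset,
            (-1) ^ B.card *
              (t : ℤ) ^ (Gstar.numComponentsOn B + Fintype.card G.V) := by
      rw [Gstar.properColorings_eq_sum t ht, Finset.mul_sum]
      refine Finset.sum_congr rfl fun B hB => ?_
      rw [pow_add]
      ring
    have hre : (∑ A ∈ (Finset.univ : Finset G.E).powerset,
          (-1 : ℤ) ^ (Finset.univ \ A).card *
            (t : ℤ) ^ (Gstar.numComponentsOn ((A.map φ.toEmbedding)ᶜ)
              + Fintype.card G.V))
        = ∑ B ∈ (Finset.univ : Finset Gstar.E).powerset,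
            (-1) ^ B.card *
              (t : ℤ) ^ (Gstar.numComponentsOn B + Fintype.card G.V) := by
      refine Finset.sum_nbij' (fun A => (A.map φ.toEmbedding)ᶜ)
        (fun B => Bᶜ.map φ.symm.toEmbedding) ?_ ?_ ?_ ?_ ?_
      · intro A hA
        exact Finset.mem_powerset.mpr (Finset.subset_univ _)
      · intro B hB
        exact Finset.mem_powerset.mpr (Finset.subset_univ _)
      · intro A hA
        ext e
        simp [Finset.mem_map, Finset.mem_compl]
      · intro B hB
        ext e
        simp [Finset.mem_map, Finset.mem_compl]
      · intro A hA
        have hcard : (Finset.univ \ A).card = ((A.map φ.toEmbedding)ᶜ).card := by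
          rw [Finset.card_compl, Finset.card_map, ← Finset.compl_eq_univ_sdiff,
            Finset.card_compl, hEcard]
        rw [hcard]
    have hZ := hL.trans (hre.trans hR.symm)
    have := mul_left_cancel₀ hV hZ
    exact_mod_cast this
  refine ⟨?_, hcount⟩
  apply Polynomial.eq_of_infinite_eval_eq
  apply Set.infinite_of_injective_forall_mem (f := fun n : ℕ => ((n + 1 : ℕ) : ℝ))
  · intro a b h
    have : (a + 1 : ℕ) = (b + 1 : ℕ) := Nat.cast_injective h
    omega
  · intro n
    simp only [Set.mem_setOf_eq, eval_mul, eval_X]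
    rw [hF (n + 1) n.succ_pos, hP (n + 1) n.succ_pos]
    have := hcount (n + 1) n.succ_pos
    exact_mod_cast congrArg (fun k : ℕ => (k : ℝ)) this
end
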